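/- arXiv:2306.11188 — 4 statements merged into one kernel-verified Lean document; each statement's English description precedes it below -/
import Mathlib

section
/- Let x₁ < x₂ < x₃ be three distinct reals, let Y take each of the values x₁, x₂, x₃ with positive probability and P(Y ∈ {x₁,x₂,x₃}) = 1, and let X satisfy P(X ∈ {x₁,x₂,x₃}) = 1 (so Supp(X) ⊆ Supp(Y) = {x₁,x₂,x₃}). If (X,Y) ∈ IC, then X and Y have the same distribution, or Corr(X,Y) = 0. -/
open MeasureTheory ProbabilityTheory

variable {Ω : Type*} [MeasurableSpace Ω]

noncomputable def cov (μ : Measure Ω) (X Y : Ω → ℝ) : ℝ :=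
  ∫ ω, (X ω - ∫ a, X a ∂μ) * (Y ω - ∫ a, Y a ∂μ) ∂μ

noncomputable def corr (μ : Measure Ω) (X Y : Ω → ℝ) : ℝ :=
  cov μ X Y / Real.sqrt (variance X μ * variance Y μ)

def Admissible (μ : Measure Ω) (X Y : Ω → ℝ) (g : ℝ → ℝ) : Prop :=
  Measurable g ∧ MemLp (g ∘ X) 2 μ ∧ MemLp (g ∘ Y) 2 μ ∧
    0 < variance (g ∘ X) μ ∧ 0 < variance (g ∘ Y) μ

def IC (μ : Measure Ω) (X Y : Ω → ℝ) (r : ℝ) : Prop :=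
  corr μ X Y = r ∧ ∀ g : ℝ → ℝ, Admissible μ X Y g → corr μ (g ∘ X) (g ∘ Y) = r

section Helpers


private lemma lin_nonneg_slope {k₁ k₀ : ℝ} (h : ∀ t, 0 ≤ k₁ * t + k₀) : k₁ = 0 := by
  by_contra hk
  have e : k₁ * ((-k₀ - 1) / k₁) + k₀ = -1 := by field_simp; ring
  linarith [h ((-k₀ - 1) / k₁)]

private lemma quad_nonneg_lead {a b c : ℝ} (h : ∀ t, 0 ≤ a * t ^ 2 + b * t + c) : 0 ≤ a := by
  by_contra ha
  push_neg at ha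
  set t := max 1 ((|b| + |c| + 1) / (-a)) with ht
  have ht1 : (1:ℝ) ≤ t := le_max_left _ _
  have ht2 : (|b| + |c| + 1) / (-a) ≤ t := le_max_right _ _
  have hna : 0 < -a := by linarith
  have h3 : |b| + |c| + 1 ≤ t * (-a) := (div_le_iff₀ hna).mp ht2
  have h4 : a * t ≤ -(|b| + |c| + 1) := by nlinarith
  have h5 : a * t ^ 2 ≤ -(|b| + |c| + 1) * t := by nlinarith
  have h6 : b * t ≤ |b| * t := by nlinarith [le_abs_self b]
  have h7 : c ≤ |c| * t := by nlinarith [le_abs_self c, abs_nonneg c]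
  nlinarith [h t]

private lemma no_linear {β γ D A' B' C' : ℝ} (hD : 0 < D) (hA' : 0 < A')
    (hV : ∀ t, 0 < A' * t ^ 2 + B' * t + C')
    (h : ∀ t, (β * t + γ) ^ 2 = D * (A' * t ^ 2 + B' * t + C')) : False := by
  by_cases hβ : β = 0
  · have e1 := h 1
    have em := h (-1)
    have e0 := h 0
    subst hβ
    nlinarith [mul_pos hD hA']
  · have e := h (-γ / β)
    have hz : β * (-γ / β) + γ = 0 := by field_simp; ring
    rw [hz] at e
    nlinarith [mul_pos hD (hV (-γ / β))]

private lemma key_quadratic {A B C A' B' C' a b c : ℝ} (hA : 0 < A) (hA' : 0 < A')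
    (hV₂ : ∀ t, 0 < A' * t ^ 2 + B' * t + C')
    (hM : ∀ t, 0 ≤ a * t ^ 2 + b * t + c)
    (hid : ∀ t, (a * t ^ 2 + b * t + c) ^ 2 =
      (A * t ^ 2 + B * t + C) * (A' * t ^ 2 + B' * t + C')) :
    A' * B = A * B' := by
  obtain ⟨sA, hsA0, hsA⟩ : ∃ s : ℝ, 0 < s ∧ s ^ 2 = A :=
    ⟨Real.sqrt A, Real.sqrt_pos.mpr hA, Real.sq_sqrt hA.le⟩
  obtain ⟨sB, hsB0, hsB⟩ : ∃ s : ℝ, 0 < s ∧ s ^ 2 = A' :=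
    ⟨Real.sqrt A', Real.sqrt_pos.mpr hA', Real.sq_sqrt hA'.le⟩
  subst hsA; subst hsB
  have ha2 : a ^ 2 = sA ^ 2 * sB ^ 2 := by
    linear_combination (hid 2) / 24 - (hid 1) / 6 + (hid 0) / 4 - (hid (-1)) / 6 + (hid (-2)) / 24
  have ha0 : 0 ≤ a := quad_nonneg_lead hM
  have haa : a = sA * sB := by
    have h0 : (a - sA * sB) * (a + sA * sB) = 0 := by linear_combination ha2
    rcases mul_eq_zero.mp h0 with h | h
    · linarith
    · nlinarith [mul_pos hsA0 hsB0]
  subst haa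
  -- key identity: L(t)^2 = K(t) * V₂(t)
  have hkey : ∀ t : ℝ, ((sB * b - sA * B') * t + (sB * c - sA * C')) ^ 2 =
      (((sB ^ 2 * B - sA ^ 2 * B') - 2 * sA * (sB * b - sA * B')) * t +
        ((sB ^ 2 * C - sA ^ 2 * C') - 2 * sA * (sB * c - sA * C'))) *
      (sB ^ 2 * t ^ 2 + B' * t + C') := by
    intro t
    linear_combination sB ^ 2 * hid t
  have hK : ∀ t : ℝ, 0 ≤ ((sB ^ 2 * B - sA ^ 2 * B') - 2 * sA * (sB * b - sA * B')) * t +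
      ((sB ^ 2 * C - sA ^ 2 * C') - 2 * sA * (sB * c - sA * C')) := by
    intro t
    nlinarith [hkey t, hV₂ t, sq_nonneg ((sB * b - sA * B') * t + (sB * c - sA * C'))]
  have hk₁ : (sB ^ 2 * B - sA ^ 2 * B') - 2 * sA * (sB * b - sA * B') = 0 :=
    lin_nonneg_slope hK
  have hk₀ : 0 ≤ (sB ^ 2 * C - sA ^ 2 * C') - 2 * sA * (sB * c - sA * C') := by
    simpa using hK 0
  have hc2 : (sB * b - sA * B') ^ 2 =
      ((sB ^ 2 * C - sA ^ 2 * C') - 2 * sA * (sB * c - sA * C')) * sB ^ 2 := by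
    linear_combination (hkey 1) / 2 + (hkey (-1)) / 2 - hkey 0 + B' * hk₁
  have hk₀0 : (sB ^ 2 * C - sA ^ 2 * C') - 2 * sA * (sB * c - sA * C') = 0 := by
    by_contra hne
    have hk0 : 0 < (sB ^ 2 * C - sA ^ 2 * C') - 2 * sA * (sB * c - sA * C') :=
      lt_of_le_of_ne hk₀ (Ne.symm hne)
    have hl1 : (sB * b - sA * B') ≠ 0 := by
      intro h0
      rw [h0] at hc2
      nlinarith [mul_pos hk0 (pow_pos hsB0 2)]
    have ht := hkey (-(sB * c - sA * C') / (sB * b - sA * B'))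
    have hz : (sB * b - sA * B') * (-(sB * c - sA * C') / (sB * b - sA * B')) +
        (sB * c - sA * C') = 0 := by field_simp; ring
    rw [hz] at ht
    rw [hk₁] at ht
    have hVt := hV₂ (-(sB * c - sA * C') / (sB * b - sA * B'))
    nlinarith [mul_pos hk0 hVt]
  have hl₁0 : sB * b - sA * B' = 0 := by
    have := hc2
    rw [hk₀0] at this
    simpa [pow_eq_zero_iff] using this
  linear_combination hk₁ + 2 * sA * hl₁0


private lemma measure_decomp {Ω : Type*} [MeasurableSpace Ω] (μ : Measure Ω)
    (Z : Ω → ℝ) (hZ : Measurable Z) (a b c : ℝ) (hab : a ≠ b) (hac : a ≠ c) (hbc : b ≠ c)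
    (hae : ∀ᵐ ω ∂μ, Z ω = a ∨ Z ω = b ∨ Z ω = c) (S : Set Ω) (hS : MeasurableSet S) :
    μ S = μ (S ∩ {ω | Z ω = a}) + μ (S ∩ {ω | Z ω = b}) + μ (S ∩ {ω | Z ω = c}) := by
  have hma : MeasurableSet {ω | Z ω = a} := hZ (measurableSet_singleton a)
  have hmb : MeasurableSet {ω | Z ω = b} := hZ (measurableSet_singleton b)
  have hmc : MeasurableSet {ω | Z ω = c} := hZ (measurableSet_singleton c)
  have hT : μ ({ω | Z ω = a} ∪ {ω | Z ω = b} ∪ {ω | Z ω = c})ᶜ = 0 := by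
    have h0 : μ {ω | ¬ (Z ω = a ∨ Z ω = b ∨ Z ω = c)} = 0 := ae_iff.mp hae
    convert h0 using 2
    ext ω
    simp [Set.mem_union, Set.mem_setOf_eq, or_assoc]
    tauto
  have h1 : μ S = μ (S ∩ ({ω | Z ω = a} ∪ {ω | Z ω = b} ∪ {ω | Z ω = c})) :=
    (measure_inter_conull hT).symm
  have dab : Disjoint (S ∩ {ω | Z ω = a}) (S ∩ {ω | Z ω = b}) := by
    apply Set.disjoint_left.mpr
    rintro ω ⟨-, h1⟩ ⟨-, h2⟩
    exact hab ((h1 : Z ω = a).symm.trans h2)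
  have dac : Disjoint (S ∩ {ω | Z ω = a}) (S ∩ {ω | Z ω = c}) := by
    apply Set.disjoint_left.mpr
    rintro ω ⟨-, h1⟩ ⟨-, h2⟩
    exact hac ((h1 : Z ω = a).symm.trans h2)
  have dbc : Disjoint (S ∩ {ω | Z ω = b}) (S ∩ {ω | Z ω = c}) := by
    apply Set.disjoint_left.mpr
    rintro ω ⟨-, h1⟩ ⟨-, h2⟩
    exact hbc ((h1 : Z ω = b).symm.trans h2)
  rw [h1, Set.inter_union_distrib_left, Set.inter_union_distrib_left,
    measure_union (Disjoint.union_left dac dbc) (hS.inter hmc),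
    measure_union dab (hS.inter hmb)]

private lemma integral_pair3 {Ω : Type*} [MeasurableSpace Ω] (μ : Measure Ω) [IsProbabilityMeasure μ]
    (X Y : Ω → ℝ) (hX : Measurable X) (hY : Measurable Y)
    (a b c : ℝ) (hab : a ≠ b) (hac : a ≠ c) (hbc : b ≠ c)
    (hXae : ∀ᵐ ω ∂μ, X ω = a ∨ X ω = b ∨ X ω = c)
    (hYae : ∀ᵐ ω ∂μ, Y ω = a ∨ Y ω = b ∨ Y ω = c)
    (f : ℝ → ℝ → ℝ) :
    ∫ ω, f (X ω) (Y ω) ∂μ =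
      f a a * (μ {ω | X ω = a ∧ Y ω = a}).toReal +
      f a b * (μ {ω | X ω = a ∧ Y ω = b}).toReal +
      f a c * (μ {ω | X ω = a ∧ Y ω = c}).toReal +
      f b a * (μ {ω | X ω = b ∧ Y ω = a}).toReal +
      f b b * (μ {ω | X ω = b ∧ Y ω = b}).toReal +
      f b c * (μ {ω | X ω = b ∧ Y ω = c}).toReal +
      f c a * (μ {ω | X ω = c ∧ Y ω = a}).toReal +
      f c b * (μ {ω | X ω = c ∧ Y ω = b}).toReal +
      f c c * (μ {ω | X ω = c ∧ Y ω = c}).toReal := by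
  have hS : ∀ u v : ℝ, MeasurableSet {ω | X ω = u ∧ Y ω = v} := fun u v =>
    (hX (measurableSet_singleton u)).inter (hY (measurableSet_singleton v))
  set F : Ω → ℝ := fun ω =>
    Set.indicator {ω | X ω = a ∧ Y ω = a} (fun _ => f a a) ω +
    Set.indicator {ω | X ω = a ∧ Y ω = b} (fun _ => f a b) ω +
    Set.indicator {ω | X ω = a ∧ Y ω = c} (fun _ => f a c) ω +
    Set.indicator {ω | X ω = b ∧ Y ω = a} (fun _ => f b a) ω +
    Set.indicator {ω | X ω = b ∧ Y ω = b} (fun _ => f b b) ω +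
    Set.indicator {ω | X ω = b ∧ Y ω = c} (fun _ => f b c) ω +
    Set.indicator {ω | X ω = c ∧ Y ω = a} (fun _ => f c a) ω +
    Set.indicator {ω | X ω = c ∧ Y ω = b} (fun _ => f c b) ω +
    Set.indicator {ω | X ω = c ∧ Y ω = c} (fun _ => f c c) ω with hF
  have hFeq : (fun ω => f (X ω) (Y ω)) =ᵐ[μ] F := by
    filter_upwards [hXae, hYae] with ω hx hy
    rcases hx with h1 | h1 | h1 <;> rcases hy with h2 | h2 | h2 <;>
      simp [hF, Set.indicator_apply, Set.mem_setOf_eq, h1, h2,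
        hab, hac, hbc, Ne.symm hab, Ne.symm hac, Ne.symm hbc]
  rw [integral_congr_ae hFeq]
  have I : ∀ (u v : ℝ) (k : ℝ),
      Integrable (Set.indicator {ω | X ω = u ∧ Y ω = v} (fun _ => k)) μ :=
    fun u v k => (integrable_const k).indicator (hS u v)
  have i1 := I a a (f a a); have i2 := I a b (f a b); have i3 := I a c (f a c)
  have i4 := I b a (f b a); have i5 := I b b (f b b); have i6 := I b c (f b c)
  have i7 := I c a (f c a); have i8 := I c b (f c b); have i9 := I c c (f c c)
  set T : ℝ → ℝ → Ω → ℝ := fun u v => Set.indicator {ω | X ω = u ∧ Y ω = v} (fun _ => f u v)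
    with hT
  have s2 : Integrable (fun ω => T a a ω + T a b ω) μ := i1.add i2
  have s3 : Integrable (fun ω => T a a ω + T a b ω + T a c ω) μ := s2.add i3
  have s4 : Integrable (fun ω => T a a ω + T a b ω + T a c ω + T b a ω) μ := s3.add i4
  have s5 : Integrable (fun ω => T a a ω + T a b ω + T a c ω + T b a ω + T b b ω) μ := s4.add i5
  have s6 : Integrable (fun ω => T a a ω + T a b ω + T a c ω + T b a ω + T b b ω + T b c ω) μ :=
    s5.add i6
  have s7 : Integrable (fun ω => T a a ω + T a b ω + T a c ω + T b a ω + T b b ω + T b c ω +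
      T c a ω) μ := s6.add i7
  have s8 : Integrable (fun ω => T a a ω + T a b ω + T a c ω + T b a ω + T b b ω + T b c ω +
      T c a ω + T c b ω) μ := s7.add i8
  have hFT : ∫ ω, F ω ∂μ = ∫ ω, (T a a ω + T a b ω + T a c ω + T b a ω + T b b ω + T b c ω +
      T c a ω + T c b ω + T c c ω) ∂μ := rfl
  rw [hFT]
  rw [integral_add s8 i9, integral_add s7 i8, integral_add s6 i7, integral_add s5 i6,
    integral_add s4 i5, integral_add s3 i4, integral_add s2 i3, integral_add i1 i2]
  have hTval : ∀ u v : ℝ, ∫ ω, T u v ω ∂μ = f u v * (μ {ω | X ω = u ∧ Y ω = v}).toReal := by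
    intro u v
    rw [hT]
    rw [integral_indicator_const _ (hS u v), smul_eq_mul, mul_comm]
    rfl
  rw [hTval, hTval, hTval, hTval, hTval, hTval, hTval, hTval, hTval]

private lemma toReal_add3 {x y z : ENNReal} (hx : x ≠ ⊤) (hy : y ≠ ⊤) (hz : z ≠ ⊤) :
    (x + y + z).toReal = x.toReal + y.toReal + z.toReal := by
  rw [ENNReal.toReal_add (ENNReal.add_ne_top.mpr ⟨hx, hy⟩) hz, ENNReal.toReal_add hx hy]

private lemma family_eq (μ : Measure Ω) [IsProbabilityMeasure μ]
    (X Y : Ω → ℝ) (hX : Measurable X) (hY : Measurable Y)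
    (a b c : ℝ) (h12 : a < b) (h23 : b < c)
    (hXae : ∀ᵐ ω ∂μ, X ω = a ∨ X ω = b ∨ X ω = c)
    (hYae : ∀ᵐ ω ∂μ, Y ω = a ∨ Y ω = b ∨ Y ω = c)
    (r : ℝ) (hinv : ∀ g : ℝ → ℝ, Admissible μ X Y g → corr μ (g ∘ X) (g ∘ Y) = r)
    (P Q : ℝ → ℝ) (R : ℝ → ℝ → ℝ)
    (hP : ∀ u, P u = (μ {ω | X ω = u}).toReal)
    (hQ : ∀ u, Q u = (μ {ω | Y ω = u}).toReal)
    (hR : ∀ u v, R u v = (μ {ω | X ω = u ∧ Y ω = v}).toReal)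
    (v₁ v₂ v₃ : ℝ)
    (hvx : 0 < v₁^2 * P a + v₂^2 * P b + v₃^2 * P c - (v₁ * P a + v₂ * P b + v₃ * P c)^2)
    (hvy : 0 < v₁^2 * Q a + v₂^2 * Q b + v₃^2 * Q c - (v₁ * Q a + v₂ * Q b + v₃ * Q c)^2) :
    v₁*v₁*R a a + v₁*v₂*R a b + v₁*v₃*R a c + v₂*v₁*R b a + v₂*v₂*R b b + v₂*v₃*R b c +
      v₃*v₁*R c a + v₃*v₂*R c b + v₃*v₃*R c c -
      (v₁ * P a + v₂ * P b + v₃ * P c) * (v₁ * Q a + v₂ * Q b + v₃ * Q c) =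
    r * Real.sqrt ((v₁^2 * P a + v₂^2 * P b + v₃^2 * P c - (v₁ * P a + v₂ * P b + v₃ * P c)^2) *
      (v₁^2 * Q a + v₂^2 * Q b + v₃^2 * Q c - (v₁ * Q a + v₂ * Q b + v₃ * Q c)^2)) := by
  have hab : a ≠ b := ne_of_lt h12
  have hac : a ≠ c := ne_of_lt (h12.trans h23)
  have hbc : b ≠ c := ne_of_lt h23
  set g : ℝ → ℝ := fun x => if x < b then v₁ else if x < c then v₂ else v₃ with hgdef
  have hg : Measurable g := by
    apply Measurable.ite (measurableSet_lt measurable_id measurable_const) measurable_const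
    exact Measurable.ite (measurableSet_lt measurable_id measurable_const) measurable_const
      measurable_const
  have hga : g a = v₁ := if_pos h12
  have hgb : g b = v₂ := by
    rw [hgdef]
    simp only [lt_irrefl, if_false, h23, if_true]
  have hgc : g c = v₃ := by
    rw [hgdef]
    simp only [lt_asymm h23, if_false, lt_irrefl, if_true]
  have hmemX : MemLp (g ∘ X) 2 μ := by
    apply MemLp.of_bound (hg.comp hX).aestronglyMeasurable (|v₁| + |v₂| + |v₃|)
    filter_upwards [hXae] with ω h
    rcases h with h | h | h <;>
      · rw [Function.comp_apply, h]
        rw [Real.norm_eq_abs]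
        first
        | (rw [hga]; nlinarith [abs_nonneg v₂, abs_nonneg v₃, le_abs_self v₁, abs_nonneg v₁])
        | (rw [hgb]; nlinarith [abs_nonneg v₁, abs_nonneg v₃, le_abs_self v₂, abs_nonneg v₂])
        | (rw [hgc]; nlinarith [abs_nonneg v₁, abs_nonneg v₂, le_abs_self v₃, abs_nonneg v₃])
  have hmemY : MemLp (g ∘ Y) 2 μ := by
    apply MemLp.of_bound (hg.comp hY).aestronglyMeasurable (|v₁| + |v₂| + |v₃|)
    filter_upwards [hYae] with ω h
    rcases h with h | h | h <;>
      · rw [Function.comp_apply, h]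
        rw [Real.norm_eq_abs]
        first
        | (rw [hga]; nlinarith [abs_nonneg v₂, abs_nonneg v₃, le_abs_self v₁, abs_nonneg v₁])
        | (rw [hgb]; nlinarith [abs_nonneg v₁, abs_nonneg v₃, le_abs_self v₂, abs_nonneg v₂])
        | (rw [hgc]; nlinarith [abs_nonneg v₁, abs_nonneg v₂, le_abs_self v₃, abs_nonneg v₃])
  have hrowP : ∀ u : ℝ, P u = R u a + R u b + R u c := by
    intro u
    have h := measure_decomp μ Y hY a b c hab hac hbc hYae {ω | X ω = u}
      (hX (measurableSet_singleton u))
    have e : ∀ v : ℝ, {ω | X ω = u} ∩ {ω | Y ω = v} = {ω | X ω = u ∧ Y ω = v} := fun v => rfl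
    rw [e, e, e] at h
    rw [hP, hR, hR, hR, h, toReal_add3 (measure_ne_top μ _) (measure_ne_top μ _)
      (measure_ne_top μ _)]
  have hcolQ : ∀ u : ℝ, Q u = R a u + R b u + R c u := by
    intro u
    have h := measure_decomp μ X hX a b c hab hac hbc hXae {ω | Y ω = u}
      (hY (measurableSet_singleton u))
    have e : ∀ w : ℝ, {ω | Y ω = u} ∩ {ω | X ω = w} = {ω | X ω = w ∧ Y ω = u} := by
      intro w; ext ω; exact and_comm
    rw [e, e, e] at h
    rw [hQ, hR, hR, hR, h, toReal_add3 (measure_ne_top μ _) (measure_ne_top μ _)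
      (measure_ne_top μ _)]
  have hsumP : P a + P b + P c = 1 := by
    have h := measure_decomp μ X hX a b c hab hac hbc hXae Set.univ MeasurableSet.univ
    simp only [Set.univ_inter, measure_univ] at h
    rw [hP, hP, hP, ← toReal_add3 (measure_ne_top μ _) (measure_ne_top μ _) (measure_ne_top μ _),
      ← h]
    simp
  have hEX : ∫ ω, (g ∘ X) ω ∂μ = v₁ * P a + v₂ * P b + v₃ * P c := by
    have h := integral_pair3 μ X Y hX hY a b c hab hac hbc hXae hYae (fun x y => g x)
    simp only [hga, hgb, hgc] at h
    simp only [Function.comp_apply]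
    rw [h, ← hR a a, ← hR a b, ← hR a c, ← hR b a, ← hR b b, ← hR b c, ← hR c a, ← hR c b,
      ← hR c c]
    linear_combination (-v₁) * hrowP a + (-v₂) * hrowP b + (-v₃) * hrowP c
  have hEY : ∫ ω, (g ∘ Y) ω ∂μ = v₁ * Q a + v₂ * Q b + v₃ * Q c := by
    have h := integral_pair3 μ X Y hX hY a b c hab hac hbc hXae hYae (fun x y => g y)
    simp only [hga, hgb, hgc] at h
    simp only [Function.comp_apply]
    rw [h, ← hR a a, ← hR a b, ← hR a c, ← hR b a, ← hR b b, ← hR b c, ← hR c a, ← hR c b,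
      ← hR c c]
    linear_combination (-v₁) * hcolQ a + (-v₂) * hcolQ b + (-v₃) * hcolQ c
  have hvarX : variance (g ∘ X) μ =
      v₁^2 * P a + v₂^2 * P b + v₃^2 * P c - (v₁ * P a + v₂ * P b + v₃ * P c)^2 := by
    rw [variance_eq_sub hmemX]
    have h2 : (μ[(g ∘ X)^2] : ℝ) = ∫ ω, (g (X ω))^2 ∂μ := rfl
    have h := integral_pair3 μ X Y hX hY a b c hab hac hbc hXae hYae (fun x y => (g x)^2)
    simp only [hga, hgb, hgc] at h
    rw [h2, h, hEX, ← hR a a, ← hR a b, ← hR a c, ← hR b a, ← hR b b, ← hR b c, ← hR c a,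
      ← hR c b, ← hR c c]
    linear_combination (-v₁^2) * hrowP a + (-v₂^2) * hrowP b + (-v₃^2) * hrowP c
  have hvarY : variance (g ∘ Y) μ =
      v₁^2 * Q a + v₂^2 * Q b + v₃^2 * Q c - (v₁ * Q a + v₂ * Q b + v₃ * Q c)^2 := by
    rw [variance_eq_sub hmemY]
    have h2 : (μ[(g ∘ Y)^2] : ℝ) = ∫ ω, (g (Y ω))^2 ∂μ := rfl
    have h := integral_pair3 μ X Y hX hY a b c hab hac hbc hXae hYae (fun x y => (g y)^2)
    simp only [hga, hgb, hgc] at h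
    rw [h2, h, hEY, ← hR a a, ← hR a b, ← hR a c, ← hR b a, ← hR b b, ← hR b c, ← hR c a,
      ← hR c b, ← hR c c]
    linear_combination (-v₁^2) * hcolQ a + (-v₂^2) * hcolQ b + (-v₃^2) * hcolQ c
  have hcov : cov μ (g ∘ X) (g ∘ Y) =
      v₁*v₁*R a a + v₁*v₂*R a b + v₁*v₃*R a c + v₂*v₁*R b a + v₂*v₂*R b b + v₂*v₃*R b c +
      v₃*v₁*R c a + v₃*v₂*R c b + v₃*v₃*R c c -
      (v₁ * P a + v₂ * P b + v₃ * P c) * (v₁ * Q a + v₂ * Q b + v₃ * Q c) := by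
    simp only [cov]
    rw [hEX, hEY]
    simp only [Function.comp_apply]
    have h := integral_pair3 μ X Y hX hY a b c hab hac hbc hXae hYae
      (fun x y => (g x - (v₁ * P a + v₂ * P b + v₃ * P c)) *
        (g y - (v₁ * Q a + v₂ * Q b + v₃ * Q c)))
    simp only [hga, hgb, hgc] at h
    rw [h, ← hR a a, ← hR a b, ← hR a c, ← hR b a, ← hR b b, ← hR b c, ← hR c a, ← hR c b,
      ← hR c c]
    set m := v₁ * P a + v₂ * P b + v₃ * P c with hm
    set n := v₁ * Q a + v₂ * Q b + v₃ * Q c with hn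
    linear_combination (n*v₁ - m*n) * hrowP a + (n*v₂ - m*n) * hrowP b + (n*v₃ - m*n) * hrowP c +
      m*v₁ * hcolQ a + m*v₂ * hcolQ b + m*v₃ * hcolQ c + m*n * hsumP
  have hadm : Admissible μ X Y g :=
    ⟨hg, hmemX, hmemY, by rw [hvarX]; exact hvx, by rw [hvarY]; exact hvy⟩
  have hc := hinv g hadm
  simp only [corr] at hc
  rw [hvarX, hvarY, hcov] at hc
  have hs : 0 < Real.sqrt
      ((v₁^2 * P a + v₂^2 * P b + v₃^2 * P c - (v₁ * P a + v₂ * P b + v₃ * P c)^2) *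
       (v₁^2 * Q a + v₂^2 * Q b + v₃^2 * Q c - (v₁ * Q a + v₂ * Q b + v₃ * Q c)^2)) :=
    Real.sqrt_pos.mpr (mul_pos hvx hvy)
  exact (div_eq_iff hs.ne').mp hc

end Helpers

set_option maxHeartbeats 4000000 in
/-- Let `x₁ < x₂ < x₃`, let `Y` take each value `x₁, x₂, x₃` with positive
probability and `P(Y ∈ {x₁,x₂,x₃}) = 1`, and let `X` satisfy `P(X ∈ {x₁,x₂,x₃}) = 1`. If
`(X,Y) ∈ IC`, then `X` and `Y` have the same distribution or `Corr(X,Y) = 0`. -/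
theorem ic_triatomic_same_support_subset
    (μ : Measure Ω) [IsProbabilityMeasure μ] (X Y : Ω → ℝ)
    (hXm : Measurable X) (hYm : Measurable Y)
    (x₁ x₂ x₃ : ℝ) (h12 : x₁ < x₂) (h23 : x₂ < x₃)
    (hY1 : 0 < μ {ω | Y ω = x₁}) (hY2 : 0 < μ {ω | Y ω = x₂}) (hY3 : 0 < μ {ω | Y ω = x₃})
    (hYsupp : μ {ω | Y ω ∈ ({x₁, x₂, x₃} : Set ℝ)} = 1)
    (hXsupp : μ {ω | X ω ∈ ({x₁, x₂, x₃} : Set ℝ)} = 1)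
    (hIC : ∃ r ∈ Set.Icc (-1 : ℝ) 1, IC μ X Y r) :
    Measure.map X μ = Measure.map Y μ ∨ corr μ X Y = 0 := by
  classical
  obtain ⟨r, hrIcc, hcorrXY, hinv⟩ := hIC
  by_cases hr0 : r = 0
  · right; rw [hcorrXY, hr0]
  by_cases hvX0 : variance X μ = 0
  · right
    simp only [corr, hvX0, zero_mul, Real.sqrt_zero, div_zero]
  left
  have hvXpos : 0 < variance X μ := (variance_nonneg X μ).lt_of_ne (Ne.symm hvX0)
  have hab : x₁ ≠ x₂ := ne_of_lt h12
  have hac : x₁ ≠ x₃ := ne_of_lt (h12.trans h23)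
  have hbc : x₂ ≠ x₃ := ne_of_lt h23
  have hmtriple : MeasurableSet ({x₁, x₂, x₃} : Set ℝ) :=
    (((measurableSet_singleton x₃).insert x₂).insert x₁)
  have hXae : ∀ᵐ ω ∂μ, X ω = x₁ ∨ X ω = x₂ ∨ X ω = x₃ := by
    apply ae_iff.mpr
    have h0 : μ {ω | X ω ∈ ({x₁, x₂, x₃} : Set ℝ)}ᶜ = 0 :=
      (prob_compl_eq_zero_iff (hXm hmtriple)).mpr hXsupp
    convert h0 using 2
    ext ω; simp
  have hYae : ∀ᵐ ω ∂μ, Y ω = x₁ ∨ Y ω = x₂ ∨ Y ω = x₃ := by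
    apply ae_iff.mpr
    have h0 : μ {ω | Y ω ∈ ({x₁, x₂, x₃} : Set ℝ)}ᶜ = 0 :=
      (prob_compl_eq_zero_iff (hYm hmtriple)).mpr hYsupp
    convert h0 using 2
    ext ω; simp
  obtain ⟨P, hP⟩ : ∃ P : ℝ → ℝ, ∀ u, P u = (μ {ω | X ω = u}).toReal := ⟨_, fun _ => rfl⟩
  obtain ⟨Q, hQ⟩ : ∃ Q : ℝ → ℝ, ∀ u, Q u = (μ {ω | Y ω = u}).toReal := ⟨_, fun _ => rfl⟩
  obtain ⟨R, hR⟩ : ∃ R : ℝ → ℝ → ℝ, ∀ u v, R u v = (μ {ω | X ω = u ∧ Y ω = v}).toReal :=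
    ⟨_, fun _ _ => rfl⟩
  have hQa : 0 < Q x₁ := by rw [hQ]; exact ENNReal.toReal_pos hY1.ne' (measure_ne_top μ _)
  have hQb : 0 < Q x₂ := by rw [hQ]; exact ENNReal.toReal_pos hY2.ne' (measure_ne_top μ _)
  have hQc : 0 < Q x₃ := by rw [hQ]; exact ENNReal.toReal_pos hY3.ne' (measure_ne_top μ _)
  have hPnn : ∀ u, 0 ≤ P u := fun u => by rw [hP]; exact ENNReal.toReal_nonneg
  have hsumP : P x₁ + P x₂ + P x₃ = 1 := by
    have h := measure_decomp μ X hXm x₁ x₂ x₃ hab hac hbc hXae Set.univ MeasurableSet.univ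
    simp only [Set.univ_inter, measure_univ] at h
    rw [hP, hP, hP,
      ← toReal_add3 (measure_ne_top μ _) (measure_ne_top μ _) (measure_ne_top μ _), ← h]
    simp
  have hsumQ : Q x₁ + Q x₂ + Q x₃ = 1 := by
    have h := measure_decomp μ Y hYm x₁ x₂ x₃ hab hac hbc hYae Set.univ MeasurableSet.univ
    simp only [Set.univ_inter, measure_univ] at h
    rw [hQ, hQ, hQ,
      ← toReal_add3 (measure_ne_top μ _) (measure_ne_top μ _) (measure_ne_top μ _), ← h]
    simp
  have hRzero : ∀ u v : ℝ, P u = 0 → R u v = 0 := by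
    intro u v h
    rw [hP] at h
    have h1 : μ {ω | X ω = u} = 0 := by
      rcases (ENNReal.toReal_eq_zero_iff _).mp h with h' | h'
      · exact h'
      · exact absurd h' (measure_ne_top μ _)
    have h2 : μ {ω | X ω = u ∧ Y ω = v} = 0 :=
      measure_mono_null (fun ω hw => hw.1) h1
    rw [hR, h2, ENNReal.toReal_zero]
  have master := fun (v₁ v₂ v₃ : ℝ) hvx hvy =>
    family_eq μ X Y hXm hYm x₁ x₂ x₃ h12 h23 hXae hYae r hinv P Q R hP hQ hR v₁ v₂ v₃ hvx hvy
  -- variance of X in terms of P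
  have hmemX2 : MemLp X 2 μ := by
    apply MemLp.of_bound hXm.aestronglyMeasurable (|x₁| + |x₂| + |x₃|)
    filter_upwards [hXae] with ω h
    rcases h with h | h | h <;> rw [h, Real.norm_eq_abs] <;>
      nlinarith [abs_nonneg x₁, abs_nonneg x₂, abs_nonneg x₃, le_abs_self x₁, le_abs_self x₂,
        le_abs_self x₃]
  have hrowP : ∀ u : ℝ, P u = R u x₁ + R u x₂ + R u x₃ := by
    intro u
    have h := measure_decomp μ Y hYm x₁ x₂ x₃ hab hac hbc hYae {ω | X ω = u}
      (hXm (measurableSet_singleton u))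
    have e : ∀ v : ℝ, {ω | X ω = u} ∩ {ω | Y ω = v} = {ω | X ω = u ∧ Y ω = v} := fun v => rfl
    rw [e, e, e] at h
    rw [hP, hR, hR, hR, h,
      toReal_add3 (measure_ne_top μ _) (measure_ne_top μ _) (measure_ne_top μ _)]
  have hEXint : ∫ ω, X ω ∂μ = x₁ * P x₁ + x₂ * P x₂ + x₃ * P x₃ := by
    have h := integral_pair3 μ X Y hXm hYm x₁ x₂ x₃ hab hac hbc hXae hYae (fun x y => x)
    rw [h, ← hR x₁ x₁, ← hR x₁ x₂, ← hR x₁ x₃, ← hR x₂ x₁, ← hR x₂ x₂, ← hR x₂ x₃, ← hR x₃ x₁,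
      ← hR x₃ x₂, ← hR x₃ x₃]
    linear_combination (-x₁) * hrowP x₁ + (-x₂) * hrowP x₂ + (-x₃) * hrowP x₃
  have hvarXexpr : variance X μ =
      x₁^2 * P x₁ + x₂^2 * P x₂ + x₃^2 * P x₃ - (x₁ * P x₁ + x₂ * P x₂ + x₃ * P x₃)^2 := by
    rw [variance_eq_sub hmemX2]
    have h2 : (μ[X^2] : ℝ) = ∫ ω, (X ω)^2 ∂μ := rfl
    have h := integral_pair3 μ X Y hXm hYm x₁ x₂ x₃ hab hac hbc hXae hYae (fun x y => x^2)
    rw [h2, h, hEXint, ← hR x₁ x₁, ← hR x₁ x₂, ← hR x₁ x₃, ← hR x₂ x₁, ← hR x₂ x₂, ← hR x₂ x₃,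
      ← hR x₃ x₁, ← hR x₃ x₂, ← hR x₃ x₃]
    linear_combination (-x₁^2) * hrowP x₁ + (-x₂^2) * hrowP x₂ + (-x₃^2) * hrowP x₃
  -- at least two atoms of X are positive
  have hnot12 : ¬ (P x₁ = 0 ∧ P x₂ = 0) := by
    rintro ⟨h1, h2⟩
    have h3 : P x₃ = 1 := by linarith
    apply hvX0
    rw [hvarXexpr, h1, h2, h3]; ring
  have hnot13 : ¬ (P x₁ = 0 ∧ P x₃ = 0) := by
    rintro ⟨h1, h3⟩
    have h2 : P x₂ = 1 := by linarith
    apply hvX0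
    rw [hvarXexpr, h1, h2, h3]; ring
  have hnot23 : ¬ (P x₂ = 0 ∧ P x₃ = 0) := by
    rintro ⟨h2, h3⟩
    have h1 : P x₁ = 1 := by linarith
    apply hvX0
    rw [hvarXexpr, h1, h2, h3]; ring
  have hr2pos : 0 < r^2 := pow_two_pos_of_ne_zero hr0
  -- all three atoms of X are positive
  have hPa : 0 < P x₁ := by
    rcases (hPnn x₁).lt_or_eq with h | h
    · exact h
    exfalso
    have ha0 : P x₁ = 0 := h.symm
    have hPb : 0 < P x₂ :=
      (hPnn x₂).lt_or_eq.resolve_right (fun hh => hnot12 ⟨ha0, hh.symm⟩)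
    have hPc : 0 < P x₃ :=
      (hPnn x₃).lt_or_eq.resolve_right (fun hh => hnot13 ⟨ha0, hh.symm⟩)
    have hVY : ∀ t : ℝ, 0 < (Q x₁ - Q x₁^2)*t^2 + (-(2*Q x₁*Q x₃))*t + (Q x₃ - Q x₃^2) := by
      intro t
      have e : (Q x₁ - Q x₁^2)*t^2 + (-(2*Q x₁*Q x₃))*t + (Q x₃ - Q x₃^2) =
          Q x₁*Q x₂*t^2 + Q x₁*Q x₃*(t-1)^2 + Q x₂*Q x₃ := by
        linear_combination (-(t^2*Q x₁ + Q x₃)) * hsumQ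
      rw [e]
      have n1 : 0 ≤ Q x₁*Q x₂*t^2 := mul_nonneg (mul_pos hQa hQb).le (sq_nonneg t)
      have n2 : 0 ≤ Q x₁*Q x₃*(t-1)^2 := mul_nonneg (mul_pos hQa hQc).le (sq_nonneg (t-1))
      linarith [mul_pos hQb hQc]
    have hvx : ∀ t : ℝ,
        0 < t^2 * P x₁ + 0^2 * P x₂ + 1^2 * P x₃ - (t * P x₁ + 0 * P x₂ + 1 * P x₃)^2 := by
      intro t
      have e : t^2 * P x₁ + 0^2 * P x₂ + 1^2 * P x₃ - (t * P x₁ + 0 * P x₂ + 1 * P x₃)^2 =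
          P x₂ * P x₃ := by
        linear_combination (t^2 - t^2*P x₁ - 2*t*P x₃ + P x₃) * ha0 + (-(P x₃)) * hsumP
      rw [e]; exact mul_pos hPb hPc
    have hvy : ∀ t : ℝ,
        0 < t^2 * Q x₁ + 0^2 * Q x₂ + 1^2 * Q x₃ - (t * Q x₁ + 0 * Q x₂ + 1 * Q x₃)^2 := by
      intro t
      have e : t^2 * Q x₁ + 0^2 * Q x₂ + 1^2 * Q x₃ - (t * Q x₁ + 0 * Q x₂ + 1 * Q x₃)^2 =
          (Q x₁ - Q x₁^2)*t^2 + (-(2*Q x₁*Q x₃))*t + (Q x₃ - Q x₃^2) := by ring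
      rw [e]; exact hVY t
    have hz1 : R x₁ x₁ = 0 := hRzero x₁ x₁ ha0
    have hz3 : R x₁ x₃ = 0 := hRzero x₁ x₃ ha0
    have key : ∀ t : ℝ, ((R x₃ x₁ - P x₃*Q x₁)*t + (R x₃ x₃ - P x₃*Q x₃))^2 =
        (r^2*(P x₂*P x₃)) *
          ((Q x₁ - Q x₁^2)*t^2 + (-(2*Q x₁*Q x₃))*t + (Q x₃ - Q x₃^2)) := by
      intro t
      have h := master t 0 1 (hvx t) (hvy t)
      have harg : (t^2 * P x₁ + 0^2 * P x₂ + 1^2 * P x₃ -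
            (t * P x₁ + 0 * P x₂ + 1 * P x₃)^2) *
          (t^2 * Q x₁ + 0^2 * Q x₂ + 1^2 * Q x₃ - (t * Q x₁ + 0 * Q x₂ + 1 * Q x₃)^2) =
          (P x₂*P x₃) * ((Q x₁ - Q x₁^2)*t^2 + (-(2*Q x₁*Q x₃))*t + (Q x₃ - Q x₃^2)) := by
        linear_combination
          ((t^2 - t^2*P x₁ - 2*t*P x₃ + P x₃) *
            ((Q x₁ - Q x₁^2)*t^2 + (-(2*Q x₁*Q x₃))*t + (Q x₃ - Q x₃^2))) * ha0 +
          ((-(P x₃)) * ((Q x₁ - Q x₁^2)*t^2 + (-(2*Q x₁*Q x₃))*t + (Q x₃ - Q x₃^2))) * hsumP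
      rw [harg] at h
      have h2 : (R x₃ x₁ - P x₃*Q x₁)*t + (R x₃ x₃ - P x₃*Q x₃) =
          r * Real.sqrt ((P x₂*P x₃) *
            ((Q x₁ - Q x₁^2)*t^2 + (-(2*Q x₁*Q x₃))*t + (Q x₃ - Q x₃^2))) := by
        linear_combination h + (-(t^2))*hz1 + (-t)*hz3 + (t*(t*Q x₁ + Q x₃))*ha0
      rw [h2, mul_pow, Real.sq_sqrt (mul_pos (mul_pos hPb hPc) (hVY t)).le]
      ring
    have hA' : 0 < Q x₁ - Q x₁^2 := by
      have e : Q x₁ - Q x₁^2 = Q x₁ * (Q x₂ + Q x₃) := by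
        linear_combination (-(Q x₁)) * hsumQ
      rw [e]; exact mul_pos hQa (add_pos hQb hQc)
    exact no_linear (mul_pos hr2pos (mul_pos hPb hPc)) hA' hVY key
  have hPb : 0 < P x₂ := by
    rcases (hPnn x₂).lt_or_eq with h | h
    · exact h
    exfalso
    have hb0 : P x₂ = 0 := h.symm
    have hPc : 0 < P x₃ :=
      (hPnn x₃).lt_or_eq.resolve_right (fun hh => hnot23 ⟨hb0, hh.symm⟩)
    have hVY : ∀ t : ℝ, 0 < (Q x₂ - Q x₂^2)*t^2 + (-(2*Q x₂*Q x₃))*t + (Q x₃ - Q x₃^2) := by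
      intro t
      have e : (Q x₂ - Q x₂^2)*t^2 + (-(2*Q x₂*Q x₃))*t + (Q x₃ - Q x₃^2) =
          Q x₁*Q x₂*t^2 + Q x₂*Q x₃*(t-1)^2 + Q x₁*Q x₃ := by
        linear_combination (-(t^2*Q x₂ + Q x₃)) * hsumQ
      rw [e]
      have n1 : 0 ≤ Q x₁*Q x₂*t^2 := mul_nonneg (mul_pos hQa hQb).le (sq_nonneg t)
      have n2 : 0 ≤ Q x₂*Q x₃*(t-1)^2 := mul_nonneg (mul_pos hQb hQc).le (sq_nonneg (t-1))
      linarith [mul_pos hQa hQc]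
    have hvx : ∀ t : ℝ,
        0 < 0^2 * P x₁ + t^2 * P x₂ + 1^2 * P x₃ - (0 * P x₁ + t * P x₂ + 1 * P x₃)^2 := by
      intro t
      have e : 0^2 * P x₁ + t^2 * P x₂ + 1^2 * P x₃ - (0 * P x₁ + t * P x₂ + 1 * P x₃)^2 =
          P x₁ * P x₃ := by
        linear_combination (t^2 - t^2*P x₂ - 2*t*P x₃ + P x₃) * hb0 + (-(P x₃)) * hsumP
      rw [e]; exact mul_pos hPa hPc
    have hvy : ∀ t : ℝ,
        0 < 0^2 * Q x₁ + t^2 * Q x₂ + 1^2 * Q x₃ - (0 * Q x₁ + t * Q x₂ + 1 * Q x₃)^2 := by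
      intro t
      have e : 0^2 * Q x₁ + t^2 * Q x₂ + 1^2 * Q x₃ - (0 * Q x₁ + t * Q x₂ + 1 * Q x₃)^2 =
          (Q x₂ - Q x₂^2)*t^2 + (-(2*Q x₂*Q x₃))*t + (Q x₃ - Q x₃^2) := by ring
      rw [e]; exact hVY t
    have hz1 : R x₂ x₂ = 0 := hRzero x₂ x₂ hb0
    have hz3 : R x₂ x₃ = 0 := hRzero x₂ x₃ hb0
    have key : ∀ t : ℝ, ((R x₃ x₂ - P x₃*Q x₂)*t + (R x₃ x₃ - P x₃*Q x₃))^2 =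
        (r^2*(P x₁*P x₃)) *
          ((Q x₂ - Q x₂^2)*t^2 + (-(2*Q x₂*Q x₃))*t + (Q x₃ - Q x₃^2)) := by
      intro t
      have h := master 0 t 1 (hvx t) (hvy t)
      have harg : (0^2 * P x₁ + t^2 * P x₂ + 1^2 * P x₃ -
            (0 * P x₁ + t * P x₂ + 1 * P x₃)^2) *
          (0^2 * Q x₁ + t^2 * Q x₂ + 1^2 * Q x₃ - (0 * Q x₁ + t * Q x₂ + 1 * Q x₃)^2) =
          (P x₁*P x₃) * ((Q x₂ - Q x₂^2)*t^2 + (-(2*Q x₂*Q x₃))*t + (Q x₃ - Q x₃^2)) := by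
        linear_combination
          ((t^2 - t^2*P x₂ - 2*t*P x₃ + P x₃) *
            ((Q x₂ - Q x₂^2)*t^2 + (-(2*Q x₂*Q x₃))*t + (Q x₃ - Q x₃^2))) * hb0 +
          ((-(P x₃)) * ((Q x₂ - Q x₂^2)*t^2 + (-(2*Q x₂*Q x₃))*t + (Q x₃ - Q x₃^2))) * hsumP
      rw [harg] at h
      have h2 : (R x₃ x₂ - P x₃*Q x₂)*t + (R x₃ x₃ - P x₃*Q x₃) =
          r * Real.sqrt ((P x₁*P x₃) *
            ((Q x₂ - Q x₂^2)*t^2 + (-(2*Q x₂*Q x₃))*t + (Q x₃ - Q x₃^2))) := by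
        linear_combination h + (-(t^2))*hz1 + (-t)*hz3 + (t*(t*Q x₂ + Q x₃))*hb0
      rw [h2, mul_pow, Real.sq_sqrt (mul_pos (mul_pos hPa hPc) (hVY t)).le]
      ring
    have hA' : 0 < Q x₂ - Q x₂^2 := by
      have e : Q x₂ - Q x₂^2 = Q x₂ * (Q x₁ + Q x₃) := by
        linear_combination (-(Q x₂)) * hsumQ
      rw [e]; exact mul_pos hQb (add_pos hQa hQc)
    exact no_linear (mul_pos hr2pos (mul_pos hPa hPc)) hA' hVY key
  have hPc : 0 < P x₃ := by
    rcases (hPnn x₃).lt_or_eq with h | h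
    · exact h
    exfalso
    have hc0 : P x₃ = 0 := h.symm
    have hVY : ∀ t : ℝ, 0 < (Q x₃ - Q x₃^2)*t^2 + (-(2*Q x₂*Q x₃))*t + (Q x₂ - Q x₂^2) := by
      intro t
      have e : (Q x₃ - Q x₃^2)*t^2 + (-(2*Q x₂*Q x₃))*t + (Q x₂ - Q x₂^2) =
          Q x₁*Q x₃*t^2 + Q x₂*Q x₃*(t-1)^2 + Q x₁*Q x₂ := by
        linear_combination (-(t^2*Q x₃ + Q x₂)) * hsumQ
      rw [e]
      have n1 : 0 ≤ Q x₁*Q x₃*t^2 := mul_nonneg (mul_pos hQa hQc).le (sq_nonneg t)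
      have n2 : 0 ≤ Q x₂*Q x₃*(t-1)^2 := mul_nonneg (mul_pos hQb hQc).le (sq_nonneg (t-1))
      linarith [mul_pos hQa hQb]
    have hvx : ∀ t : ℝ,
        0 < 0^2 * P x₁ + 1^2 * P x₂ + t^2 * P x₃ - (0 * P x₁ + 1 * P x₂ + t * P x₃)^2 := by
      intro t
      have e : 0^2 * P x₁ + 1^2 * P x₂ + t^2 * P x₃ - (0 * P x₁ + 1 * P x₂ + t * P x₃)^2 =
          P x₁ * P x₂ := by
        linear_combination (t^2 - t^2*P x₃ - 2*t*P x₂ + P x₂) * hc0 + (-(P x₂)) * hsumP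
      rw [e]; exact mul_pos hPa hPb
    have hvy : ∀ t : ℝ,
        0 < 0^2 * Q x₁ + 1^2 * Q x₂ + t^2 * Q x₃ - (0 * Q x₁ + 1 * Q x₂ + t * Q x₃)^2 := by
      intro t
      have e : 0^2 * Q x₁ + 1^2 * Q x₂ + t^2 * Q x₃ - (0 * Q x₁ + 1 * Q x₂ + t * Q x₃)^2 =
          (Q x₃ - Q x₃^2)*t^2 + (-(2*Q x₂*Q x₃))*t + (Q x₂ - Q x₂^2) := by ring
      rw [e]; exact hVY t
    have hz1 : R x₃ x₂ = 0 := hRzero x₃ x₂ hc0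
    have hz3 : R x₃ x₃ = 0 := hRzero x₃ x₃ hc0
    have key : ∀ t : ℝ, ((R x₂ x₃ - P x₂*Q x₃)*t + (R x₂ x₂ - P x₂*Q x₂))^2 =
        (r^2*(P x₁*P x₂)) *
          ((Q x₃ - Q x₃^2)*t^2 + (-(2*Q x₂*Q x₃))*t + (Q x₂ - Q x₂^2)) := by
      intro t
      have h := master 0 1 t (hvx t) (hvy t)
      have harg : (0^2 * P x₁ + 1^2 * P x₂ + t^2 * P x₃ -
            (0 * P x₁ + 1 * P x₂ + t * P x₃)^2) *
          (0^2 * Q x₁ + 1^2 * Q x₂ + t^2 * Q x₃ - (0 * Q x₁ + 1 * Q x₂ + t * Q x₃)^2) =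
          (P x₁*P x₂) * ((Q x₃ - Q x₃^2)*t^2 + (-(2*Q x₂*Q x₃))*t + (Q x₂ - Q x₂^2)) := by
        linear_combination
          ((t^2 - t^2*P x₃ - 2*t*P x₂ + P x₂) *
            ((Q x₃ - Q x₃^2)*t^2 + (-(2*Q x₂*Q x₃))*t + (Q x₂ - Q x₂^2))) * hc0 +
          ((-(P x₂)) * ((Q x₃ - Q x₃^2)*t^2 + (-(2*Q x₂*Q x₃))*t + (Q x₂ - Q x₂^2))) * hsumP
      rw [harg] at h
      have h2 : (R x₂ x₃ - P x₂*Q x₃)*t + (R x₂ x₂ - P x₂*Q x₂) =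
          r * Real.sqrt ((P x₁*P x₂) *
            ((Q x₃ - Q x₃^2)*t^2 + (-(2*Q x₂*Q x₃))*t + (Q x₂ - Q x₂^2))) := by
        linear_combination h + (-t)*hz1 + (-(t^2))*hz3 + (t*(Q x₂ + t*Q x₃))*hc0
      rw [h2, mul_pow, Real.sq_sqrt (mul_pos (mul_pos hPa hPb) (hVY t)).le]
      ring
    have hA' : 0 < Q x₃ - Q x₃^2 := by
      have e : Q x₃ - Q x₃^2 = Q x₃ * (Q x₁ + Q x₂) := by
        linear_combination (-(Q x₃)) * hsumQ
      rw [e]; exact mul_pos hQc (add_pos hQa hQb)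
    exact no_linear (mul_pos hr2pos (mul_pos hPa hPb)) hA' hVY key
  -- the sign of r
  obtain ⟨ε, hε2, hρ⟩ : ∃ ε : ℝ, ε^2 = 1 ∧ 0 < ε * r := by
    rcases lt_or_gt_of_ne hr0 with h | h
    · exact ⟨-1, by ring, by nlinarith⟩
    · exact ⟨1, by ring, by nlinarith⟩
  have hρ2 : (0:ℝ) < (ε*r)^2 := pow_two_pos_of_ne_zero hρ.ne'
  -- positivity of the variance quadratics (all atoms positive)
  have hApos1 : 0 < P x₂ - P x₂^2 := by
    have e : P x₂ - P x₂^2 = P x₂ * (P x₁ + P x₃) := by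
      linear_combination (-(P x₂)) * hsumP
    rw [e]; exact mul_pos hPb (add_pos hPa hPc)
  have hApos2 : 0 < P x₁ - P x₁^2 := by
    have e : P x₁ - P x₁^2 = P x₁ * (P x₂ + P x₃) := by
      linear_combination (-(P x₁)) * hsumP
    rw [e]; exact mul_pos hPa (add_pos hPb hPc)
  have hA'pos1 : 0 < Q x₂ - Q x₂^2 := by
    have e : Q x₂ - Q x₂^2 = Q x₂ * (Q x₁ + Q x₃) := by
      linear_combination (-(Q x₂)) * hsumQ
    rw [e]; exact mul_pos hQb (add_pos hQa hQc)
  have hA'pos2 : 0 < Q x₁ - Q x₁^2 := by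
    have e : Q x₁ - Q x₁^2 = Q x₁ * (Q x₂ + Q x₃) := by
      linear_combination (-(Q x₁)) * hsumQ
    rw [e]; exact mul_pos hQa (add_pos hQb hQc)
  have hVXp1 : ∀ t : ℝ, 0 < (P x₂ - P x₂^2)*t^2 + (-(2*P x₂*P x₃))*t + (P x₃ - P x₃^2) := by
    intro t
    have e : (P x₂ - P x₂^2)*t^2 + (-(2*P x₂*P x₃))*t + (P x₃ - P x₃^2) =
        P x₁*P x₂*t^2 + P x₂*P x₃*(t-1)^2 + P x₁*P x₃ := by
      linear_combination (-(t^2*P x₂ + P x₃)) * hsumP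
    rw [e]
    have n1 : 0 ≤ P x₁*P x₂*t^2 := mul_nonneg (mul_pos hPa hPb).le (sq_nonneg t)
    have n2 : 0 ≤ P x₂*P x₃*(t-1)^2 := mul_nonneg (mul_pos hPb hPc).le (sq_nonneg (t-1))
    linarith [mul_pos hPa hPc]
  have hVYp1 : ∀ t : ℝ, 0 < (Q x₂ - Q x₂^2)*t^2 + (-(2*Q x₂*Q x₃))*t + (Q x₃ - Q x₃^2) := by
    intro t
    have e : (Q x₂ - Q x₂^2)*t^2 + (-(2*Q x₂*Q x₃))*t + (Q x₃ - Q x₃^2) =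
        Q x₁*Q x₂*t^2 + Q x₂*Q x₃*(t-1)^2 + Q x₁*Q x₃ := by
      linear_combination (-(t^2*Q x₂ + Q x₃)) * hsumQ
    rw [e]
    have n1 : 0 ≤ Q x₁*Q x₂*t^2 := mul_nonneg (mul_pos hQa hQb).le (sq_nonneg t)
    have n2 : 0 ≤ Q x₂*Q x₃*(t-1)^2 := mul_nonneg (mul_pos hQb hQc).le (sq_nonneg (t-1))
    linarith [mul_pos hQa hQc]
  have hVXp2 : ∀ t : ℝ, 0 < (P x₁ - P x₁^2)*t^2 + (-(2*P x₁*P x₃))*t + (P x₃ - P x₃^2) := by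
    intro t
    have e : (P x₁ - P x₁^2)*t^2 + (-(2*P x₁*P x₃))*t + (P x₃ - P x₃^2) =
        P x₁*P x₂*t^2 + P x₁*P x₃*(t-1)^2 + P x₂*P x₃ := by
      linear_combination (-(t^2*P x₁ + P x₃)) * hsumP
    rw [e]
    have n1 : 0 ≤ P x₁*P x₂*t^2 := mul_nonneg (mul_pos hPa hPb).le (sq_nonneg t)
    have n2 : 0 ≤ P x₁*P x₃*(t-1)^2 := mul_nonneg (mul_pos hPa hPc).le (sq_nonneg (t-1))
    linarith [mul_pos hPb hPc]
  have hVYp2 : ∀ t : ℝ, 0 < (Q x₁ - Q x₁^2)*t^2 + (-(2*Q x₁*Q x₃))*t + (Q x₃ - Q x₃^2) := by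
    intro t
    have e : (Q x₁ - Q x₁^2)*t^2 + (-(2*Q x₁*Q x₃))*t + (Q x₃ - Q x₃^2) =
        Q x₁*Q x₂*t^2 + Q x₁*Q x₃*(t-1)^2 + Q x₂*Q x₃ := by
      linear_combination (-(t^2*Q x₁ + Q x₃)) * hsumQ
    rw [e]
    have n1 : 0 ≤ Q x₁*Q x₂*t^2 := mul_nonneg (mul_pos hQa hQb).le (sq_nonneg t)
    have n2 : 0 ≤ Q x₁*Q x₃*(t-1)^2 := mul_nonneg (mul_pos hQa hQc).le (sq_nonneg (t-1))
    linarith [mul_pos hQb hQc]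
  have hVXp4 : ∀ t : ℝ, 0 < (P x₁ - P x₁^2)*t^2 + (-(2*P x₁*P x₂))*t + (P x₂ - P x₂^2) := by
    intro t
    have e : (P x₁ - P x₁^2)*t^2 + (-(2*P x₁*P x₂))*t + (P x₂ - P x₂^2) =
        P x₁*P x₃*t^2 + P x₁*P x₂*(t-1)^2 + P x₂*P x₃ := by
      linear_combination (-(t^2*P x₁ + P x₂)) * hsumP
    rw [e]
    have n1 : 0 ≤ P x₁*P x₃*t^2 := mul_nonneg (mul_pos hPa hPc).le (sq_nonneg t)
    have n2 : 0 ≤ P x₁*P x₂*(t-1)^2 := mul_nonneg (mul_pos hPa hPb).le (sq_nonneg (t-1))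
    linarith [mul_pos hPb hPc]
  have hVYp4 : ∀ t : ℝ, 0 < (Q x₁ - Q x₁^2)*t^2 + (-(2*Q x₁*Q x₂))*t + (Q x₂ - Q x₂^2) := by
    intro t
    have e : (Q x₁ - Q x₁^2)*t^2 + (-(2*Q x₁*Q x₂))*t + (Q x₂ - Q x₂^2) =
        Q x₁*Q x₃*t^2 + Q x₁*Q x₂*(t-1)^2 + Q x₂*Q x₃ := by
      linear_combination (-(t^2*Q x₁ + Q x₂)) * hsumQ
    rw [e]
    have n1 : 0 ≤ Q x₁*Q x₃*t^2 := mul_nonneg (mul_pos hQa hQc).le (sq_nonneg t)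
    have n2 : 0 ≤ Q x₁*Q x₂*(t-1)^2 := mul_nonneg (mul_pos hQa hQb).le (sq_nonneg (t-1))
    linarith [mul_pos hQb hQc]
  -- family (0, t, 1)
  have E1 : (1 - Q x₂)*P x₃ = (1 - P x₂)*Q x₃ := by
    have hsq1 : ∀ t : ℝ, (ε*(R x₂ x₂ - P x₂*Q x₂))*t^2 +
        (ε*(R x₂ x₃ + R x₃ x₂ - P x₂*Q x₃ - P x₃*Q x₂))*t + (ε*(R x₃ x₃ - P x₃*Q x₃)) =
        (ε*r) * Real.sqrt
          (((P x₂ - P x₂^2)*t^2 + (-(2*P x₂*P x₃))*t + (P x₃ - P x₃^2)) *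
           ((Q x₂ - Q x₂^2)*t^2 + (-(2*Q x₂*Q x₃))*t + (Q x₃ - Q x₃^2))) := by
      intro t
      have hvx1 : 0 < 0^2 * P x₁ + t^2 * P x₂ + 1^2 * P x₃ -
          (0 * P x₁ + t * P x₂ + 1 * P x₃)^2 := by
        have e : 0^2 * P x₁ + t^2 * P x₂ + 1^2 * P x₃ - (0 * P x₁ + t * P x₂ + 1 * P x₃)^2 =
            (P x₂ - P x₂^2)*t^2 + (-(2*P x₂*P x₃))*t + (P x₃ - P x₃^2) := by ring
        rw [e]; exact hVXp1 t
      have hvy1 : 0 < 0^2 * Q x₁ + t^2 * Q x₂ + 1^2 * Q x₃ -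
          (0 * Q x₁ + t * Q x₂ + 1 * Q x₃)^2 := by
        have e : 0^2 * Q x₁ + t^2 * Q x₂ + 1^2 * Q x₃ - (0 * Q x₁ + t * Q x₂ + 1 * Q x₃)^2 =
            (Q x₂ - Q x₂^2)*t^2 + (-(2*Q x₂*Q x₃))*t + (Q x₃ - Q x₃^2) := by ring
        rw [e]; exact hVYp1 t
      have h := master 0 t 1 hvx1 hvy1
      rw [show (0^2 * P x₁ + t^2 * P x₂ + 1^2 * P x₃ - (0 * P x₁ + t * P x₂ + 1 * P x₃)^2) *
          (0^2 * Q x₁ + t^2 * Q x₂ + 1^2 * Q x₃ - (0 * Q x₁ + t * Q x₂ + 1 * Q x₃)^2) =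
          ((P x₂ - P x₂^2)*t^2 + (-(2*P x₂*P x₃))*t + (P x₃ - P x₃^2)) *
          ((Q x₂ - Q x₂^2)*t^2 + (-(2*Q x₂*Q x₃))*t + (Q x₃ - Q x₃^2)) from by ring] at h
      linear_combination ε * h
    have hM1 : ∀ t : ℝ, 0 ≤ (ε*(R x₂ x₂ - P x₂*Q x₂))*t^2 +
        (ε*(R x₂ x₃ + R x₃ x₂ - P x₂*Q x₃ - P x₃*Q x₂))*t + (ε*(R x₃ x₃ - P x₃*Q x₃)) := by
      intro t
      rw [hsq1 t]
      exact mul_nonneg hρ.le (Real.sqrt_nonneg _)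
    have hid1 : ∀ t : ℝ, ((ε*(R x₂ x₂ - P x₂*Q x₂))*t^2 +
        (ε*(R x₂ x₃ + R x₃ x₂ - P x₂*Q x₃ - P x₃*Q x₂))*t + (ε*(R x₃ x₃ - P x₃*Q x₃)))^2 =
        (((ε*r)^2*(P x₂ - P x₂^2))*t^2 + ((ε*r)^2*(-(2*P x₂*P x₃)))*t +
          ((ε*r)^2*(P x₃ - P x₃^2))) *
        ((Q x₂ - Q x₂^2)*t^2 + (-(2*Q x₂*Q x₃))*t + (Q x₃ - Q x₃^2)) := by
      intro t
      rw [hsq1 t, mul_pow, Real.sq_sqrt (mul_pos (hVXp1 t) (hVYp1 t)).le]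
      ring
    have rel1 := key_quadratic (mul_pos hρ2 hApos1) hA'pos1 hVYp1 hM1 hid1
    apply mul_left_cancel₀
      (show (2*P x₂*Q x₂*(ε*r)^2 : ℝ) ≠ 0 from
        (mul_pos (mul_pos (mul_pos two_pos hPb) hQb) hρ2).ne')
    linear_combination (-1) * rel1
  -- family (t, 0, 1)
  have E2 : (1 - Q x₁)*P x₃ = (1 - P x₁)*Q x₃ := by
    have hsq2 : ∀ t : ℝ, (ε*(R x₁ x₁ - P x₁*Q x₁))*t^2 +
        (ε*(R x₁ x₃ + R x₃ x₁ - P x₁*Q x₃ - P x₃*Q x₁))*t + (ε*(R x₃ x₃ - P x₃*Q x₃)) =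
        (ε*r) * Real.sqrt
          (((P x₁ - P x₁^2)*t^2 + (-(2*P x₁*P x₃))*t + (P x₃ - P x₃^2)) *
           ((Q x₁ - Q x₁^2)*t^2 + (-(2*Q x₁*Q x₃))*t + (Q x₃ - Q x₃^2))) := by
      intro t
      have hvx1 : 0 < t^2 * P x₁ + 0^2 * P x₂ + 1^2 * P x₃ -
          (t * P x₁ + 0 * P x₂ + 1 * P x₃)^2 := by
        have e : t^2 * P x₁ + 0^2 * P x₂ + 1^2 * P x₃ - (t * P x₁ + 0 * P x₂ + 1 * P x₃)^2 =
            (P x₁ - P x₁^2)*t^2 + (-(2*P x₁*P x₃))*t + (P x₃ - P x₃^2) := by ring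
        rw [e]; exact hVXp2 t
      have hvy1 : 0 < t^2 * Q x₁ + 0^2 * Q x₂ + 1^2 * Q x₃ -
          (t * Q x₁ + 0 * Q x₂ + 1 * Q x₃)^2 := by
        have e : t^2 * Q x₁ + 0^2 * Q x₂ + 1^2 * Q x₃ - (t * Q x₁ + 0 * Q x₂ + 1 * Q x₃)^2 =
            (Q x₁ - Q x₁^2)*t^2 + (-(2*Q x₁*Q x₃))*t + (Q x₃ - Q x₃^2) := by ring
        rw [e]; exact hVYp2 t
      have h := master t 0 1 hvx1 hvy1
      rw [show (t^2 * P x₁ + 0^2 * P x₂ + 1^2 * P x₃ - (t * P x₁ + 0 * P x₂ + 1 * P x₃)^2) *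
          (t^2 * Q x₁ + 0^2 * Q x₂ + 1^2 * Q x₃ - (t * Q x₁ + 0 * Q x₂ + 1 * Q x₃)^2) =
          ((P x₁ - P x₁^2)*t^2 + (-(2*P x₁*P x₃))*t + (P x₃ - P x₃^2)) *
          ((Q x₁ - Q x₁^2)*t^2 + (-(2*Q x₁*Q x₃))*t + (Q x₃ - Q x₃^2)) from by ring] at h
      linear_combination ε * h
    have hM1 : ∀ t : ℝ, 0 ≤ (ε*(R x₁ x₁ - P x₁*Q x₁))*t^2 +
        (ε*(R x₁ x₃ + R x₃ x₁ - P x₁*Q x₃ - P x₃*Q x₁))*t + (ε*(R x₃ x₃ - P x₃*Q x₃)) := by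
      intro t
      rw [hsq2 t]
      exact mul_nonneg hρ.le (Real.sqrt_nonneg _)
    have hid1 : ∀ t : ℝ, ((ε*(R x₁ x₁ - P x₁*Q x₁))*t^2 +
        (ε*(R x₁ x₃ + R x₃ x₁ - P x₁*Q x₃ - P x₃*Q x₁))*t + (ε*(R x₃ x₃ - P x₃*Q x₃)))^2 =
        (((ε*r)^2*(P x₁ - P x₁^2))*t^2 + ((ε*r)^2*(-(2*P x₁*P x₃)))*t +
          ((ε*r)^2*(P x₃ - P x₃^2))) *
        ((Q x₁ - Q x₁^2)*t^2 + (-(2*Q x₁*Q x₃))*t + (Q x₃ - Q x₃^2)) := by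
      intro t
      rw [hsq2 t, mul_pow, Real.sq_sqrt (mul_pos (hVXp2 t) (hVYp2 t)).le]
      ring
    have rel2 := key_quadratic (mul_pos hρ2 hApos2) hA'pos2 hVYp2 hM1 hid1
    apply mul_left_cancel₀
      (show (2*P x₁*Q x₁*(ε*r)^2 : ℝ) ≠ 0 from
        (mul_pos (mul_pos (mul_pos two_pos hPa) hQa) hρ2).ne')
    linear_combination (-1) * rel2
  -- family (t, 1, 0)
  have E3 : (1 - Q x₁)*P x₂ = (1 - P x₁)*Q x₂ := by
    have hsq4 : ∀ t : ℝ, (ε*(R x₁ x₁ - P x₁*Q x₁))*t^2 +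
        (ε*(R x₁ x₂ + R x₂ x₁ - P x₁*Q x₂ - P x₂*Q x₁))*t + (ε*(R x₂ x₂ - P x₂*Q x₂)) =
        (ε*r) * Real.sqrt
          (((P x₁ - P x₁^2)*t^2 + (-(2*P x₁*P x₂))*t + (P x₂ - P x₂^2)) *
           ((Q x₁ - Q x₁^2)*t^2 + (-(2*Q x₁*Q x₂))*t + (Q x₂ - Q x₂^2))) := by
      intro t
      have hvx1 : 0 < t^2 * P x₁ + 1^2 * P x₂ + 0^2 * P x₃ -
          (t * P x₁ + 1 * P x₂ + 0 * P x₃)^2 := by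
        have e : t^2 * P x₁ + 1^2 * P x₂ + 0^2 * P x₃ - (t * P x₁ + 1 * P x₂ + 0 * P x₃)^2 =
            (P x₁ - P x₁^2)*t^2 + (-(2*P x₁*P x₂))*t + (P x₂ - P x₂^2) := by ring
        rw [e]; exact hVXp4 t
      have hvy1 : 0 < t^2 * Q x₁ + 1^2 * Q x₂ + 0^2 * Q x₃ -
          (t * Q x₁ + 1 * Q x₂ + 0 * Q x₃)^2 := by
        have e : t^2 * Q x₁ + 1^2 * Q x₂ + 0^2 * Q x₃ - (t * Q x₁ + 1 * Q x₂ + 0 * Q x₃)^2 =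
            (Q x₁ - Q x₁^2)*t^2 + (-(2*Q x₁*Q x₂))*t + (Q x₂ - Q x₂^2) := by ring
        rw [e]; exact hVYp4 t
      have h := master t 1 0 hvx1 hvy1
      rw [show (t^2 * P x₁ + 1^2 * P x₂ + 0^2 * P x₃ - (t * P x₁ + 1 * P x₂ + 0 * P x₃)^2) *
          (t^2 * Q x₁ + 1^2 * Q x₂ + 0^2 * Q x₃ - (t * Q x₁ + 1 * Q x₂ + 0 * Q x₃)^2) =
          ((P x₁ - P x₁^2)*t^2 + (-(2*P x₁*P x₂))*t + (P x₂ - P x₂^2)) *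
          ((Q x₁ - Q x₁^2)*t^2 + (-(2*Q x₁*Q x₂))*t + (Q x₂ - Q x₂^2)) from by ring] at h
      linear_combination ε * h
    have hM1 : ∀ t : ℝ, 0 ≤ (ε*(R x₁ x₁ - P x₁*Q x₁))*t^2 +
        (ε*(R x₁ x₂ + R x₂ x₁ - P x₁*Q x₂ - P x₂*Q x₁))*t + (ε*(R x₂ x₂ - P x₂*Q x₂)) := by
      intro t
      rw [hsq4 t]
      exact mul_nonneg hρ.le (Real.sqrt_nonneg _)
    have hid1 : ∀ t : ℝ, ((ε*(R x₁ x₁ - P x₁*Q x₁))*t^2 +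
        (ε*(R x₁ x₂ + R x₂ x₁ - P x₁*Q x₂ - P x₂*Q x₁))*t + (ε*(R x₂ x₂ - P x₂*Q x₂)))^2 =
        (((ε*r)^2*(P x₁ - P x₁^2))*t^2 + ((ε*r)^2*(-(2*P x₁*P x₂)))*t +
          ((ε*r)^2*(P x₂ - P x₂^2))) *
        ((Q x₁ - Q x₁^2)*t^2 + (-(2*Q x₁*Q x₂))*t + (Q x₂ - Q x₂^2)) := by
      intro t
      rw [hsq4 t, mul_pow, Real.sq_sqrt (mul_pos (hVXp4 t) (hVYp4 t)).le]
      ring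
    have rel4 := key_quadratic (mul_pos hρ2 hApos2) hA'pos2 hVYp4 hM1 hid1
    apply mul_left_cancel₀
      (show (2*P x₁*Q x₁*(ε*r)^2 : ℝ) ≠ 0 from
        (mul_pos (mul_pos (mul_pos two_pos hPa) hQa) hρ2).ne')
    linear_combination (-1) * rel4
  -- conclude that the marginals agree
  have hu : 0 < 1 - Q x₁ := by linarith
  have hstar : (1 - Q x₁) * (P x₂*Q x₃) = (1 - Q x₁) * (P x₃*Q x₂) := by
    linear_combination Q x₃ * E3 + (-(Q x₂)) * E2
  have hstar' : P x₂*Q x₃ = P x₃*Q x₂ := mul_left_cancel₀ hu.ne' hstar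
  have hPQc : P x₃ = Q x₃ := by linear_combination E1 - hstar'
  have hPQa : P x₁ = Q x₁ := by
    rw [hPQc] at E2
    have h9 : Q x₃ * P x₁ = Q x₃ * Q x₁ := by linear_combination E2
    exact mul_left_cancel₀ hQc.ne' h9
  have hPQb : P x₂ = Q x₂ := by linarith
  have hax : μ {ω | X ω = x₁} = μ {ω | Y ω = x₁} := by
    have h := hPQa
    rw [hP, hQ] at h
    exact (ENNReal.toReal_eq_toReal_iff' (measure_ne_top μ _) (measure_ne_top μ _)).mp h
  have hbx : μ {ω | X ω = x₂} = μ {ω | Y ω = x₂} := by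
    have h := hPQb
    rw [hP, hQ] at h
    exact (ENNReal.toReal_eq_toReal_iff' (measure_ne_top μ _) (measure_ne_top μ _)).mp h
  have hcx : μ {ω | X ω = x₃} = μ {ω | Y ω = x₃} := by
    have h := hPQc
    rw [hP, hQ] at h
    exact (ENNReal.toReal_eq_toReal_iff' (measure_ne_top μ _) (measure_ne_top μ _)).mp h
  apply Measure.ext
  intro s hs
  rw [Measure.map_apply hXm hs, Measure.map_apply hYm hs]
  rw [measure_decomp μ X hXm x₁ x₂ x₃ hab hac hbc hXae (X ⁻¹' s) (hXm hs),
    measure_decomp μ Y hYm x₁ x₂ x₃ hab hac hbc hYae (Y ⁻¹' s) (hYm hs)]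
  have hpieceX : ∀ u : ℝ, X ⁻¹' s ∩ {ω | X ω = u} = if u ∈ s then {ω | X ω = u} else ∅ := by
    intro u
    by_cases hu : u ∈ s
    · rw [if_pos hu]
      ext ω
      constructor
      · rintro ⟨-, h⟩; exact h
      · intro h
        exact ⟨by rw [Set.mem_preimage, show X ω = u from h]; exact hu, h⟩
    · rw [if_neg hu]
      ext ω
      constructor
      · rintro ⟨h1, h2⟩
        rw [Set.mem_preimage, show X ω = u from h2] at h1
        exact absurd h1 hu
      · intro h
        exact absurd h (Set.notMem_empty ω)
  have hpieceY : ∀ u : ℝ, Y ⁻¹' s ∩ {ω | Y ω = u} = if u ∈ s then {ω | Y ω = u} else ∅ := by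
    intro u
    by_cases hu : u ∈ s
    · rw [if_pos hu]
      ext ω
      constructor
      · rintro ⟨-, h⟩; exact h
      · intro h
        exact ⟨by rw [Set.mem_preimage, show Y ω = u from h]; exact hu, h⟩
    · rw [if_neg hu]
      ext ω
      constructor
      · rintro ⟨h1, h2⟩
        rw [Set.mem_preimage, show Y ω = u from h2] at h1
        exact absurd h1 hu
      · intro h
        exact absurd h (Set.notMem_empty ω)
  rw [hpieceX x₁, hpieceX x₂, hpieceX x₃, hpieceY x₁, hpieceY x₂, hpieceY x₃]
  by_cases h1 : x₁ ∈ s <;> by_cases h2 : x₂ ∈ s <;> by_cases h3 : x₃ ∈ s <;>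
    simp [h1, h2, h3, hax, hbx, hcx]
end

section
/- Let X and Y be real random variables with finite positive variance such that X and Y have different distributions and the support of Y contains strictly more than 2 points. Then (X,Y) ∈ IC if and only if (X,Y) ∈ IC_0. -/
open MeasureTheory ProbabilityTheory

variable {Ω : Type*} [MeasurableSpace Ω]

/-- The support of (the distribution of) `Y`: points `x` with
`P(x - ε < Y ≤ x + ε) > 0` for all `ε > 0`. -/
def distSupport (μ : Measure Ω) (Y : Ω → ℝ) : Set ℝ :=
  {x : ℝ | ∀ ε > (0 : ℝ), 0 < μ {ω | x - ε < Y ω ∧ Y ω ≤ x + ε}}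

noncomputable def pr (μ : Measure Ω) (X : Ω → ℝ) (A : Set ℝ) : ℝ := (μ (X ⁻¹' A)).toReal

noncomputable def jpr (μ : Measure Ω) (X Y : Ω → ℝ) (A B : Set ℝ) : ℝ :=
  (μ (X ⁻¹' A ∩ Y ⁻¹' B)).toReal

set_option linter.unusedSectionVars false

lemma integral_cind (μ : Measure Ω) (c : ℝ) {S : Set Ω} (hS : MeasurableSet S) :
    ∫ ω, c * S.indicator (fun _ => (1:ℝ)) ω ∂μ = c * (μ S).toReal := by
  have h : (fun ω => c * S.indicator (fun _ => (1:ℝ)) ω) = S.indicator (fun _ => c) := by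
    funext ω; by_cases h : ω ∈ S <;> simp [Set.indicator_apply, h]
  rw [h, integral_indicator_const c hS, smul_eq_mul, mul_comm]
  rfl

lemma integrable_cind (μ : Measure Ω) [IsFiniteMeasure μ] (c : ℝ) {S : Set Ω}
    (hS : MeasurableSet S) :
    Integrable (fun ω => c * S.indicator (fun _ => (1:ℝ)) ω) μ := by
  have h : (fun ω => c * S.indicator (fun _ => (1:ℝ)) ω) = S.indicator (fun _ => c) := by
    funext ω; by_cases h : ω ∈ S <;> simp [Set.indicator_apply, h]
  rw [h]
  exact (integrable_const c).indicator hS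

lemma cov_eq_sub (μ : Measure Ω) [IsProbabilityMeasure μ] {U V : Ω → ℝ}
    (hU : Integrable U μ) (hV : Integrable V μ)
    (hUV : Integrable (fun ω => U ω * V ω) μ) :
    cov μ U V = (∫ ω, U ω * V ω ∂μ) - (∫ ω, U ω ∂μ) * (∫ ω, V ω ∂μ) := by
  unfold cov
  have h1 : (fun ω => (U ω - ∫ a, U a ∂μ) * (V ω - ∫ a, V a ∂μ))
      = fun ω => U ω * V ω - (∫ a, U a ∂μ) * V ω - (∫ a, V a ∂μ) * U ω
          + (∫ a, U a ∂μ) * (∫ a, V a ∂μ) := by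
    funext ω; ring
  rw [h1]
  rw [integral_add, integral_sub, integral_sub]
  · rw [integral_const_mul, integral_const_mul, integral_const]
    simp
    ring
  · exact hUV
  · exact hV.const_mul _
  · exact (hUV.sub (hV.const_mul _))
  · exact hU.const_mul _
  · exact ((hUV.sub (hV.const_mul _)).sub (hU.const_mul _))
  · exact integrable_const _

section bridge

variable (μ : Measure Ω) [IsProbabilityMeasure μ] (X Y : Ω → ℝ)
  (hXm : Measurable X) (hYm : Measurable Y) {r : ℝ}

/-- Key computation: correlation identity for two-indicator step functions. -/
lemma bridge
    (hXm : Measurable X) (hYm : Measurable Y)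
    (hinv : ∀ g : ℝ → ℝ, Admissible μ X Y g → corr μ (g ∘ X) (g ∘ Y) = r)
    {A B : Set ℝ} (hA : MeasurableSet A) (hB : MeasurableSet B) (hd : Disjoint A B)
    (s t : ℝ)
    (hvx : 0 < s^2 * pr μ X A + t^2 * pr μ X B - (s * pr μ X A + t * pr μ X B)^2)
    (hvy : 0 < s^2 * pr μ Y A + t^2 * pr μ Y B - (s * pr μ Y A + t * pr μ Y B)^2) :
    s^2 * jpr μ X Y A A + s*t*(jpr μ X Y A B + jpr μ X Y B A) + t^2 * jpr μ X Y B B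
      - (s * pr μ X A + t * pr μ X B) * (s * pr μ Y A + t * pr μ Y B)
    = r * Real.sqrt
        ((s^2 * pr μ X A + t^2 * pr μ X B - (s * pr μ X A + t * pr μ X B)^2) *
         (s^2 * pr μ Y A + t^2 * pr μ Y B - (s * pr μ Y A + t * pr μ Y B)^2)) := by
  classical
  set g : ℝ → ℝ := fun x => s * A.indicator (fun _ => (1:ℝ)) x
      + t * B.indicator (fun _ => (1:ℝ)) x with hg
  have hgm : Measurable g := by
    apply Measurable.add <;> exact (measurable_const.indicator ‹_›).const_mul _
  -- generic facts for a measurable map Z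
  have key : ∀ (Z : Ω → ℝ), Measurable Z →
      (∫ ω, g (Z ω) ∂μ = s * pr μ Z A + t * pr μ Z B) ∧
      MemLp (g ∘ Z) 2 μ ∧
      variance (g ∘ Z) μ
        = s^2 * pr μ Z A + t^2 * pr μ Z B - (s * pr μ Z A + t * pr μ Z B)^2 ∧
      Integrable (g ∘ Z) μ := by
    intro Z hZ
    have hgZ : (g ∘ Z) = fun ω => s * (Z ⁻¹' A).indicator (fun _ => (1:ℝ)) ω
        + t * (Z ⁻¹' B).indicator (fun _ => (1:ℝ)) ω := by
      funext ω
      by_cases h1 : Z ω ∈ A <;> by_cases h2 : Z ω ∈ B <;>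
        simp [hg, Set.indicator_apply, h1, h2]
    have hint : Integrable (g ∘ Z) μ := by
      rw [hgZ]
      exact (integrable_cind μ s (hZ hA)).add (integrable_cind μ t (hZ hB))
    have hE : ∫ ω, g (Z ω) ∂μ = s * pr μ Z A + t * pr μ Z B := by
      have : ∫ ω, g (Z ω) ∂μ = ∫ ω, (g ∘ Z) ω ∂μ := rfl
      rw [this, hgZ, integral_add (integrable_cind μ s (hZ hA)) (integrable_cind μ t (hZ hB)),
        integral_cind μ s (hZ hA), integral_cind μ t (hZ hB)]
      rfl
    have hmem : MemLp (g ∘ Z) 2 μ := by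
      refine MemLp.of_bound ((hgm.comp hZ).aestronglyMeasurable) (|s| + |t|) ?_
      filter_upwards with ω
      have h1 : |A.indicator (fun _ => (1:ℝ)) (Z ω)| ≤ 1 := by
        by_cases h : Z ω ∈ A <;> simp [Set.indicator_apply, h]
      have h2 : |B.indicator (fun _ => (1:ℝ)) (Z ω)| ≤ 1 := by
        by_cases h : Z ω ∈ B <;> simp [Set.indicator_apply, h]
      have : ‖g (Z ω)‖ = |g (Z ω)| := rfl
      rw [Function.comp_apply, this, hg]
      calc |s * A.indicator (fun _ => (1:ℝ)) (Z ω) + t * B.indicator (fun _ => (1:ℝ)) (Z ω)|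
          ≤ |s * A.indicator (fun _ => (1:ℝ)) (Z ω)| + |t * B.indicator (fun _ => (1:ℝ)) (Z ω)| :=
            abs_add_le _ _
        _ ≤ |s| * 1 + |t| * 1 := by
            rw [abs_mul, abs_mul]
            gcongr
        _ = |s| + |t| := by ring
    have hsq : ((g ∘ Z) ^ 2) = fun ω => s^2 * (Z ⁻¹' A).indicator (fun _ => (1:ℝ)) ω
        + t^2 * (Z ⁻¹' B).indicator (fun _ => (1:ℝ)) ω := by
      funext ω
      have : ((g ∘ Z) ^ 2) ω = (g (Z ω))^2 := rfl
      rw [this]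
      by_cases h1 : Z ω ∈ A <;> by_cases h2 : Z ω ∈ B
      · exact absurd h2 (Set.disjoint_left.mp hd h1)
      all_goals (simp [hg, Set.indicator_apply, h1, h2]; try ring)
    have hvar : variance (g ∘ Z) μ
        = s^2 * pr μ Z A + t^2 * pr μ Z B - (s * pr μ Z A + t * pr μ Z B)^2 := by
      rw [variance_eq_sub hmem]
      have h2 : ∫ ω, ((g ∘ Z) ^ 2) ω ∂μ = s^2 * pr μ Z A + t^2 * pr μ Z B := by
        rw [hsq, integral_add (integrable_cind μ (s^2) (hZ hA)) (integrable_cind μ (t^2) (hZ hB)),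
          integral_cind _ _ (hZ hA), integral_cind _ _ (hZ hB)]
        rfl
      rw [h2]
      have : ∫ ω, (g ∘ Z) ω ∂μ = s * pr μ Z A + t * pr μ Z B := hE
      rw [this]
    exact ⟨hE, hmem, hvar, hint⟩
  obtain ⟨hEX, hmemX, hvarX, hintX⟩ := key X hXm
  obtain ⟨hEY, hmemY, hvarY, hintY⟩ := key Y hYm
  -- product integral
  have hprod : (fun ω => (g ∘ X) ω * (g ∘ Y) ω) =
      fun ω => s^2 * ((X ⁻¹' A ∩ Y ⁻¹' A).indicator (fun _ => (1:ℝ)) ω)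
        + s*t * ((X ⁻¹' A ∩ Y ⁻¹' B).indicator (fun _ => (1:ℝ)) ω)
        + s*t * ((X ⁻¹' B ∩ Y ⁻¹' A).indicator (fun _ => (1:ℝ)) ω)
        + t^2 * ((X ⁻¹' B ∩ Y ⁻¹' B).indicator (fun _ => (1:ℝ)) ω) := by
    funext ω
    by_cases h1 : X ω ∈ A <;> by_cases h2 : X ω ∈ B <;>
      by_cases h3 : Y ω ∈ A <;> by_cases h4 : Y ω ∈ B <;>
      first
        | exact absurd h2 (Set.disjoint_left.mp hd h1)
        | exact absurd h4 (Set.disjoint_left.mp hd h3)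
        | (simp [hg, Set.indicator_apply, h1, h2, h3, h4]; try ring)
  have hAA : MeasurableSet (X ⁻¹' A ∩ Y ⁻¹' A) := (hXm hA).inter (hYm hA)
  have hAB : MeasurableSet (X ⁻¹' A ∩ Y ⁻¹' B) := (hXm hA).inter (hYm hB)
  have hBA : MeasurableSet (X ⁻¹' B ∩ Y ⁻¹' A) := (hXm hB).inter (hYm hA)
  have hBB : MeasurableSet (X ⁻¹' B ∩ Y ⁻¹' B) := (hXm hB).inter (hYm hB)
  have hintP : Integrable (fun ω => (g ∘ X) ω * (g ∘ Y) ω) μ := by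
    rw [hprod]
    exact (((integrable_cind μ (s^2) hAA).add (integrable_cind μ (s*t) hAB)).add
      (integrable_cind μ (s*t) hBA)).add (integrable_cind μ (t^2) hBB)
  have hEP : ∫ ω, (g ∘ X) ω * (g ∘ Y) ω ∂μ
      = s^2 * jpr μ X Y A A + s*t*(jpr μ X Y A B + jpr μ X Y B A) + t^2 * jpr μ X Y B B := by
    rw [hprod]
    rw [integral_add, integral_add, integral_add]
    · rw [integral_cind _ _ hAA, integral_cind _ _ hAB, integral_cind _ _ hBA,
        integral_cind _ _ hBB]
      unfold jpr
      ring
    · exact integrable_cind μ (s^2) hAA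
    · exact integrable_cind μ (s*t) hAB
    · exact (integrable_cind μ (s^2) hAA).add (integrable_cind μ (s*t) hAB)
    · exact integrable_cind μ (s*t) hBA
    · exact ((integrable_cind μ (s^2) hAA).add (integrable_cind μ (s*t) hAB)).add
        (integrable_cind μ (s*t) hBA)
    · exact integrable_cind μ (t^2) hBB
  -- covariance
  have hcov : cov μ (g ∘ X) (g ∘ Y)
      = s^2 * jpr μ X Y A A + s*t*(jpr μ X Y A B + jpr μ X Y B A) + t^2 * jpr μ X Y B B
        - (s * pr μ X A + t * pr μ X B) * (s * pr μ Y A + t * pr μ Y B) := by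
    rw [cov_eq_sub μ hintX hintY hintP, hEP]
    have h1 : ∫ ω, (g ∘ X) ω ∂μ = s * pr μ X A + t * pr μ X B := hEX
    have h2 : ∫ ω, (g ∘ Y) ω ∂μ = s * pr μ Y A + t * pr μ Y B := hEY
    rw [h1, h2]
  -- admissibility and conclusion
  have hadm : Admissible μ X Y g := ⟨hgm, hmemX, hmemY, by rw [hvarX]; exact hvx,
    by rw [hvarY]; exact hvy⟩
  have hc := hinv g hadm
  unfold corr at hc
  rw [hcov, hvarX, hvarY] at hc
  have hpos : 0 < Real.sqrt
      ((s^2 * pr μ X A + t^2 * pr μ X B - (s * pr μ X A + t * pr μ X B)^2) *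
       (s^2 * pr μ Y A + t^2 * pr μ Y B - (s * pr μ Y A + t * pr μ Y B)^2)) :=
    Real.sqrt_pos.mpr (mul_pos hvx hvy)
  exact (div_eq_iff (ne_of_gt hpos)).mp hc

end bridge

lemma quartic_zero (c0 c1 c2 c3 c4 : ℝ)
    (h0 : c0 = 0)
    (hp1 : c0 + c1 + c2 + c3 + c4 = 0) (hm1 : c0 - c1 + c2 - c3 + c4 = 0)
    (hp2 : c0 + 2*c1 + 4*c2 + 8*c3 + 16*c4 = 0)
    (hm2 : c0 - 2*c1 + 4*c2 - 8*c3 + 16*c4 = 0) :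
    c1 = 0 ∧ c2 = 0 ∧ c3 = 0 ∧ c4 = 0 :=
  ⟨by linarith, by linarith, by linarith, by linarith⟩

lemma L3core (a1 a2 a3 b1 b2 b3 u v w r α β : ℝ)
    (ha1 : 0 < a1) (ha2 : 0 < a2) (ha3 : a3 ≠ 0)
    (hb1 : 0 < b1) (hb2 : 0 < b2)
    (hbb : b3^2 < b1*b2) (hr : r ≠ 0)
    (hα : 0 ≤ α) (hα2 : α^2 = a1*b1) (hβ : 0 ≤ β) (hβ2 : β^2 = a2*b2)
    (hu : u = r*α) (hw : w = r*β)
    (h1 : u*v = r^2*(a1*b3 + a3*b1))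
    (h3 : v*w = r^2*(a2*b3 + a3*b2))
    (h2 : v^2 + 2*(u*w) = r^2*(a1*b2 + a2*b1 + 4*(a3*b3))) :
    a1*b3 = a3*b1 ∧ a2*b3 = a3*b2 := by
  have s1 : α*v = r*(a1*b3+a3*b1) := by
    apply mul_left_cancel₀ hr
    linear_combination h1 - v*hu
  have s2 : β*v = r*(a2*b3+a3*b2) := by
    apply mul_left_cancel₀ hr
    linear_combination h3 - v*hw
  have s3 : β*(a1*b3+a3*b1) = α*(a2*b3+a3*b2) := by
    apply mul_left_cancel₀ hr
    linear_combination α*s2 - β*s1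
  have s4 : (a1*b3+a3*b1)^2 + 2*α^3*β = α^2*(a1*b2+a2*b1+4*(a3*b3)) := by
    apply mul_left_cancel₀ (pow_ne_zero 2 hr)
    linear_combination α^2*h2 - (α*v + r*(a1*b3+a3*b1))*s1 - 2*α^2*w*hu - 2*α^3*r*hw
  by_cases hcase : α*b2 = β*b1
  · -- proportional case
    have hsq : (α*b2)^2 = (β*b1)^2 := by rw [hcase]
    have e1 : a1*b2 = a2*b1 := by
      apply mul_right_cancel₀ (ne_of_gt (mul_pos hb1 hb2))
      linear_combination hsq - b2^2*hα2 + b1^2*hβ2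
    have e2 : α*β = a1*b2 := by
      apply mul_right_cancel₀ (ne_of_gt hb1)
      linear_combination (-α)*hcase + b2*hα2
    have s4' : (a1*b3+a3*b1)^2 + 2*(a1*b1)*(a1*b2)
        = (a1*b1)*(a1*b2+a2*b1+4*(a3*b3)) := by
      linear_combination s4 - 2*α^2*e2 + (a2*b1+4*(a3*b3) - a1*b2)*hα2
    have δ0 : (a1*b3 - a3*b1)^2 = 0 := by linear_combination s4' - a1*b1*e1
    have δ : a1*b3 = a3*b1 := by
      have := sq_eq_zero_iff.mp δ0
      linarith
    refine ⟨δ, ?_⟩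
    apply mul_left_cancel₀ (ne_of_gt hb1)
    linear_combination (-b3)*e1 + b2*δ
  · -- the other case
    have s3' : (α*b2 - β*b1)*(b3*(α*β) - a3*(b1*b2)) = 0 := by
      linear_combination (b1*b2)*s3 + (b3*β*b2)*hα2 - (b3*α*b1)*hβ2
    have hc2 : b3*(α*β) = a3*(b1*b2) := by
      rcases mul_eq_zero.mp s3' with h | h
      · exact absurd (by linarith : α*b2 = β*b1) hcase
      · linarith
    have star : a1*a2*b3^2 = a3^2*(b1*b2) := by
      apply mul_right_cancel₀ (ne_of_gt (mul_pos hb1 hb2))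
      linear_combination (b3*(α*β) + a3*(b1*b2))*hc2 - b3^2*β^2*hα2 - b3^2*a1*b1*hβ2
    have E : b3*(a1*b3+a3*b1)^2 + 2*a1*b1*(a3*(b1*b2))
        = a1*b1*b3*(a1*b2+a2*b1+4*(a3*b3)) := by
      linear_combination b3*s4 - 2*α^2*hc2 - 2*a3*b1*b2*hα2 + b3*(a1*b2+a2*b1+4*(a3*b3))*hα2
    have key : (b1*b2 - b3^2)*(a1*b3 - a3*b1)^2 = 0 := by
      linear_combination (-b3)*E - b1^2*star
    have δ0 : (a1*b3 - a3*b1)^2 = 0 := by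
      rcases mul_eq_zero.mp key with h | h
      · exact absurd h (by nlinarith)
      · exact h
    have δ : a1*b3 = a3*b1 := by
      have := sq_eq_zero_iff.mp δ0
      linarith
    refine ⟨δ, ?_⟩
    apply mul_left_cancel₀ (mul_ne_zero ha3 (ne_of_gt hb1))
    linear_combination (-(a2*b3))*δ + star

lemma L2core (a2 b1 b2 b3 v w r : ℝ) (ha2 : 0 < a2) (hb1 : 0 < b1) (hb2 : 0 < b2)
    (hbb : b3^2 < b1*b2) (hr : r ≠ 0)
    (e0 : v^2 = r^2*(a2*b1)) (eC : v*w = r^2*(a2*b3)) (e2 : w^2 = r^2*(a2*b2)) :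
    False := by
  have key : r^4 * a2^2 * (b1*b2 - b3^2) = 0 := by
    linear_combination -w^2*e0 - r^2*a2*b1*e2 + (v*w + r^2*a2*b3)*eC
  have hr4 : 0 < r^4*a2^2 := by positivity
  nlinarith

lemma pairRel (p P q Q u v w r : ℝ)
    (hp : 0 < p) (hp1 : p < 1) (hP : 0 < P) (hP1 : P < 1)
    (hq : 0 < q) (hq1 : q < 1) (hQ : 0 < Q) (hQ1 : Q < 1) (hqQ : q + Q < 1)
    (hr : r ≠ 0)
    (hu : u = r*Real.sqrt ((p*(1-p))*(q*(1-q))))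
    (hw : w = r*Real.sqrt ((P*(1-P))*(Q*(1-Q))))
    (hqt : ∀ t : ℝ, (u + v*t + w*t^2)^2
      = r^2*(((p*(1-p)) + 2*(-(p*P))*t + (P*(1-P))*t^2)
           * ((q*(1-q)) + 2*(-(q*Q))*t + (Q*(1-Q))*t^2))) :
    q + Q = p + P := by
  set a1 := p*(1-p) with ha1def
  set a2 := P*(1-P) with ha2def
  set a3 := -(p*P) with ha3def
  set b1 := q*(1-q) with hb1def
  set b2 := Q*(1-Q) with hb2def
  set b3 := -(q*Q) with hb3def
  have ha1 : 0 < a1 := by rw [ha1def]; nlinarith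
  have ha2 : 0 < a2 := by rw [ha2def]; nlinarith
  have hb1 : 0 < b1 := by rw [hb1def]; nlinarith
  have hb2 : 0 < b2 := by rw [hb2def]; nlinarith
  have ha3 : a3 ≠ 0 := by rw [ha3def]; nlinarith
  have hbb : b3^2 < b1*b2 := by
    rw [hb3def, hb1def, hb2def]
    nlinarith [mul_pos hq hQ]
  set α := Real.sqrt (a1*b1) with hαdef
  set β := Real.sqrt (a2*b2) with hβdef
  have hα : 0 ≤ α := Real.sqrt_nonneg _
  have hβ : 0 ≤ β := Real.sqrt_nonneg _
  have hα2 : α^2 = a1*b1 := Real.sq_sqrt (by positivity)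
  have hβ2 : β^2 = a2*b2 := Real.sq_sqrt (by positivity)
  -- collect coefficient equations
  set c0 := u^2 - r^2*(a1*b1) with hc0
  set c1 := 2*(u*v) - r^2*(2*(a1*b3) + 2*(a3*b1)) with hc1
  set c2 := v^2 + 2*(u*w) - r^2*(a1*b2 + a2*b1 + 4*(a3*b3)) with hc2
  set c3 := 2*(v*w) - r^2*(2*(a2*b3) + 2*(a3*b2)) with hc3
  set c4 := w^2 - r^2*(a2*b2) with hc4
  have h0' : c0 = 0 := by
    have := hqt 0
    rw [hc0]
    linear_combination this
  have hp1' : c0 + c1 + c2 + c3 + c4 = 0 := by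
    have := hqt 1
    rw [hc0, hc1, hc2, hc3, hc4]
    linear_combination this
  have hm1' : c0 - c1 + c2 - c3 + c4 = 0 := by
    have := hqt (-1)
    rw [hc0, hc1, hc2, hc3, hc4]
    linear_combination this
  have hp2' : c0 + 2*c1 + 4*c2 + 8*c3 + 16*c4 = 0 := by
    have := hqt 2
    rw [hc0, hc1, hc2, hc3, hc4]
    linear_combination this
  have hm2' : c0 - 2*c1 + 4*c2 - 8*c3 + 16*c4 = 0 := by
    have := hqt (-2)
    rw [hc0, hc1, hc2, hc3, hc4]
    linear_combination this
  obtain ⟨z1, z2, z3, z4⟩ := quartic_zero c0 c1 c2 c3 c4 h0' hp1' hm1' hp2' hm2'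
  have h1 : u*v = r^2*(a1*b3 + a3*b1) := by rw [hc1] at z1; linarith
  have h3 : v*w = r^2*(a2*b3 + a3*b2) := by rw [hc3] at z3; linarith
  have h2 : v^2 + 2*(u*w) = r^2*(a1*b2 + a2*b1 + 4*(a3*b3)) := by rw [hc2] at z2; linarith
  obtain ⟨δ, ε⟩ := L3core a1 a2 a3 b1 b2 b3 u v w r α β ha1 ha2 ha3 hb1 hb2 hbb hr
    hα hα2 hβ hβ2 hu hw h1 h3 h2
  have e1 : (1-p)*Q = P*(1-q) := by
    apply mul_left_cancel₀ (ne_of_gt (mul_pos hp hq))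
    rw [ha1def, ha3def, hb1def, hb3def] at δ
    linear_combination -δ
  have e2 : (1-P)*q = p*(1-Q) := by
    apply mul_left_cancel₀ (ne_of_gt (mul_pos hP hQ))
    rw [ha2def, ha3def, hb2def, hb3def] at ε
    linear_combination -ε
  linear_combination e1 + e2

lemma pairZero (P q Q v w r : ℝ)
    (hP : 0 < P) (hP1 : P < 1)
    (hq : 0 < q) (hq1 : q < 1) (hQ : 0 < Q) (hQ1 : Q < 1) (hqQ : q + Q < 1)
    (hr : r ≠ 0)
    (hqt : ∀ t : ℝ, t ≠ 0 → (v*t + w*t^2)^2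
      = r^2*(((P*(1-P))*t^2) * ((q*(1-q)) + 2*(-(q*Q))*t + (Q*(1-Q))*t^2))) :
    False := by
  have D : ∀ t : ℝ, t ≠ 0 →
      (v + w*t)^2 - r^2*((P*(1-P))*((q*(1-q)) + 2*(-(q*Q))*t + (Q*(1-Q))*t^2)) = 0 := by
    intro t ht
    have h := hqt t ht
    have ht2 : (t^2 : ℝ) ≠ 0 := pow_ne_zero 2 ht
    apply mul_left_cancel₀ ht2
    linear_combination h
  have d1 := D 1 one_ne_zero
  have dm1 := D (-1) (by norm_num)
  have d2 := D 2 two_ne_zero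
  set e0 := v^2 - r^2*((P*(1-P))*(q*(1-q))) with he0
  set e1 := 2*(v*w) - r^2*((P*(1-P))*(2*(-(q*Q)))) with he1
  set e2 := w^2 - r^2*((P*(1-P))*(Q*(1-Q))) with he2
  have k1 : e0 + e1 + e2 = 0 := by rw [he0, he1, he2]; linear_combination d1
  have k2 : e0 - e1 + e2 = 0 := by rw [he0, he1, he2]; linear_combination dm1
  have k3 : e0 + 2*e1 + 4*e2 = 0 := by rw [he0, he1, he2]; linear_combination d2
  have z0 : e0 = 0 := by linarith
  have z1 : e1 = 0 := by linarith
  have z2 : e2 = 0 := by linarith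
  rw [he0] at z0; rw [he1] at z1; rw [he2] at z2
  refine L2core (P*(1-P)) (q*(1-q)) (Q*(1-Q)) (-(q*Q)) v w r (by nlinarith) (by nlinarith)
    (by nlinarith) (by nlinarith [mul_pos hq hQ]) hr (by linarith) (by linarith) (by linarith)

section prob

variable {μ : Measure Ω} [IsProbabilityMeasure μ] {X Y : Ω → ℝ} {r : ℝ}

lemma sq_of_sqrt_eq {z R c : ℝ} (h : c = R * Real.sqrt z) (hz : 0 ≤ z) :
    c^2 = R^2 * z := by rw [h, mul_pow, Real.sq_sqrt hz]

lemma pr_nonneg (A : Set ℝ) : 0 ≤ pr μ X A := ENNReal.toReal_nonneg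

lemma pr_le_one (A : Set ℝ) : pr μ X A ≤ 1 := by
  unfold pr
  rw [show (1:ℝ) = (1 : ENNReal).toReal by simp]
  exact ENNReal.toReal_mono ENNReal.one_ne_top prob_le_one

lemma pr_union (hXm : Measurable X) {A B : Set ℝ} (hB : MeasurableSet B)
    (hd : Disjoint A B) : pr μ X (A ∪ B) = pr μ X A + pr μ X B := by
  unfold pr
  rw [Set.preimage_union, measure_union (hd.preimage X) (hXm hB),
    ENNReal.toReal_add (measure_ne_top μ _) (measure_ne_top μ _)]

lemma pr_add_le_one (hXm : Measurable X) {A B : Set ℝ} (hB : MeasurableSet B)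
    (hd : Disjoint A B) : pr μ X A + pr μ X B ≤ 1 := by
  rw [← pr_union hXm hB hd]; exact pr_le_one _

lemma pr_mono {A B : Set ℝ} (h : A ⊆ B) : pr μ X A ≤ pr μ X B :=
  ENNReal.toReal_mono (measure_ne_top μ _) (measure_mono (Set.preimage_mono h))

lemma jpr_nonneg (A B : Set ℝ) : 0 ≤ jpr μ X Y A B := ENNReal.toReal_nonneg

lemma jpr_le_left (A B : Set ℝ) : jpr μ X Y A B ≤ pr μ X A :=
  ENNReal.toReal_mono (measure_ne_top μ _) (measure_mono Set.inter_subset_left)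

lemma jpr_le_right (A B : Set ℝ) : jpr μ X Y A B ≤ pr μ Y B :=
  ENNReal.toReal_mono (measure_ne_top μ _) (measure_mono Set.inter_subset_right)

lemma pr_eq_zero_iff {A : Set ℝ} : pr μ X A = 0 ↔ μ (X ⁻¹' A) = 0 := by
  unfold pr
  rw [ENNReal.toReal_eq_zero_iff]
  exact ⟨fun h => h.resolve_right (measure_ne_top μ _), Or.inl⟩

lemma pr_pos_iff {A : Set ℝ} : 0 < pr μ X A ↔ μ (X ⁻¹' A) ≠ 0 := by
  constructor
  · intro h hc
    rw [pr_eq_zero_iff.mpr hc] at h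
    exact lt_irrefl _ h
  · intro h
    rcases lt_or_eq_of_le (pr_nonneg (μ := μ) (X := X) A) with h' | h'
    · exact h'
    · exact absurd (pr_eq_zero_iff.mp h'.symm) h

lemma quad_pos {p P : ℝ} (hp : 0 < p) (hP : 0 < P) (hpP : p + P < 1) (t : ℝ) :
    0 < 1^2*p + t^2*P - (1*p + t*P)^2 := by
  have h1 : 0 < 1 - p - P := by linarith
  have h2 : 0 < P * (1 - P) := by nlinarith
  nlinarith [sq_nonneg ((1-P)*(t*P) - p*P), mul_pos (mul_pos hp hP) h1, sq_nonneg (t*P)]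

lemma corr_comm (ν : Measure Ω) (U V : Ω → ℝ) : corr ν U V = corr ν V U := by
  unfold corr cov
  rw [mul_comm (variance U ν)]
  congr 1
  exact integral_congr_ae (Filter.Eventually.of_forall fun ω => mul_comm _ _)

lemma inv_symm (hinv : ∀ g : ℝ → ℝ, Admissible μ X Y g → corr μ (g ∘ X) (g ∘ Y) = r) :
    ∀ g : ℝ → ℝ, Admissible μ Y X g → corr μ (g ∘ Y) (g ∘ X) = r := by
  intro g ⟨hg, h1, h2, v1, v2⟩
  rw [corr_comm]
  exact hinv g ⟨hg, h2, h1, v2, v1⟩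

/-- The balance relation for a nondegenerate disjoint pair. -/
lemma pair_balance (hXm : Measurable X) (hYm : Measurable Y)
    (hinv : ∀ g : ℝ → ℝ, Admissible μ X Y g → corr μ (g ∘ X) (g ∘ Y) = r)
    (hr : r ≠ 0) {A B : Set ℝ} (hA : MeasurableSet A) (hB : MeasurableSet B)
    (hd : Disjoint A B)
    (hp : 0 < pr μ X A) (hP : 0 < pr μ X B) (hpP : pr μ X A + pr μ X B < 1)
    (hq : 0 < pr μ Y A) (hQ : 0 < pr μ Y B) (hqQ : pr μ Y A + pr μ Y B < 1) :
    pr μ Y A + pr μ Y B = pr μ X A + pr μ X B := by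
  set p := pr μ X A
  set P := pr μ X B
  set q := pr μ Y A
  set Q := pr μ Y B
  have hp1 : p < 1 := by linarith
  have hP1 : P < 1 := by linarith
  have hq1 : q < 1 := by linarith
  have hQ1 : Q < 1 := by linarith
  have hvx : ∀ t : ℝ, 0 < 1^2*p + t^2*P - (1*p + t*P)^2 := quad_pos hp hP hpP
  have hvy : ∀ t : ℝ, 0 < 1^2*q + t^2*Q - (1*q + t*Q)^2 := quad_pos hq hQ hqQ
  set jAA := jpr μ X Y A A
  set jAB := jpr μ X Y A B
  set jBA := jpr μ X Y B A
  set jBB := jpr μ X Y B B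
  -- single-set equations
  have E0 := bridge μ X Y hXm hYm hinv hA hB hd 1 0 (hvx 0) (hvy 0)
  have EB := bridge μ X Y hXm hYm hinv hA hB hd 0 1 (by norm_num; nlinarith) (by norm_num; nlinarith)
  have hu : jAA - p*q = r*Real.sqrt ((p*(1-p))*(q*(1-q))) := by
    have harg : (1^2*p + 0^2*P - (1*p + 0*P)^2) * (1^2*q + 0^2*Q - (1*q + 0*Q)^2)
        = (p*(1-p))*(q*(1-q)) := by ring
    rw [harg] at E0
    linear_combination E0
  have hw : jBB - P*Q = r*Real.sqrt ((P*(1-P))*(Q*(1-Q))) := by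
    have harg : (0^2*p + 1^2*P - (0*p + 1*P)^2) * (0^2*q + 1^2*Q - (0*q + 1*Q)^2)
        = (P*(1-P))*(Q*(1-Q)) := by ring
    rw [harg] at EB
    linear_combination EB
  have hqt : ∀ t : ℝ, ((jAA - p*q) + (jAB + jBA - p*Q - P*q)*t + (jBB - P*Q)*t^2)^2
      = r^2*(((p*(1-p)) + 2*(-(p*P))*t + (P*(1-P))*t^2)
           * ((q*(1-q)) + 2*(-(q*Q))*t + (Q*(1-Q))*t^2)) := by
    intro t
    have Et := bridge μ X Y hXm hYm hinv hA hB hd 1 t (hvx t) (hvy t)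
    have hz : 0 ≤ (1^2*p + t^2*P - (1*p + t*P)^2) * (1^2*q + t^2*Q - (1*q + t*Q)^2) :=
      le_of_lt (mul_pos (hvx t) (hvy t))
    have Esq := sq_of_sqrt_eq Et hz
    linear_combination Esq
  exact (pairRel p P q Q (jAA - p*q) (jAB + jBA - p*Q - P*q) (jBB - P*Q) r
    hp hp1 hP hP1 hq hq1 hQ hQ1 hqQ hr hu hw hqt)

/-- Impossible configuration: `P(X ∈ A) = 0` but both `Y`-masses nondegenerate and
`P(X ∈ B)` nondegenerate. -/
lemma pair_zero_contra (hXm : Measurable X) (hYm : Measurable Y)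
    (hinv : ∀ g : ℝ → ℝ, Admissible μ X Y g → corr μ (g ∘ X) (g ∘ Y) = r)
    (hr : r ≠ 0) {A B : Set ℝ} (hA : MeasurableSet A) (hB : MeasurableSet B)
    (hd : Disjoint A B)
    (hp0 : pr μ X A = 0) (hP : 0 < pr μ X B) (hP1 : pr μ X B < 1)
    (hq : 0 < pr μ Y A) (hQ : 0 < pr μ Y B) (hqQ : pr μ Y A + pr μ Y B < 1) :
    False := by
  have hq1 : pr μ Y A < 1 := by linarith
  have hQ1 : pr μ Y B < 1 := by linarith
  have hjAA : jpr μ X Y A A = 0 := by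
    have h1 : jpr μ X Y A A ≤ pr μ X A := jpr_le_left A A
    have h2 : (0:ℝ) ≤ jpr μ X Y A A := jpr_nonneg A A
    linarith
  have hjAB : jpr μ X Y A B = 0 := by
    have h1 : jpr μ X Y A B ≤ pr μ X A := jpr_le_left A B
    have h2 : (0:ℝ) ≤ jpr μ X Y A B := jpr_nonneg A B
    linarith
  refine pairZero (pr μ X B) (pr μ Y A) (pr μ Y B)
    (jpr μ X Y B A - pr μ X B * pr μ Y A) (jpr μ X Y B B - pr μ X B * pr μ Y B) r
    hP hP1 hq hq1 hQ hQ1 hqQ hr ?_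
  intro t ht
  have ht2 : (0:ℝ) < t^2 := by positivity
  have hvx : 0 < 1^2*pr μ X A + t^2*pr μ X B - (1*pr μ X A + t*pr μ X B)^2 := by
    rw [hp0]
    nlinarith [mul_pos (mul_pos ht2 hP) (show (0:ℝ) < 1 - pr μ X B by linarith)]
  have hvy : 0 < 1^2*pr μ Y A + t^2*pr μ Y B - (1*pr μ Y A + t*pr μ Y B)^2 :=
    quad_pos hq hQ hqQ t
  have Et := bridge μ X Y hXm hYm hinv hA hB hd 1 t hvx hvy
  have hz : 0 ≤ (1^2*pr μ X A + t^2*pr μ X B - (1*pr μ X A + t*pr μ X B)^2)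
      * (1^2*pr μ Y A + t^2*pr μ Y B - (1*pr μ Y A + t*pr μ Y B)^2) :=
    le_of_lt (mul_pos hvx hvy)
  have Esq := sq_of_sqrt_eq Et hz
  rw [hjAA, hjAB, hp0] at Esq
  linear_combination Esq

/-- Impossible configuration: disjoint supports of mass. -/
lemma pair_split_contra (hXm : Measurable X) (hYm : Measurable Y)
    (hinv : ∀ g : ℝ → ℝ, Admissible μ X Y g → corr μ (g ∘ X) (g ∘ Y) = r)
    (hr : r ≠ 0) {A B : Set ℝ} (hA : MeasurableSet A) (hB : MeasurableSet B)
    (hd : Disjoint A B)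
    (hp : 0 < pr μ X A) (hp1 : pr μ X A < 1) (hP0 : pr μ X B = 0)
    (hq0 : pr μ Y A = 0) (hQ : 0 < pr μ Y B) (hQ1 : pr μ Y B < 1) :
    False := by
  have hjAA : jpr μ X Y A A = 0 := by
    have h1 : jpr μ X Y A A ≤ pr μ Y A := jpr_le_right A A
    have h2 : (0:ℝ) ≤ jpr μ X Y A A := jpr_nonneg A A
    linarith
  have hjBA : jpr μ X Y B A = 0 := by
    have h1 : jpr μ X Y B A ≤ pr μ X B := jpr_le_left B A
    have h2 : (0:ℝ) ≤ jpr μ X Y B A := jpr_nonneg B A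
    linarith
  have hjBB : jpr μ X Y B B = 0 := by
    have h1 : jpr μ X Y B B ≤ pr μ X B := jpr_le_left B B
    have h2 : (0:ℝ) ≤ jpr μ X Y B B := jpr_nonneg B B
    linarith
  have hvx1 : 0 < 1^2*pr μ X A + 1^2*pr μ X B - (1*pr μ X A + 1*pr μ X B)^2 := by
    rw [hP0]; nlinarith
  have hvxm : 0 < 1^2*pr μ X A + (-1:ℝ)^2*pr μ X B - (1*pr μ X A + (-1)*pr μ X B)^2 := by
    rw [hP0]; nlinarith
  have hvy1 : 0 < 1^2*pr μ Y A + 1^2*pr μ Y B - (1*pr μ Y A + 1*pr μ Y B)^2 := by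
    rw [hq0]; nlinarith
  have hvym : 0 < 1^2*pr μ Y A + (-1:ℝ)^2*pr μ Y B - (1*pr μ Y A + (-1)*pr μ Y B)^2 := by
    rw [hq0]; nlinarith
  have E1 := bridge μ X Y hXm hYm hinv hA hB hd 1 1 hvx1 hvy1
  have E2 := bridge μ X Y hXm hYm hinv hA hB hd 1 (-1) hvxm hvym
  rw [hjAA, hjBA, hjBB, hP0, hq0] at E1 E2
  have harg1 : (1^2*pr μ X A + 1^2*0 - (1*pr μ X A + 1*0)^2)
      * (1^2*0 + 1^2*pr μ Y B - (1*0 + 1*pr μ Y B)^2)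
      = (pr μ X A*(1-pr μ X A))*(pr μ Y B*(1-pr μ Y B)) := by ring
  have harg2 : (1^2*pr μ X A + (-1:ℝ)^2*0 - (1*pr μ X A + (-1)*0)^2)
      * (1^2*0 + (-1:ℝ)^2*pr μ Y B - (1*0 + (-1)*pr μ Y B)^2)
      = (pr μ X A*(1-pr μ X A))*(pr μ Y B*(1-pr μ Y B)) := by ring
  rw [harg1] at E1
  rw [harg2] at E2
  have hpos : 0 < Real.sqrt ((pr μ X A*(1-pr μ X A))*(pr μ Y B*(1-pr μ Y B))) := by
    apply Real.sqrt_pos.mpr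
    exact mul_pos (mul_pos hp (by linarith)) (mul_pos hQ (by linarith))
  have hzero : r * Real.sqrt ((pr μ X A*(1-pr μ X A))*(pr μ Y B*(1-pr μ Y B))) = 0 := by
    linarith [E1, E2]
  rcases mul_eq_zero.mp hzero with h | h
  · exact hr h
  · linarith

end prob

section cut

variable {μ : Measure Ω} [IsProbabilityMeasure μ] {X : Ω → ℝ}

lemma exists_cut (hXm : Measurable X) (hX2 : MemLp X 2 μ) (hv : 0 < variance X μ) :
    ∃ s : ℝ, 0 < pr μ X (Set.Iic s) ∧ pr μ X (Set.Iic s) < 1 := by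
  by_contra hcon
  push_neg at hcon
  have hdich : ∀ s : ℝ, pr μ X (Set.Iic s) = 0 ∨ pr μ X (Set.Iic s) = 1 := by
    intro s
    rcases (pr_nonneg (μ := μ) (X := X) (Set.Iic s)).lt_or_eq with h | h
    · right
      exact le_antisymm (pr_le_one _) (hcon s h)
    · exact Or.inl h.symm
  -- ∃ n : ℕ with mass one below n
  have hex1 : ∃ n : ℕ, pr μ X (Set.Iic (n:ℝ)) = 1 := by
    by_contra hno
    push_neg at hno
    have hall : ∀ n : ℕ, μ (X ⁻¹' Set.Iic (n:ℝ)) = 0 := fun n =>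
      pr_eq_zero_iff.mp ((hdich n).resolve_right (hno n))
    have hmono : Monotone (fun n : ℕ => X ⁻¹' Set.Iic (n:ℝ)) := by
      intro a b hab
      exact Set.preimage_mono (Set.Iic_subset_Iic.mpr (by exact_mod_cast hab))
    have htend := tendsto_measure_iUnion_atTop (μ := μ) hmono
    have hUn : ⋃ n : ℕ, X ⁻¹' Set.Iic (n:ℝ) = Set.univ := by
      ext ω
      simp only [Set.mem_iUnion, Set.mem_preimage, Set.mem_Iic, Set.mem_univ, iff_true]
      exact exists_nat_ge (X ω)
    rw [hUn, measure_univ] at htend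
    have : Filter.Tendsto (fun _ : ℕ => (0:ENNReal)) Filter.atTop (nhds 1) := by
      have heq : (⇑μ ∘ fun n : ℕ => X ⁻¹' Set.Iic (n:ℝ)) = fun _ : ℕ => (0:ENNReal) := by
        funext n; exact hall n
      rwa [heq] at htend
    exact zero_ne_one (tendsto_nhds_unique tendsto_const_nhds this)
  -- ∃ m : ℕ with no mass below -m
  have hex0 : ∃ m : ℕ, pr μ X (Set.Iic (-(m:ℝ))) = 0 := by
    by_contra hno
    push_neg at hno
    have hall : ∀ m : ℕ, μ (X ⁻¹' Set.Iic (-(m:ℝ))) = 1 := by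
      intro m
      have h1 : pr μ X (Set.Iic (-(m:ℝ))) = 1 := (hdich _).resolve_left (hno m)
      unfold pr at h1
      have := ENNReal.toReal_eq_one_iff _ |>.mp h1
      exact this
    have hanti : Antitone (fun m : ℕ => X ⁻¹' Set.Iic (-(m:ℝ))) := by
      intro a b hab
      exact Set.preimage_mono (Set.Iic_subset_Iic.mpr (by exact_mod_cast neg_le_neg (by exact_mod_cast hab)))
    have htend := tendsto_measure_iInter_atTop (μ := μ)
      (fun m => (hXm measurableSet_Iic).nullMeasurableSet) hanti ⟨0, measure_ne_top μ _⟩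
    have hInt : ⋂ m : ℕ, X ⁻¹' Set.Iic (-(m:ℝ)) = ∅ := by
      ext ω
      simp only [Set.mem_iInter, Set.mem_preimage, Set.mem_Iic, Set.mem_empty_iff_false,
        iff_false, not_forall, not_le]
      obtain ⟨m, hm⟩ := exists_nat_gt (-(X ω))
      exact ⟨m, by linarith⟩
    rw [hInt, measure_empty] at htend
    have : Filter.Tendsto (fun _ : ℕ => (1:ENNReal)) Filter.atTop (nhds 0) := by
      have heq : (⇑μ ∘ fun m : ℕ => X ⁻¹' Set.Iic (-(m:ℝ))) = fun _ : ℕ => (1:ENNReal) := by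
        funext m; exact hall m
      rwa [heq] at htend
    exact one_ne_zero (tendsto_nhds_unique tendsto_const_nhds this)
  obtain ⟨n, hn⟩ := hex1
  obtain ⟨m, hm⟩ := hex0
  set Sset : Set ℝ := {s : ℝ | pr μ X (Set.Iic s) = 1} with hSdef
  have hne : Sset.Nonempty := ⟨(n:ℝ), hn⟩
  have hbdd : BddBelow Sset := by
    refine ⟨-(m:ℝ), fun s hs => ?_⟩
    by_contra hlt
    push_neg at hlt
    have : pr μ X (Set.Iic s) ≤ pr μ X (Set.Iic (-(m:ℝ))) :=
      pr_mono (Set.Iic_subset_Iic.mpr (le_of_lt hlt))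
    rw [hs, hm] at this
    linarith
  set c := sInf Sset with hcdef
  -- mass above c+ε is zero for every ε>0 (via membership of some s < c+ε)
  have hup : ∀ n : ℕ, μ (X ⁻¹' Set.Iic (c + 1/((n:ℝ)+1)))ᶜ = 0 := by
    intro k
    have hlt : sInf Sset < c + 1/((k:ℝ)+1) := by
      rw [← hcdef]
      have : (0:ℝ) < 1/((k:ℝ)+1) := by positivity
      linarith
    obtain ⟨s, hsS, hs⟩ := (csInf_lt_iff hbdd hne).mp hlt
    have h1 : pr μ X (Set.Iic (c + 1/((k:ℝ)+1))) = 1 := by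
      have hle : pr μ X (Set.Iic s) ≤ pr μ X (Set.Iic (c + 1/((k:ℝ)+1))) :=
        pr_mono (Set.Iic_subset_Iic.mpr (le_of_lt hs))
      have hle1 := pr_le_one (μ := μ) (X := X) (Set.Iic (c + 1/((k:ℝ)+1)))
      rw [hsS] at hle
      linarith
    have h1' : μ (X ⁻¹' Set.Iic (c + 1/((k:ℝ)+1))) = 1 := by
      unfold pr at h1
      exact (ENNReal.toReal_eq_one_iff _).mp h1
    rw [measure_compl (hXm measurableSet_Iic) (measure_ne_top μ _), h1', measure_univ]
    simp
  have hIicc : μ (X ⁻¹' Set.Iic c)ᶜ = 0 := by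
    have hsub : (X ⁻¹' Set.Iic c)ᶜ ⊆ ⋃ k : ℕ, (X ⁻¹' Set.Iic (c + 1/((k:ℝ)+1)))ᶜ := by
      intro ω hω
      simp only [Set.mem_compl_iff, Set.mem_preimage, Set.mem_Iic, not_le] at hω
      obtain ⟨k, hk⟩ := exists_nat_one_div_lt (show (0:ℝ) < X ω - c by linarith)
      simp only [Set.mem_iUnion, Set.mem_compl_iff, Set.mem_preimage, Set.mem_Iic, not_le]
      exact ⟨k, by linarith⟩
    exact measure_mono_null hsub (measure_iUnion_null hup)
  have hlow : μ (X ⁻¹' Set.Iio c) = 0 := by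
    have hsub : X ⁻¹' Set.Iio c ⊆ ⋃ k : ℕ, X ⁻¹' Set.Iic (c - 1/((k:ℝ)+1)) := by
      intro ω hω
      simp only [Set.mem_preimage, Set.mem_Iio] at hω
      obtain ⟨k, hk⟩ := exists_nat_one_div_lt (show (0:ℝ) < c - X ω by linarith)
      simp only [Set.mem_iUnion, Set.mem_preimage, Set.mem_Iic]
      exact ⟨k, by linarith⟩
    refine measure_mono_null hsub (measure_iUnion_null ?_)
    intro k
    have hnotS : (c - 1/((k:ℝ)+1)) ∉ Sset := by
      intro hmem
      have := csInf_le hbdd hmem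
      rw [← hcdef] at this
      have hk : (0:ℝ) < 1/((k:ℝ)+1) := by positivity
      linarith
    have := (hdich (c - 1/((k:ℝ)+1))).resolve_right hnotS
    exact pr_eq_zero_iff.mp this
  -- X is a.e. equal to c
  have hae : X =ᵐ[μ] fun _ => c := by
    have hsub : {ω | ¬ X ω = c} ⊆ X ⁻¹' Set.Iio c ∪ (X ⁻¹' Set.Iic c)ᶜ := by
      intro ω hω
      simp only [Set.mem_setOf_eq] at hω
      rcases lt_trichotomy (X ω) c with h | h | h
      · exact Or.inl h
      · exact absurd h hω
      · exact Or.inr (by simp only [Set.mem_compl_iff, Set.mem_preimage, Set.mem_Iic, not_le]; exact h)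
    have : μ {ω | ¬ X ω = c} = 0 :=
      measure_mono_null hsub (le_antisymm (le_trans (measure_union_le _ _) (by rw [hlow, hIicc]; simp)) zero_le)
    exact this
  -- hence variance is zero
  have hEX : ∫ ω, X ω ∂μ = c := by
    rw [integral_congr_ae hae, integral_const]
    simp
  have hEX2 : ∫ ω, (X^2) ω ∂μ = c^2 := by
    have h2 : (X^2) =ᵐ[μ] fun _ => c^2 := by
      filter_upwards [hae] with ω hω
      simp [Pi.pow_apply, hω]
    rw [integral_congr_ae h2, integral_const]
    simp
  have : variance X μ = 0 := by
    rw [variance_eq_sub hX2, hEX2, hEX]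
    ring
  linarith

end cut

section stage

variable {μ : Measure Ω} [IsProbabilityMeasure μ] {X Y : Ω → ℝ} {r : ℝ}

lemma pr_compl (hXm : Measurable X) {C : Set ℝ} (hC : MeasurableSet C) :
    pr μ X Cᶜ = 1 - pr μ X C := by
  unfold pr
  rw [Set.preimage_compl, prob_compl_eq_one_sub (hXm hC),
    ENNReal.toReal_sub_of_le prob_le_one ENNReal.one_ne_top]
  simp

lemma pr_inter_of_one {A C : Set ℝ} (hXm : Measurable X) (hA : MeasurableSet A)
    (hA1 : pr μ X A = 1) : pr μ X (C ∩ A) = pr μ X C := by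
  unfold pr
  rw [Set.preimage_inter]
  congr 1
  apply measure_inter_conull
  rw [prob_compl_eq_one_sub (hXm hA), (ENNReal.toReal_eq_one_iff _).mp hA1]
  simp

lemma pr_diff_of_zero {U C : Set ℝ} (hU0 : pr μ X U = 0) :
    pr μ X (C \ U) = pr μ X C := by
  unfold pr
  have h0 : μ (X ⁻¹' U) = 0 := pr_eq_zero_iff.mp hU0
  rw [Set.preimage_diff]
  have : X ⁻¹' C \ X ⁻¹' U = X ⁻¹' C ∩ (X ⁻¹' U)ᶜ := rfl
  rw [this]
  congr 1
  apply measure_inter_conull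
  simpa using h0

lemma pr_union3 (hXm : Measurable X) {B1 B2 B3 : Set ℝ}
    (h2 : MeasurableSet B2) (h3 : MeasurableSet B3)
    (d12 : Disjoint B1 B2) (d13 : Disjoint B1 B3) (d23 : Disjoint B2 B3) :
    pr μ X (B1 ∪ B2 ∪ B3) = pr μ X B1 + pr μ X B2 + pr μ X B3 := by
  rw [Set.union_assoc, pr_union hXm (h2.union h3) (Set.disjoint_union_right.mpr ⟨d12, d13⟩),
    pr_union hXm h3 d23]
  ring

lemma pr_add3_le_one (hXm : Measurable X) {B1 B2 B3 : Set ℝ}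
    (h2 : MeasurableSet B2) (h3 : MeasurableSet B3)
    (d12 : Disjoint B1 B2) (d13 : Disjoint B1 B3) (d23 : Disjoint B2 B3) :
    pr μ X B1 + pr μ X B2 + pr μ X B3 ≤ 1 := by
  rw [← pr_union3 hXm h2 h3 d12 d13 d23]
  exact pr_le_one _

/-- If `P(X ∈ B1) = 0` while all three `Y`-masses are positive, contradiction. -/
lemma first_pos (hXm : Measurable X) (hYm : Measurable Y)
    (hX2 : MemLp X 2 μ) (hvX : 0 < variance X μ)
    (hinv : ∀ g : ℝ → ℝ, Admissible μ X Y g → corr μ (g ∘ X) (g ∘ Y) = r)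
    (hr : r ≠ 0)
    {B1 B2 B3 : Set ℝ} (h1 : MeasurableSet B1) (h2 : MeasurableSet B2)
    (h3 : MeasurableSet B3)
    (d12 : Disjoint B1 B2) (d13 : Disjoint B1 B3) (d23 : Disjoint B2 B3)
    (hq1 : 0 < pr μ Y B1) (hq2 : 0 < pr μ Y B2) (hq3 : 0 < pr μ Y B3) :
    0 < pr μ X B1 := by
  by_contra hp1'
  have hp1 : pr μ X B1 = 0 := le_antisymm (le_of_not_gt hp1') (pr_nonneg _)
  have hqsum : pr μ Y B1 + pr μ Y B2 + pr μ Y B3 ≤ 1 := pr_add3_le_one hYm h2 h3 d12 d13 d23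
  have hpsum : pr μ X B1 + pr μ X B2 + pr μ X B3 ≤ 1 := pr_add3_le_one hXm h2 h3 d12 d13 d23
  have hq11 : pr μ Y B1 < 1 := by linarith
  have hq21 : pr μ Y B2 < 1 := by linarith
  have hq31 : pr μ Y B3 < 1 := by linarith
  have hq12 : pr μ Y B1 + pr μ Y B2 < 1 := by linarith
  have hq13 : pr μ Y B1 + pr μ Y B3 < 1 := by linarith
  -- helper for the case `P(X ∈ W) = 1` for a measurable W disjoint from B1
  -- with `P(Y ∈ B1) + P(Y ∈ W) < 1`
  have split_one : ∀ W : Set ℝ, MeasurableSet W → Disjoint B1 W →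
      pr μ X W = 1 → 0 < pr μ Y W → pr μ Y B1 + pr μ Y W < 1 → False := by
    intro W hW hdW hpW hqWpos hqW
    obtain ⟨s, hs0, hs1⟩ := exists_cut hXm hX2 hvX
    set C := Set.Iic s with hCdef
    have hT1m : MeasurableSet (C ∩ W) := measurableSet_Iic.inter hW
    have hT2m : MeasurableSet (W \ C) := hW.diff measurableSet_Iic
    have hpT1 : pr μ X (C ∩ W) = pr μ X C := pr_inter_of_one hXm hW hpW
    have hpT2 : pr μ X (W \ C) = 1 - pr μ X C := by
      have : W \ C = Cᶜ ∩ W := by ext x; simp [Set.mem_diff, And.comm]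
      rw [this, pr_inter_of_one hXm hW hpW, pr_compl hXm measurableSet_Iic]
    have hqT12 : pr μ Y (C ∩ W) + pr μ Y (W \ C) = pr μ Y W := by
      have hd : Disjoint (C ∩ W) (W \ C) := Set.disjoint_sdiff_right.mono_left
        Set.inter_subset_left
      rw [← pr_union hYm hT2m hd, Set.inter_comm, Set.inter_union_diff]
    have hqT1le : pr μ Y (C ∩ W) ≤ pr μ Y W := pr_mono Set.inter_subset_right
    have hqT2le : pr μ Y (W \ C) ≤ pr μ Y W := pr_mono Set.diff_subset
    rcases lt_or_eq_of_le (pr_nonneg (μ := μ) (X := Y) (C ∩ W)) with hqT1 | hqT1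
    · exact pair_zero_contra hXm hYm hinv hr h1 hT1m (hdW.mono_right Set.inter_subset_right)
        hp1 (by rw [hpT1]; exact hs0) (by rw [hpT1]; exact hs1)
        hq1 hqT1 (by linarith)
    · have hqT2 : 0 < pr μ Y (W \ C) := by
        rw [← hqT1] at hqT12
        have hq2' : pr μ Y (W \ C) = pr μ Y W := by linarith
        rw [hq2']
        linarith
      exact pair_zero_contra hXm hYm hinv hr h1 hT2m (hdW.mono_right Set.diff_subset)
        hp1 (by rw [hpT2]; linarith) (by rw [hpT2]; linarith)
        hq1 hqT2 (by linarith)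
  -- now case on pr μ X B2
  rcases lt_or_eq_of_le (pr_nonneg (μ := μ) (X := X) B2) with hp2 | hp2
  · rcases lt_or_eq_of_le (pr_le_one (μ := μ) (X := X) B2) with hp21 | hp21
    · exact pair_zero_contra hXm hYm hinv hr h1 h2 d12 hp1 hp2 hp21 hq1 hq2 hq12
    · exact split_one B2 h2 d12 hp21 hq2 hq12
  · rcases lt_or_eq_of_le (pr_nonneg (μ := μ) (X := X) B3) with hp3 | hp3
    · rcases lt_or_eq_of_le (pr_le_one (μ := μ) (X := X) B3) with hp31 | hp31
      · exact pair_zero_contra hXm hYm hinv hr h1 h3 d13 hp1 hp3 hp31 hq1 hq3 hq13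
      · exact split_one B3 h3 d13 hp31 hq3 hq13
    · -- all three have zero X-mass
      obtain ⟨s, hs0, hs1⟩ := exists_cut hXm hX2 hvX
      set C := Set.Iic s with hCdef
      set U := B1 ∪ B2 ∪ B3 with hUdef
      have hUm : MeasurableSet U := (h1.union h2).union h3
      have hB1U : B1 ⊆ U := Set.subset_union_left.trans Set.subset_union_left
      have hB2U : B2 ⊆ U := (Set.subset_union_right (s := B1)).trans Set.subset_union_left
      have hU0 : pr μ X U = 0 := by
        rw [hUdef, pr_union3 hXm h2 h3 d12 d13 d23, hp1, ← hp2, ← hp3]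
        ring
      set T := C \ U with hTdef
      have hTm : MeasurableSet T := measurableSet_Iic.diff hUm
      have hpT : pr μ X T = pr μ X C := pr_diff_of_zero hU0
      have hdT1 : Disjoint B1 T := (Set.disjoint_sdiff_right (s := U) (t := C)).mono_left hB1U
      have hdT2 : Disjoint B2 T := (Set.disjoint_sdiff_right (s := U) (t := C)).mono_left hB2U
      have hqTsum : pr μ Y T + pr μ Y B1 + pr μ Y B2 ≤ 1 :=
        pr_add3_le_one hYm h1 h2 hdT1.symm hdT2.symm d12
      rcases lt_or_eq_of_le (pr_nonneg (μ := μ) (X := Y) T) with hqT | hqT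
      · exact pair_zero_contra hXm hYm hinv hr h1 hTm hdT1
          hp1 (by rw [hpT]; exact hs0) (by rw [hpT]; exact hs1)
          hq1 hqT (by linarith)
      · exact pair_split_contra hXm hYm hinv hr hTm h1 hdT1.symm
          (by rw [hpT]; exact hs0) (by rw [hpT]; exact hs1) hp1
          hqT.symm hq1 hq11

lemma triple_eq (hXm : Measurable X) (hYm : Measurable Y)
    (hX2 : MemLp X 2 μ) (hvX : 0 < variance X μ)
    (hinv : ∀ g : ℝ → ℝ, Admissible μ X Y g → corr μ (g ∘ X) (g ∘ Y) = r)
    (hr : r ≠ 0)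
    {B1 B2 B3 : Set ℝ} (h1 : MeasurableSet B1) (h2 : MeasurableSet B2)
    (h3 : MeasurableSet B3)
    (d12 : Disjoint B1 B2) (d13 : Disjoint B1 B3) (d23 : Disjoint B2 B3)
    (hq1 : 0 < pr μ Y B1) (hq2 : 0 < pr μ Y B2) (hq3 : 0 < pr μ Y B3) :
    pr μ X B1 = pr μ Y B1 ∧ pr μ X B2 = pr μ Y B2 ∧ pr μ X B3 = pr μ Y B3 := by
  have hp1 := first_pos hXm hYm hX2 hvX hinv hr h1 h2 h3 d12 d13 d23 hq1 hq2 hq3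
  have hp2 := first_pos hXm hYm hX2 hvX hinv hr h2 h1 h3 d12.symm d23 d13 hq2 hq1 hq3
  have hp3 := first_pos hXm hYm hX2 hvX hinv hr h3 h1 h2 d13.symm d23.symm d12 hq3 hq1 hq2
  have hqsum : pr μ Y B1 + pr μ Y B2 + pr μ Y B3 ≤ 1 := pr_add3_le_one hYm h2 h3 d12 d13 d23
  have hpsum : pr μ X B1 + pr μ X B2 + pr μ X B3 ≤ 1 := pr_add3_le_one hXm h2 h3 d12 d13 d23
  have bal12 := pair_balance hXm hYm hinv hr h1 h2 d12 hp1 hp2 (by linarith) hq1 hq2 (by linarith)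
  have bal13 := pair_balance hXm hYm hinv hr h1 h3 d13 hp1 hp3 (by linarith) hq1 hq3 (by linarith)
  have bal23 := pair_balance hXm hYm hinv hr h2 h3 d23 hp2 hp3 (by linarith) hq2 hq3 (by linarith)
  exact ⟨by linarith, by linarith, by linarith⟩

/-- Given two established "anchor" sets, any set disjoint from both has equal masses. -/
lemma eq_of_disjoint_pair (hXm : Measurable X) (hYm : Measurable Y)
    (hinv : ∀ g : ℝ → ℝ, Admissible μ X Y g → corr μ (g ∘ X) (g ∘ Y) = r)
    (hr : r ≠ 0)
    {A B T : Set ℝ} (hA : MeasurableSet A) (hB : MeasurableSet B) (hT : MeasurableSet T)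
    (dAB : Disjoint A B) (hdTA : Disjoint T A) (hdTB : Disjoint T B)
    (hpA : 0 < pr μ X A) (hpB : 0 < pr μ X B)
    (hqA : 0 < pr μ Y A) (hqB : 0 < pr μ Y B)
    (heA : pr μ X A = pr μ Y A) (heB : pr μ X B = pr μ Y B) :
    pr μ X T = pr μ Y T := by
  have hXsum : pr μ X T + pr μ X A + pr μ X B ≤ 1 := pr_add3_le_one hXm hA hB hdTA hdTB dAB
  have hYsum : pr μ Y T + pr μ Y A + pr μ Y B ≤ 1 := pr_add3_le_one hYm hA hB hdTA hdTB dAB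
  rcases lt_or_eq_of_le (pr_nonneg (μ := μ) (X := Y) T) with hqT | hqT
  · rcases lt_or_eq_of_le (pr_nonneg (μ := μ) (X := X) T) with hpT | hpT
    · -- balance
      have bal := pair_balance hXm hYm hinv hr hT hA hdTA hpT hpA (by linarith)
        hqT hqA (by linarith)
      linarith
    · -- X-mass zero, Y-mass positive: impossible
      exact absurd (pair_zero_contra hXm hYm hinv hr hT hA hdTA hpT.symm hpA (by linarith)
        hqT hqA (by linarith)) (by simp)
  · rcases lt_or_eq_of_le (pr_nonneg (μ := μ) (X := X) T) with hpT | hpT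
    · -- Y-mass zero, X-mass positive: impossible (swap roles)
      have hinv' := inv_symm hinv
      exact absurd (pair_zero_contra hYm hXm hinv' hr hT hA hdTA hqT.symm hqA (by linarith)
        hpT hpA (by linarith)) (by simp)
    · rw [← hqT, ← hpT]

lemma ioc_disj {x y ε : ℝ} (hε : 0 < ε) (h : 3*ε ≤ |x - y|) :
    Disjoint (Set.Ioc (x-ε) (x+ε)) (Set.Ioc (y-ε) (y+ε)) := by
  rw [Set.Ioc_disjoint_Ioc]
  rcases le_total x y with hxy | hxy
  · rw [abs_of_nonpos (by linarith)] at h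
    calc min (x+ε) (y+ε) ≤ x+ε := min_le_left _ _
      _ ≤ y-ε := by linarith
      _ ≤ max (x-ε) (y-ε) := le_max_right _ _
  · rw [abs_of_nonneg (by linarith)] at h
    calc min (x+ε) (y+ε) ≤ y+ε := min_le_right _ _
      _ ≤ x-ε := by linarith
      _ ≤ max (x-ε) (y-ε) := le_max_left _ _

lemma pr_split4 (hXm : Measurable X) {S A1 A2 A3 : Set ℝ}
    (hS : MeasurableSet S) (h1 : MeasurableSet A1) (h2 : MeasurableSet A2)
    (h3 : MeasurableSet A3)
    (d12 : Disjoint A1 A2) (d13 : Disjoint A1 A3) (d23 : Disjoint A2 A3) :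
    pr μ X S = pr μ X (S \ (A1 ∪ A2 ∪ A3)) + pr μ X (S ∩ A1)
      + pr μ X (S ∩ A2) + pr μ X (S ∩ A3) := by
  have hset : S = ((S \ (A1 ∪ A2 ∪ A3)) ∪ (S ∩ A1)) ∪ ((S ∩ A2) ∪ (S ∩ A3)) := by
    ext x
    simp only [Set.mem_union, Set.mem_diff, Set.mem_inter_iff]
    tauto
  have dr1 : Disjoint (S \ (A1 ∪ A2 ∪ A3)) (S ∩ A1) := by
    apply Set.disjoint_left.mpr
    intro x hx hx1
    exact hx.2 (Or.inl (Or.inl hx1.2))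
  have dr2 : Disjoint (S \ (A1 ∪ A2 ∪ A3)) (S ∩ A2) := by
    apply Set.disjoint_left.mpr
    intro x hx hx2
    exact hx.2 (Or.inl (Or.inr hx2.2))
  have dr3 : Disjoint (S \ (A1 ∪ A2 ∪ A3)) (S ∩ A3) := by
    apply Set.disjoint_left.mpr
    intro x hx hx3
    exact hx.2 (Or.inr hx3.2)
  have d12' : Disjoint (S ∩ A1) (S ∩ A2) := d12.mono Set.inter_subset_right Set.inter_subset_right
  have d13' : Disjoint (S ∩ A1) (S ∩ A3) := d13.mono Set.inter_subset_right Set.inter_subset_right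
  have d23' : Disjoint (S ∩ A2) (S ∩ A3) := d23.mono Set.inter_subset_right Set.inter_subset_right
  have hm0 : MeasurableSet (S \ (A1 ∪ A2 ∪ A3)) := hS.diff ((h1.union h2).union h3)
  have hm1 : MeasurableSet (S ∩ A1) := hS.inter h1
  have hm2 : MeasurableSet (S ∩ A2) := hS.inter h2
  have hm3 : MeasurableSet (S ∩ A3) := hS.inter h3
  conv_lhs => rw [hset]
  rw [pr_union hXm (hm2.union hm3) (by
    apply Set.disjoint_union_left.mpr
    constructor
    · exact Set.disjoint_union_right.mpr ⟨dr2, dr3⟩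
    · exact Set.disjoint_union_right.mpr ⟨d12', d13'⟩)]
  rw [pr_union hXm hm1 dr1, pr_union hXm hm3 d23']
  ring

end stage


/-- If `X` and `Y` have different distributions and the support of `Y`
contains strictly more than two points, then `(X,Y) ∈ IC` iff `(X,Y) ∈ IC_0`. -/
theorem ic_iff_ic_zero_of_diff_dist
    (μ : Measure Ω) [IsProbabilityMeasure μ] (X Y : Ω → ℝ)
    (hXm : Measurable X) (hYm : Measurable Y)
    (hX2 : MemLp X 2 μ) (hY2 : MemLp Y 2 μ)
    (hvX : 0 < variance X μ) (hvY : 0 < variance Y μ)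
    (hdiff : Measure.map X μ ≠ Measure.map Y μ)
    (hsupp : ∃ a b c : ℝ, a ∈ distSupport μ Y ∧ b ∈ distSupport μ Y ∧ c ∈ distSupport μ Y ∧
      a ≠ b ∧ a ≠ c ∧ b ≠ c) :
    (∃ r ∈ Set.Icc (-1 : ℝ) 1, IC μ X Y r) ↔ IC μ X Y 0 := by
  constructor
  · rintro ⟨r, _, hIC⟩
    have hr0 : r = 0 := by
      by_contra hr
      obtain ⟨a, b, c, ha, hb, hc, hab, hac, hbc⟩ := hsupp
      have hinv := hIC.2
      set M := min (min |a-b| |a-c|) |b-c| with hM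
      have hMpos : 0 < M := by
        apply lt_min (lt_min ?_ ?_) ?_ <;>
          exact abs_pos.mpr (sub_ne_zero_of_ne (by assumption))
      set ε := M/3 with hεdef
      have hε : 0 < ε := by positivity
      set A1 := Set.Ioc (a-ε) (a+ε) with hA1def
      set A2 := Set.Ioc (b-ε) (b+ε) with hA2def
      set A3 := Set.Ioc (c-ε) (c+ε) with hA3def
      have hA1m : MeasurableSet A1 := measurableSet_Ioc
      have hA2m : MeasurableSet A2 := measurableSet_Ioc
      have hA3m : MeasurableSet A3 := measurableSet_Ioc
      have d12 : Disjoint A1 A2 := ioc_disj hε (by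
        have : M ≤ |a-b| := le_trans (min_le_left _ _) (min_le_left _ _)
        rw [hεdef]; linarith)
      have d13 : Disjoint A1 A3 := ioc_disj hε (by
        have : M ≤ |a-c| := le_trans (min_le_left _ _) (min_le_right _ _)
        rw [hεdef]; linarith)
      have d23 : Disjoint A2 A3 := ioc_disj hε (by
        have : M ≤ |b-c| := min_le_right _ _
        rw [hεdef]; linarith)
      have hqgen : ∀ x : ℝ, x ∈ distSupport μ Y → 0 < pr μ Y (Set.Ioc (x-ε) (x+ε)) := by
        intro x hx
        have hpos := hx ε hε
        have hseteq : {ω | x - ε < Y ω ∧ Y ω ≤ x + ε} = Y ⁻¹' Set.Ioc (x-ε) (x+ε) := by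
          ext ω; simp [Set.mem_Ioc]
        rw [hseteq] at hpos
        exact pr_pos_iff.mpr (pos_iff_ne_zero.mp hpos)
      have hq1 : 0 < pr μ Y A1 := hqgen a ha
      have hq2 : 0 < pr μ Y A2 := hqgen b hb
      have hq3 : 0 < pr μ Y A3 := hqgen c hc
      obtain ⟨e1, e2, e3⟩ := triple_eq hXm hYm hX2 hvX hinv hr hA1m hA2m hA3m
        d12 d13 d23 hq1 hq2 hq3
      have hp1 : 0 < pr μ X A1 := by rw [e1]; exact hq1
      have hp2 : 0 < pr μ X A2 := by rw [e2]; exact hq2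
      have hp3 : 0 < pr μ X A3 := by rw [e3]; exact hq3
      set U := A1 ∪ A2 ∪ A3 with hUdef
      have hUm : MeasurableSet U := (hA1m.union hA2m).union hA3m
      have hA1U : A1 ⊆ U := Set.subset_union_left.trans Set.subset_union_left
      have hA2U : A2 ⊆ U := (Set.subset_union_right (s := A1)).trans Set.subset_union_left
      have hA3U : A3 ⊆ U := Set.subset_union_right
      have hfinal : ∀ S : Set ℝ, MeasurableSet S → pr μ X S = pr μ Y S := by
        intro S hS
        have hdiffU : ∀ {V : Set ℝ}, V ⊆ U → Disjoint (S \ U) V := by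
          intro V hV
          exact Set.disjoint_left.mpr fun x hx hxV => hx.2 (hV hxV)
        have t0 : pr μ X (S \ U) = pr μ Y (S \ U) :=
          eq_of_disjoint_pair hXm hYm hinv hr hA1m hA2m (hS.diff hUm) d12
            (hdiffU hA1U) (hdiffU hA2U) hp1 hp2 hq1 hq2 e1 e2
        have t1 : pr μ X (S ∩ A1) = pr μ Y (S ∩ A1) :=
          eq_of_disjoint_pair hXm hYm hinv hr hA2m hA3m (hS.inter hA1m) d23
            (d12.mono_left Set.inter_subset_right)
            (d13.mono_left Set.inter_subset_right) hp2 hp3 hq2 hq3 e2 e3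
        have t2 : pr μ X (S ∩ A2) = pr μ Y (S ∩ A2) :=
          eq_of_disjoint_pair hXm hYm hinv hr hA1m hA3m (hS.inter hA2m) d13
            (d12.symm.mono_left Set.inter_subset_right)
            (d23.mono_left Set.inter_subset_right) hp1 hp3 hq1 hq3 e1 e3
        have t3 : pr μ X (S ∩ A3) = pr μ Y (S ∩ A3) :=
          eq_of_disjoint_pair hXm hYm hinv hr hA1m hA2m (hS.inter hA3m) d12
            (d13.symm.mono_left Set.inter_subset_right)
            (d23.symm.mono_left Set.inter_subset_right) hp1 hp2 hq1 hq2 e1 e2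
        rw [pr_split4 hXm hS hA1m hA2m hA3m d12 d13 d23,
          pr_split4 hYm hS hA1m hA2m hA3m d12 d13 d23, ← hUdef, t0, t1, t2, t3]
      exact hdiff (Measure.ext fun s hs => by
        rw [Measure.map_apply hXm hs, Measure.map_apply hYm hs]
        exact (ENNReal.toReal_eq_toReal_iff' (measure_ne_top μ _) (measure_ne_top μ _)).mp
          (hfinal s hs))
    rw [hr0] at hIC
    exact hIC
  · intro h
    exact ⟨0, by norm_num, h⟩
end

section
/- Let X and Y be identically distributed random variables taking values x₁ < ⋯ < x_n with p_i = P(X = x_i) = P(Y = x_i) > 0 for each i ∈ [n]. Let P = (p_{ij}) with p_{ij} = P(X = x_i, Y = x_j), p = (p₁,…,p_n)ᵀ and D = diag(p). Then (X,Y) ∈ IC_r for some r ∈ [-1,1] if and only if (P + Pᵀ)/2 = r·D + (1−r)·p pᵀ. Furthermore, in this case r satisfies r̲_p ≤ r ≤ 1, where r̲_p = max( max_{j∈[n]} (−p_j/(1−p_j)), max_{i,j∈[n], i≠j} (1 − 1/(p_i p_j)) ). -/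
open MeasureTheory ProbabilityTheory Matrix

variable {Ω : Type*} [MeasurableSpace Ω]

section Aux

variable (μ : Measure Ω) [IsProbabilityMeasure μ] {n : ℕ} {x : Fin n → ℝ}
  {X : Ω → ℝ}

lemma sum_indicator_eq (hinj : Function.Injective x) (g : ℝ → ℝ) {ω : Ω}
    {i₀ : Fin n} (hω : X ω = x i₀) :
    ∑ i, (X ⁻¹' {x i}).indicator (fun _ => g (x i)) ω = g (X ω) := by
  rw [Finset.sum_eq_single i₀]
  · rw [Set.indicator_of_mem (by simpa [Set.mem_preimage] using hω), hω]
  · intro j _ hj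
    refine Set.indicator_of_notMem ?_ _
    simp only [Set.mem_preimage, Set.mem_singleton_iff, hω]
    exact fun h => hj (hinj h.symm)
  · intro h; exact absurd (Finset.mem_univ i₀) h

lemma compl_null (hXm : Measurable X)
    (hXsupp : μ {ω | X ω ∈ Set.range x} = 1) :
    μ {ω | X ω ∈ Set.range x}ᶜ = 0 := by
  have hmeas : MeasurableSet {ω | X ω ∈ Set.range x} :=
    hXm ((Set.finite_range x).measurableSet)
  rw [measure_compl hmeas (measure_ne_top μ _), hXsupp, measure_univ, tsub_self]

lemma ae_eq_sum_indicator (hXm : Measurable X) (hinj : Function.Injective x)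
    (hXsupp : μ {ω | X ω ∈ Set.range x} = 1) (g : ℝ → ℝ) :
    (g ∘ X) =ᵐ[μ] fun ω => ∑ i, (X ⁻¹' {x i}).indicator (fun _ => g (x i)) ω := by
  have h0 := compl_null μ hXm hXsupp
  refine Filter.eventuallyEq_of_mem (MeasureTheory.mem_ae_iff.2 h0) ?_
  rintro ω (hω : X ω ∈ Set.range x)
  obtain ⟨i₀, hi₀⟩ := hω
  exact ((sum_indicator_eq hinj g hi₀.symm)).symm

lemma memLp_comp (hXm : Measurable X) (hinj : Function.Injective x)
    (hXsupp : μ {ω | X ω ∈ Set.range x} = 1) (g : ℝ → ℝ) :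
    MemLp (g ∘ X) 2 μ := by
  have hs : MemLp (fun ω => ∑ i, (X ⁻¹' {x i}).indicator (fun _ => g (x i)) ω) 2 μ := by
    have := memLp_finset_sum' (μ := μ) (p := 2) Finset.univ
      (f := fun i ω => (X ⁻¹' {x i}).indicator (fun _ => g (x i)) ω) (fun i _ =>
        memLp_indicator_const 2 (hXm (measurableSet_singleton _)) _
          (Or.inr (measure_ne_top μ _)))
    convert this using 1
    funext ω
    simp
  exact hs.ae_eq (ae_eq_sum_indicator μ hXm hinj hXsupp g).symm

lemma integral_comp (hXm : Measurable X) (hinj : Function.Injective x)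
    (hXsupp : μ {ω | X ω ∈ Set.range x} = 1) (g : ℝ → ℝ) :
    ∫ ω, g (X ω) ∂μ = ∑ i, g (x i) * (μ (X ⁻¹' {x i})).toReal := by
  have h := integral_congr_ae (ae_eq_sum_indicator μ hXm hinj hXsupp g)
  rw [show (fun ω => g (X ω)) = g ∘ X from rfl, h,
    integral_finset_sum _ (fun i _ => ?_)]
  · refine Finset.sum_congr rfl fun i _ => ?_
    rw [integral_indicator_const _ (hXm (measurableSet_singleton _))]
    simp [mul_comm, measureReal_def]
  · exact (integrable_const _).indicator (hXm (measurableSet_singleton _))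

end Aux

section Aux2

variable (μ : Measure Ω) [IsProbabilityMeasure μ] {n : ℕ} {x : Fin n → ℝ}
  {X Y : Ω → ℝ}

lemma preimage_disjoint (hinj : Function.Injective x) :
    Pairwise fun i j => Disjoint (X ⁻¹' {x i}) (X ⁻¹' {x j}) := by
  intro i j hij
  refine Set.disjoint_left.2 fun ω h1 h2 => ?_
  simp only [Set.mem_preimage, Set.mem_singleton_iff] at h1 h2
  exact hij (hinj (h1 ▸ h2))

lemma sum_measure_eq_one (hXm : Measurable X) (hinj : Function.Injective x)
    (hXsupp : μ {ω | X ω ∈ Set.range x} = 1) :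
    ∑ i, (μ (X ⁻¹' {x i})).toReal = 1 := by
  have hU : (⋃ i, X ⁻¹' {x i}) = {ω | X ω ∈ Set.range x} := by
    ext ω; simp [Set.mem_range, eq_comm]
  have hm := measure_iUnion (μ := μ) (preimage_disjoint hinj)
      (fun i => hXm (measurableSet_singleton _))
  rw [hU, hXsupp, tsum_fintype] at hm
  have := ENNReal.toReal_sum (s := Finset.univ)
      (f := fun i => μ (X ⁻¹' {x i})) (fun i _ => measure_ne_top μ _)
  rw [← hm] at this
  simpa using this.symm

lemma row_sum (hYm : Measurable Y) (hinj : Function.Injective x)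
    (hYsupp : μ {ω | Y ω ∈ Set.range x} = 1) (A : Set Ω) (hA : MeasurableSet A) :
    ∑ j, (μ (A ∩ Y ⁻¹' {x j})).toReal = (μ A).toReal := by
  have hU : (⋃ j, A ∩ Y ⁻¹' {x j}) = A ∩ {ω | Y ω ∈ Set.range x} := by
    ext ω; simp [Set.mem_range, eq_comm]
  have hdisj : Pairwise fun i j => Disjoint (A ∩ Y ⁻¹' {x i}) (A ∩ Y ⁻¹' {x j}) :=
    fun i j hij => ((preimage_disjoint (X := Y) hinj) hij).mono
      Set.inter_subset_right Set.inter_subset_right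
  have hm := measure_iUnion (μ := μ) hdisj
      (fun j => hA.inter (hYm (measurableSet_singleton _)))
  rw [hU, measure_inter_conull (compl_null μ hYm hYsupp), tsum_fintype] at hm
  have := ENNReal.toReal_sum (s := Finset.univ)
      (f := fun j => μ (A ∩ Y ⁻¹' {x j})) (fun j _ => measure_ne_top μ _)
  rw [← hm] at this
  simpa using this.symm

lemma ae_eq_sum_indicator2 (hXm : Measurable X) (hYm : Measurable Y)
    (hinj : Function.Injective x)
    (hXsupp : μ {ω | X ω ∈ Set.range x} = 1)
    (hYsupp : μ {ω | Y ω ∈ Set.range x} = 1) (g h : ℝ → ℝ) :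
    (fun ω => g (X ω) * h (Y ω)) =ᵐ[μ]
      fun ω => ∑ i, ∑ j,
        (X ⁻¹' {x i} ∩ Y ⁻¹' {x j}).indicator (fun _ => g (x i) * h (x j)) ω := by
  have h0 : μ ({ω | X ω ∈ Set.range x} ∩ {ω | Y ω ∈ Set.range x})ᶜ = 0 := by
    rw [Set.compl_inter]
    exact measure_union_null (compl_null μ hXm hXsupp) (compl_null μ hYm hYsupp)
  refine Filter.eventuallyEq_of_mem (MeasureTheory.mem_ae_iff.2 h0) ?_
  rintro ω ⟨⟨i₀, hi₀⟩, ⟨j₀, hj₀⟩⟩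
  show g (X ω) * h (Y ω)
    = ∑ i, ∑ j, (X ⁻¹' {x i} ∩ Y ⁻¹' {x j}).indicator (fun _ => g (x i) * h (x j)) ω
  rw [Finset.sum_eq_single i₀]
  · rw [Finset.sum_eq_single j₀]
    · rw [Set.indicator_of_mem (by simp [Set.mem_preimage, hi₀.symm, hj₀.symm]), hi₀, hj₀]
    · intro j _ hj
      refine Set.indicator_of_notMem (fun hmem => ?_) _
      have := hmem.2
      simp only [Set.mem_preimage, Set.mem_singleton_iff, ← hj₀] at this
      exact hj (hinj this.symm)
    · intro hmem; exact absurd (Finset.mem_univ j₀) hmem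
  · intro i _ hi
    refine Finset.sum_eq_zero fun j _ => Set.indicator_of_notMem (fun hmem => ?_) _
    have := hmem.1
    simp only [Set.mem_preimage, Set.mem_singleton_iff, ← hi₀] at this
    exact hi (hinj this.symm)
  · intro hmem; exact absurd (Finset.mem_univ i₀) hmem

lemma integral_mul_comp (hXm : Measurable X) (hYm : Measurable Y)
    (hinj : Function.Injective x)
    (hXsupp : μ {ω | X ω ∈ Set.range x} = 1)
    (hYsupp : μ {ω | Y ω ∈ Set.range x} = 1) (g h : ℝ → ℝ) :
    ∫ ω, g (X ω) * h (Y ω) ∂μ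
      = ∑ i, ∑ j, g (x i) * h (x j) * (μ (X ⁻¹' {x i} ∩ Y ⁻¹' {x j})).toReal := by
  rw [integral_congr_ae (ae_eq_sum_indicator2 μ hXm hYm hinj hXsupp hYsupp g h)]
  have hmeas : ∀ i j : Fin n, MeasurableSet (X ⁻¹' {x i} ∩ Y ⁻¹' {x j}) :=
    fun i j => (hXm (measurableSet_singleton _)).inter (hYm (measurableSet_singleton _))
  rw [integral_finset_sum _ (fun i _ => integrable_finset_sum _ (fun j _ =>
    (integrable_const _).indicator (hmeas i j)))]
  refine Finset.sum_congr rfl fun i _ => ?_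
  rw [integral_finset_sum _ (fun j _ => (integrable_const _).indicator (hmeas i j))]
  refine Finset.sum_congr rfl fun j _ => ?_
  rw [integral_indicator_const _ (hmeas i j)]
  simp [mul_comm, measureReal_def]

end Aux2

section Aux3

variable (μ : Measure Ω) [IsProbabilityMeasure μ] {n : ℕ} {x : Fin n → ℝ}
  {X Y : Ω → ℝ}

lemma variance_comp (hXm : Measurable X) (hinj : Function.Injective x)
    (hXsupp : μ {ω | X ω ∈ Set.range x} = 1) (g : ℝ → ℝ) :
    variance (g ∘ X) μ
      = ∑ i, (g (x i) - ∑ k, g (x k) * (μ (X ⁻¹' {x k})).toReal)^2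
          * (μ (X ⁻¹' {x i})).toReal := by
  have hmem := memLp_comp μ hXm hinj hXsupp g
  rw [variance_eq_integral hmem.aestronglyMeasurable.aemeasurable]
  have h1 : ∫ a, g (X a) ∂μ = ∑ k, g (x k) * (μ (X ⁻¹' {x k})).toReal :=
    integral_comp μ hXm hinj hXsupp g
  calc ∫ ω, (((g ∘ X - fun _ => ∫ a, (g ∘ X) a ∂μ) ^ 2 : Ω → ℝ)) ω ∂μ
      = ∫ ω, (fun t => (g t - ∑ k, g (x k) * (μ (X ⁻¹' {x k})).toReal)^2) (X ω) ∂μ := by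
        refine integral_congr_ae (ae_of_all _ fun ω => ?_)
        simp [h1]
    _ = ∑ i, (g (x i) - ∑ k, g (x k) * (μ (X ⁻¹' {x k})).toReal)^2
          * (μ (X ⁻¹' {x i})).toReal :=
        integral_comp μ hXm hinj hXsupp
          (fun t => (g t - ∑ k, g (x k) * (μ (X ⁻¹' {x k})).toReal) ^ 2)

lemma cov_comp (hXm : Measurable X) (hYm : Measurable Y)
    (hinj : Function.Injective x)
    (hXsupp : μ {ω | X ω ∈ Set.range x} = 1)
    (hYsupp : μ {ω | Y ω ∈ Set.range x} = 1) (g h : ℝ → ℝ) :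
    cov μ (g ∘ X) (h ∘ Y)
      = ∑ i, ∑ j, (g (x i) - ∑ k, g (x k) * (μ (X ⁻¹' {x k})).toReal)
          * (h (x j) - ∑ k, h (x k) * (μ (Y ⁻¹' {x k})).toReal)
          * (μ (X ⁻¹' {x i} ∩ Y ⁻¹' {x j})).toReal := by
  unfold cov
  have h1 : ∫ a, g (X a) ∂μ = ∑ k, g (x k) * (μ (X ⁻¹' {x k})).toReal :=
    integral_comp μ hXm hinj hXsupp g
  have h2 : ∫ a, h (Y a) ∂μ = ∑ k, h (x k) * (μ (Y ⁻¹' {x k})).toReal :=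
    integral_comp μ hYm hinj hYsupp h
  calc ∫ ω, ((g ∘ X) ω - ∫ a, (g ∘ X) a ∂μ) * ((h ∘ Y) ω - ∫ a, (h ∘ Y) a ∂μ) ∂μ
      = ∫ ω, (fun t => g t - ∑ k, g (x k) * (μ (X ⁻¹' {x k})).toReal) (X ω)
          * (fun t => h t - ∑ k, h (x k) * (μ (Y ⁻¹' {x k})).toReal) (Y ω) ∂μ := by
        refine integral_congr_ae (ae_of_all _ fun ω => ?_)
        simp [h1, h2]
    _ = _ := integral_mul_comp μ hXm hYm hinj hXsupp hYsupp
          (fun t => g t - ∑ k, g (x k) * (μ (X ⁻¹' {x k})).toReal)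
          (fun t => h t - ∑ k, h (x k) * (μ (Y ⁻¹' {x k})).toReal)

end Aux3

lemma quad_sum {n : ℕ} (P : Matrix (Fin n) (Fin n) ℝ) (p c : Fin n → ℝ) (r : ℝ)
    (hE : ∀ i j, 2⁻¹ * (P i j + P j i)
      = r * (if i = j then p i else 0) + (1 - r) * (p i * p j))
    (hz : ∑ i, c i * p i = 0) :
    ∑ i, ∑ j, c i * c j * P i j = r * ∑ i, c i ^ 2 * p i := by
  have h1 : ∑ i, ∑ j, c i * c j * P j i = ∑ i, ∑ j, c i * c j * P i j := by
    rw [Finset.sum_comm]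
    exact Finset.sum_congr rfl fun i _ => Finset.sum_congr rfl fun j _ => by ring
  have hpt : ∀ i j : Fin n, c i * c j * (2⁻¹ * (P i j + P j i))
      = 2⁻¹ * (c i * c j * P i j) + 2⁻¹ * (c i * c j * P j i) := fun i j => by ring
  have hsymm : ∑ i, ∑ j, c i * c j * P i j
      = ∑ i, ∑ j, c i * c j * (2⁻¹ * (P i j + P j i)) := by
    simp only [hpt, Finset.sum_add_distrib, ← Finset.mul_sum, h1]
    ring
  rw [hsymm]
  simp only [hE]
  have hsplit : ∀ i j : Fin n,
      c i * c j * (r * (if i = j then p i else 0) + (1 - r) * (p i * p j))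
      = (if j = i then r * (c i ^ 2 * p i) else 0)
          + (1 - r) * ((c i * p i) * (c j * p j)) := by
    intro i j
    by_cases h : i = j
    · subst h; simp; ring
    · simp [h, Ne.symm h]; ring
  simp only [hsplit, Finset.sum_add_distrib, Finset.sum_ite_eq', Finset.mem_univ, if_true,
    ← Finset.mul_sum, hz, mul_zero, add_zero, zero_mul]


/-- Let `X, Y` be identically distributed, taking values `x₁ < ⋯ < x_n` with
probabilities `p_i > 0`, `P` the joint probability matrix and `D = diag(p)`. Then for
`r ∈ [-1,1]`, `(X,Y) ∈ IC_r` iff `(P + Pᵀ)/2 = r D + (1-r) p pᵀ`; and in that case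
`r̲_p ≤ r ≤ 1`, i.e. `-p_j/(1-p_j) ≤ r` for all `j`, `1 - 1/(p_i p_j) ≤ r` for all `i ≠ j`,
and `r ≤ 1`. -/
theorem ic_finite_identical_characterization
    (μ : Measure Ω) [IsProbabilityMeasure μ] (X Y : Ω → ℝ)
    (hXm : Measurable X) (hYm : Measurable Y)
    (n : ℕ) (hn : 2 ≤ n) (x : Fin n → ℝ) (hx : StrictMono x)
    (hident : ∀ i, μ {ω | X ω = x i} = μ {ω | Y ω = x i})
    (hXsupp : μ {ω | X ω ∈ Set.range x} = 1)
    (hYsupp : μ {ω | Y ω ∈ Set.range x} = 1)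
    (p : Fin n → ℝ) (hpdef : ∀ i, p i = (μ {ω | X ω = x i}).toReal)
    (hppos : ∀ i, 0 < p i)
    (P : Matrix (Fin n) (Fin n) ℝ)
    (hPdef : ∀ i j, P i j = (μ {ω | X ω = x i ∧ Y ω = x j}).toReal) :
    ∀ r ∈ Set.Icc (-1 : ℝ) 1,
      (IC μ X Y r ↔
        (2 : ℝ)⁻¹ • (P + Pᵀ) = r • Matrix.diagonal p + (1 - r) • vecMulVec p p) ∧
      (IC μ X Y r →
        (∀ j, -(p j) / (1 - p j) ≤ r) ∧
        (∀ i j, i ≠ j → 1 - 1 / (p i * p j) ≤ r) ∧ r ≤ 1) := by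
  intro r hr
  have hinj : Function.Injective x := hx.injective
  have hq : ∀ i, (μ (X ⁻¹' {x i})).toReal = p i := fun i => (hpdef i).symm
  have hqY : ∀ i, (μ (Y ⁻¹' {x i})).toReal = p i := fun i => by
    rw [show Y ⁻¹' {x i} = {ω | Y ω = x i} from rfl, ← hident i, ← hpdef i]
  have hPij : ∀ i j, (μ (X ⁻¹' {x i} ∩ Y ⁻¹' {x j})).toReal = P i j :=
    fun i j => (hPdef i j).symm
  have hsum1 : ∑ i, p i = 1 := by
    have := sum_measure_eq_one μ hXm hinj hXsupp
    simpa [hq] using this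
  have hVX : ∀ g : ℝ → ℝ,
      variance (g ∘ X) μ = ∑ i, (g (x i) - ∑ k, g (x k) * p k) ^ 2 * p i := by
    intro g
    have := variance_comp μ hXm hinj hXsupp g
    simpa [hq] using this
  have hVY : ∀ g : ℝ → ℝ,
      variance (g ∘ Y) μ = ∑ i, (g (x i) - ∑ k, g (x k) * p k) ^ 2 * p i := by
    intro g
    have := variance_comp μ hYm hinj hYsupp g
    simpa [hqY] using this
  have hCov : ∀ g : ℝ → ℝ, cov μ (g ∘ X) (g ∘ Y)
      = ∑ i, ∑ j, (g (x i) - ∑ k, g (x k) * p k)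
          * (g (x j) - ∑ k, g (x k) * p k) * P i j := by
    intro g
    have := cov_comp μ hXm hYm hinj hXsupp hYsupp g g
    simpa [hq, hqY, hPij] using this
  have hzero : ∀ g : ℝ → ℝ, ∑ i, (g (x i) - ∑ k, g (x k) * p k) * p i = 0 := by
    intro g
    simp only [sub_mul, Finset.sum_sub_distrib, ← Finset.mul_sum, hsum1, mul_one, sub_self]
  have hcorr : ∀ g : ℝ → ℝ,
      corr μ (g ∘ X) (g ∘ Y) = cov μ (g ∘ X) (g ∘ Y) / variance (g ∘ X) μ := by
    intro g
    unfold corr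
    rw [show variance (g ∘ Y) μ = variance (g ∘ X) μ by rw [hVX, hVY],
      Real.sqrt_mul_self (variance_nonneg _ _)]
  have hrowP : ∀ i, ∑ j, P i j = p i := by
    intro i
    have := row_sum μ hYm hinj hYsupp (X ⁻¹' {x i}) (hXm (measurableSet_singleton _))
    simpa [hPij, hq] using this
  have hcolP : ∀ j, ∑ i, P i j = p j := by
    intro j
    have := row_sum μ hXm hinj hXsupp (Y ⁻¹' {x j}) (hYm (measurableSet_singleton _))
    rw [hqY] at this
    rw [← this]
    exact Finset.sum_congr rfl fun i _ => by rw [← hPij, Set.inter_comm]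
  have hpair : ∀ i j : Fin n, i ≠ j → p i + p j ≤ 1 := by
    intro i j hij
    have hsub : ({i, j} : Finset (Fin n)) ⊆ Finset.univ := Finset.subset_univ _
    have := Finset.sum_le_sum_of_subset_of_nonneg hsub
      (fun k _ _ => (hppos k).le)
    rw [Finset.sum_pair hij, hsum1] at this
    exact this
  have hplt1 : ∀ i, p i < 1 := by
    intro i
    obtain ⟨j, hj⟩ := Fintype.exists_ne_of_one_lt_card (by simp; omega) i
    have := hpair j i hj
    have := hppos j
    linarith
  have hCov' : ∀ g : ℝ → ℝ, cov μ (g ∘ X) (g ∘ Y)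
      = (∑ i, ∑ j, g (x i) * g (x j) * P i j) - (∑ k, g (x k) * p k) ^ 2 := by
    intro g
    rw [hCov g]
    generalize hc : (∑ k, g (x k) * p k) = c
    have e1 : ∑ i : Fin n, ∑ j, g (x j) * P i j = c := by
      rw [Finset.sum_comm, ← hc]
      exact Finset.sum_congr rfl fun j _ => by rw [← Finset.mul_sum, hcolP j]
    have e2 : ∑ i : Fin n, ∑ j, g (x i) * P i j = c := by
      rw [← hc]
      exact Finset.sum_congr rfl fun i _ => by rw [← Finset.mul_sum, hrowP i]
    have e3 : ∑ i : Fin n, ∑ j, P i j = 1 := by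
      rw [← hsum1]; exact Finset.sum_congr rfl fun i _ => hrowP i
    calc ∑ i, ∑ j, (g (x i) - c) * (g (x j) - c) * P i j
        = ∑ i, ∑ j, (g (x i) * g (x j) * P i j - c * (g (x j) * P i j)
            - c * (g (x i) * P i j) + (c ^ 2) * P i j) := by
          exact Finset.sum_congr rfl fun i _ => Finset.sum_congr rfl fun j _ => by ring
      _ = (∑ i, ∑ j, g (x i) * g (x j) * P i j)
            - c * (∑ i, ∑ j, g (x j) * P i j)
            - c * (∑ i, ∑ j, g (x i) * P i j) + (c ^ 2) * (∑ i, ∑ j, P i j) := by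
          simp only [Finset.sum_add_distrib, Finset.sum_sub_distrib, ← Finset.mul_sum]
      _ = _ := by rw [e1, e2, e3]; ring
  have hVX' : ∀ g : ℝ → ℝ, variance (g ∘ X) μ
      = (∑ i, g (x i) ^ 2 * p i) - (∑ k, g (x k) * p k) ^ 2 := by
    intro g
    rw [hVX g]
    generalize hc : (∑ k, g (x k) * p k) = c
    calc ∑ i, (g (x i) - c) ^ 2 * p i
        = ∑ i, (g (x i) ^ 2 * p i - 2 * c * (g (x i) * p i) + (c ^ 2) * p i) := by
          exact Finset.sum_congr rfl fun i _ => by ring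
      _ = (∑ i, g (x i) ^ 2 * p i) - 2 * c * (∑ i, g (x i) * p i)
            + (c ^ 2) * ∑ i, p i := by
          simp only [Finset.sum_add_distrib, Finset.sum_sub_distrib, ← Finset.mul_sum]
      _ = _ := by rw [hc, hsum1]; ring
  have hcoll : ∀ (i : Fin n) (f : Fin n → ℝ),
      ∑ k, (if k = i then (1 : ℝ) else 0) * f k = f i := by
    intro i f
    simp [ite_mul, Finset.sum_ite_eq']
  have hcoll2 : ∀ (i j : Fin n) (f : Fin n → ℝ),
      ∑ k, ((if k = i then (1 : ℝ) else 0) - (if k = j then 1 else 0)) * f k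
        = f i - f j := by
    intro i j f
    simp only [sub_mul, Finset.sum_sub_distrib, ite_mul, one_mul, zero_mul]
    simp [Finset.sum_ite_eq']
  have hkey : ∀ g : ℝ → ℝ, Admissible μ X Y g → corr μ (g ∘ X) (g ∘ Y) = r →
      cov μ (g ∘ X) (g ∘ Y) = r * variance (g ∘ X) μ := by
    intro g hadm hc
    have hv := hadm.2.2.2.1
    rw [hcorr g] at hc
    rw [(div_eq_iff (ne_of_gt hv)).1 hc, mul_comm]
  have hdiag : IC μ X Y r → ∀ i, P i i - p i ^ 2 = r * (p i - p i ^ 2) := by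
    intro hIC i
    set g : ℝ → ℝ := fun t => if t = x i then 1 else 0 with hgdef
    have hval : ∀ k, g (x k) = if k = i then 1 else 0 := by
      intro k
      by_cases h : k = i
      · simp [hgdef, h]
      · simp [hgdef, if_neg (fun hxx : x k = x i => h (hinj hxx)), h]
    have hm : ∑ k, g (x k) * p k = p i := by
      simp only [hval]; exact hcoll i p
    have hsq : ∑ k, g (x k) ^ 2 * p k = p i := by
      rw [← hcoll i p]
      exact Finset.sum_congr rfl fun k _ => by by_cases h : k = i <;> simp [hval, h]
    have hqq : ∑ k, ∑ l, g (x k) * g (x l) * P k l = P i i := by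
      have hin : ∀ k, ∑ l, g (x k) * g (x l) * P k l = g (x k) * P k i := by
        intro k
        calc ∑ l, g (x k) * g (x l) * P k l
            = ∑ l, (if l = i then (1 : ℝ) else 0) * (g (x k) * P k l) :=
              Finset.sum_congr rfl fun l _ => by rw [hval l]; ring
          _ = g (x k) * P k i := hcoll i _
      calc ∑ k, ∑ l, g (x k) * g (x l) * P k l
          = ∑ k, g (x k) * P k i := Finset.sum_congr rfl fun k _ => hin k
        _ = ∑ k, (if k = i then (1 : ℝ) else 0) * P k i :=
            Finset.sum_congr rfl fun k _ => by rw [hval k]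
        _ = P i i := hcoll i _
    have hvar : variance (g ∘ X) μ = p i - p i ^ 2 := by rw [hVX' g, hsq, hm]
    have hvpos : 0 < variance (g ∘ X) μ := by
      rw [hvar]; nlinarith [hppos i, hplt1 i]
    have hvposY : 0 < variance (g ∘ Y) μ := by
      rw [show variance (g ∘ Y) μ = variance (g ∘ X) μ by rw [hVX, hVY]]
      exact hvpos
    have hgm : Measurable g := by
      apply Measurable.ite _ measurable_const measurable_const
      exact measurableSet_eq
    have hadm : Admissible μ X Y g :=
      ⟨hgm, memLp_comp μ hXm hinj hXsupp g, memLp_comp μ hYm hinj hYsupp g, hvpos, hvposY⟩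
    have heq := hkey g hadm (hIC.2 g hadm)
    rw [hCov' g, hvar, hqq, hm] at heq
    linarith [heq]
  have hoff : IC μ X Y r → ∀ i j, i ≠ j →
      (P i i - P i j) - (P j i - P j j) - (p i - p j) ^ 2
        = r * ((p i + p j) - (p i - p j) ^ 2) := by
    intro hIC i j hij
    set g : ℝ → ℝ := fun t => (if t = x i then 1 else 0) - (if t = x j then 1 else 0)
      with hgdef
    have hval : ∀ k, g (x k) = (if k = i then 1 else 0) - (if k = j then 1 else 0) := by
      intro k
      have e1 : (if x k = x i then (1 : ℝ) else 0) = if k = i then 1 else 0 := by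
        by_cases h : k = i
        · simp [h]
        · rw [if_neg (fun hxx : x k = x i => h (hinj hxx)), if_neg h]
      have e2 : (if x k = x j then (1 : ℝ) else 0) = if k = j then 1 else 0 := by
        by_cases h : k = j
        · simp [h]
        · rw [if_neg (fun hxx : x k = x j => h (hinj hxx)), if_neg h]
      rw [hgdef]; dsimp only; rw [e1, e2]
    have hgi : g (x i) = 1 := by rw [hval i, if_pos rfl, if_neg hij]; norm_num
    have hgj : g (x j) = -1 := by rw [hval j, if_pos rfl, if_neg (Ne.symm hij)]; norm_num
    have hm : ∑ k, g (x k) * p k = p i - p j := by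
      simp only [hval]; exact hcoll2 i j p
    have hsq : ∑ k, g (x k) ^ 2 * p k = p i + p j := by
      have : ∑ k, g (x k) ^ 2 * p k = ∑ k, ((if k = i then (1 : ℝ) else 0)
          - (if k = j then 1 else 0)) * (g (x k) * p k) :=
        Finset.sum_congr rfl fun k _ => by rw [hval k]; ring
      rw [this, hcoll2 i j, hgi, hgj]; ring
    have hqq : ∑ k, ∑ l, g (x k) * g (x l) * P k l
        = (P i i - P i j) - (P j i - P j j) := by
      have hin : ∀ k, ∑ l, g (x k) * g (x l) * P k l = g (x k) * (P k i - P k j) := by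
        intro k
        calc ∑ l, g (x k) * g (x l) * P k l
            = ∑ l, ((if l = i then (1 : ℝ) else 0) - (if l = j then 1 else 0))
                * (g (x k) * P k l) :=
              Finset.sum_congr rfl fun l _ => by rw [hval l]; ring
          _ = g (x k) * P k i - g (x k) * P k j := hcoll2 i j _
          _ = g (x k) * (P k i - P k j) := by ring
      calc ∑ k, ∑ l, g (x k) * g (x l) * P k l
          = ∑ k, ((if k = i then (1 : ℝ) else 0) - (if k = j then 1 else 0))
              * (P k i - P k j) := by
            refine Finset.sum_congr rfl fun k _ => ?_
            rw [hin k, hval k]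
        _ = (P i i - P i j) - (P j i - P j j) := hcoll2 i j _
    have hvar : variance (g ∘ X) μ = (p i + p j) - (p i - p j) ^ 2 := by
      rw [hVX' g, hsq, hm]
    have hvpos : 0 < variance (g ∘ X) μ := by
      rw [hvar]
      nlinarith [hppos i, hppos j, hpair i j hij, mul_pos (hppos i) (hppos j)]
    have hvposY : 0 < variance (g ∘ Y) μ := by
      rw [show variance (g ∘ Y) μ = variance (g ∘ X) μ by rw [hVX, hVY]]
      exact hvpos
    have hgm : Measurable g := by
      apply Measurable.sub
      · exact Measurable.ite measurableSet_eq measurable_const measurable_const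
      · exact Measurable.ite measurableSet_eq measurable_const measurable_const
    have hadm : Admissible μ X Y g :=
      ⟨hgm, memLp_comp μ hXm hinj hXsupp g, memLp_comp μ hYm hinj hYsupp g, hvpos, hvposY⟩
    have heq := hkey g hadm (hIC.2 g hadm)
    rw [hCov' g, hvar, hqq, hm] at heq
    linarith [heq]
  have hMtoE : ((2 : ℝ)⁻¹ • (P + Pᵀ) = r • Matrix.diagonal p + (1 - r) • vecMulVec p p) →
      ∀ i j, 2⁻¹ * (P i j + P j i)
        = r * (if i = j then p i else 0) + (1 - r) * (p i * p j) := by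
    intro hM i j
    have h := Matrix.ext_iff.mpr hM i j
    simpa [Matrix.add_apply, Matrix.smul_apply, Matrix.transpose_apply,
      Matrix.diagonal_apply, Matrix.vecMulVec_apply, smul_eq_mul] using h
  have hback : ((2 : ℝ)⁻¹ • (P + Pᵀ) = r • Matrix.diagonal p + (1 - r) • vecMulVec p p) →
      IC μ X Y r := by
    intro hM
    have hE := hMtoE hM
    have hcovr : ∀ g : ℝ → ℝ, cov μ (g ∘ X) (g ∘ Y) = r * variance (g ∘ X) μ := by
      intro g
      rw [hCov g, hVX g]
      exact quad_sum P p (fun k => g (x k) - ∑ l, g (x l) * p l) r hE (hzero g)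
    have hcorrg : ∀ g : ℝ → ℝ, 0 < variance (g ∘ X) μ → corr μ (g ∘ X) (g ∘ Y) = r := by
      intro g hv
      rw [hcorr g, hcovr g, mul_div_assoc, div_self (ne_of_gt hv), mul_one]
    have hidX : (fun t : ℝ => t) ∘ X = X := rfl
    have hidY : (fun t : ℝ => t) ∘ Y = Y := rfl
    have hvid : variance X μ = ∑ i, (x i - ∑ k, x k * p k) ^ 2 * p i := by
      exact hVX (fun t => t)
    have hvXpos : 0 < variance X μ := by
      rw [hvid]
      apply Finset.sum_pos' (fun i _ => mul_nonneg (sq_nonneg _) (hppos i).le)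
      have h01 : (⟨0, by omega⟩ : Fin n) < ⟨1, by omega⟩ := by simp [Fin.lt_def]
      have hxlt := hx h01
      by_cases h : x ⟨0, by omega⟩ = ∑ k, x k * p k
      · refine ⟨⟨1, by omega⟩, Finset.mem_univ _, ?_⟩
        have hne : x ⟨1, by omega⟩ - ∑ k, x k * p k ≠ 0 := by
          rw [← h]
          exact sub_ne_zero.2 (ne_of_gt hxlt)
        exact mul_pos (pow_two_pos_of_ne_zero hne) (hppos _)
      · refine ⟨⟨0, by omega⟩, Finset.mem_univ _, ?_⟩
        exact mul_pos (pow_two_pos_of_ne_zero (sub_ne_zero.2 h)) (hppos _)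
    have hvYX : variance Y μ = variance X μ := by
      rw [← hidX, ← hidY, hVX, hVY]
    have hcXY : corr μ X Y = r := by
      unfold corr
      rw [hvYX, Real.sqrt_mul_self (variance_nonneg _ _)]
      have hc := hcovr (fun t => t)
      rw [hidX, hidY] at hc
      rw [hc, mul_div_assoc, div_self (ne_of_gt hvXpos), mul_one]
    exact ⟨hcXY, fun g hadm => hcorrg g hadm.2.2.2.1⟩
  have hfwd : IC μ X Y r →
      (2 : ℝ)⁻¹ • (P + Pᵀ) = r • Matrix.diagonal p + (1 - r) • vecMulVec p p := by
    intro hIC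
    have hd := hdiag hIC
    have ho := hoff hIC
    ext i j
    simp only [Matrix.smul_apply, Matrix.add_apply, Matrix.transpose_apply,
      Matrix.diagonal_apply, Matrix.vecMulVec_apply, smul_eq_mul]
    by_cases hij : i = j
    · subst hij
      rw [if_pos rfl]
      linear_combination hd i
    · rw [if_neg hij]
      linear_combination (hd i + hd j - ho i j hij) / 2
  refine ⟨⟨hfwd, hback⟩, ?_⟩
  intro hIC
  have hE := hMtoE (hfwd hIC)
  have hPnn : ∀ i j, 0 ≤ P i j := fun i j => by
    rw [hPdef]; exact ENNReal.toReal_nonneg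
  have hPle1 : ∀ i j, P i j ≤ 1 := by
    intro i j
    rw [hPdef]
    have h1 : μ {ω | X ω = x i ∧ Y ω = x j} ≤ 1 := prob_le_one
    calc (μ {ω | X ω = x i ∧ Y ω = x j}).toReal
        ≤ (1 : ENNReal).toReal := ENNReal.toReal_mono (by norm_num) h1
      _ = 1 := by simp
  refine ⟨?_, ?_, hr.2⟩
  · intro j
    have h := hE j j
    rw [if_pos rfl] at h
    have h0 := hPnn j j
    rw [div_le_iff₀ (by linarith [hplt1 j])]
    nlinarith [hppos j, hplt1 j, h, h0]
  · intro i j hij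
    have h := hE i j
    rw [if_neg hij] at h
    have hpq : 0 < p i * p j := mul_pos (hppos i) (hppos j)
    have h1 : (1 - r) * (p i * p j) ≤ 1 := by nlinarith [hPle1 i j, hPle1 j i]
    have h2 : 1 - r ≤ 1 / (p i * p j) := (le_div_iff₀ hpq).2 h1
    linarith
end

section
/- Let X and Y be identically distributed real random variables with common CDF F and finite positive variance, and let H be the joint CDF of (X,Y). Then (X,Y) ∈ IC_r if and only if (X,Y) is quasi-r-Fréchet, i.e. (H(x,y) + H(y,x))/2 = r·min(F(x),F(y)) + (1−r)·F(x)F(y) for all x, y ∈ ℝ. -/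
open MeasureTheory ProbabilityTheory

variable {Ω : Type*} [MeasurableSpace Ω]

namespace ICAux

open Set

set_option linter.unusedSectionVars false

variable {μ : Measure Ω}

lemma ind_mul_ind (A B : Set Ω) (ω : Ω) :
    A.indicator (fun _ => (1:ℝ)) ω * B.indicator (fun _ => (1:ℝ)) ω
      = (A ∩ B).indicator (fun _ => (1:ℝ)) ω := by
  by_cases hA : ω ∈ A <;> by_cases hB : ω ∈ B <;>
    simp [Set.indicator_apply, hA, hB, Set.mem_inter_iff]

lemma integrable_ind [IsFiniteMeasure μ] {A : Set Ω} (hA : MeasurableSet A) :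
    Integrable (A.indicator fun _ => (1:ℝ)) μ :=
  (integrable_const (1:ℝ)).indicator hA

lemma integral_ind [IsFiniteMeasure μ] {A : Set Ω} (hA : MeasurableSet A) :
    ∫ ω, A.indicator (fun _ => (1:ℝ)) ω ∂μ = (μ A).toReal := by
  rw [integral_indicator_const (1:ℝ) hA, smul_eq_mul, mul_one]; rfl

lemma memℒp_ind [IsFiniteMeasure μ] {A : Set Ω} (hA : MeasurableSet A) :
    MemLp (A.indicator fun _ => (1:ℝ)) 2 μ := by
  refine MemLp.of_bound (measurable_const.indicator hA).aestronglyMeasurable 1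
    (Filter.Eventually.of_forall fun ω => ?_)
  by_cases h : ω ∈ A <;> simp [Set.indicator_apply, h]

lemma integrable_mul₂ {f g : Ω → ℝ} (hf : MemLp f 2 μ) (hg : MemLp g 2 μ) :
    Integrable (fun ω => f ω * g ω) μ := by
  have h : MemLp (f • g) 1 μ :=
    hg.smul hf
  have := memLp_one_iff_integrable.mp h
  exact this

lemma cov_eq [IsProbabilityMeasure μ] {f g : Ω → ℝ} (hf : MemLp f 2 μ) (hg : MemLp g 2 μ) :
    cov μ f g = (∫ ω, f ω * g ω ∂μ) - (∫ ω, f ω ∂μ) * ∫ ω, g ω ∂μ := by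
  have hfi : Integrable f μ := hf.integrable one_le_two
  have hgi : Integrable g μ := hg.integrable one_le_two
  have hfg : Integrable (fun ω => f ω * g ω) μ := integrable_mul₂ hf hg
  unfold cov
  set a := ∫ ω, f ω ∂μ with ha
  set b := ∫ ω, g ω ∂μ with hb
  have h : (fun ω => (f ω - a) * (g ω - b))
      = fun ω => (f ω * g ω - b * f ω) - (a * g ω - a * b) := funext fun ω => by ring
  have h1 : Integrable (fun ω => f ω * g ω - b * f ω) μ := hfg.sub (hfi.const_mul b)
  have h2 : Integrable (fun ω => a * g ω - a * b) μ :=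
    (hgi.const_mul a).sub (integrable_const _)
  rw [h, integral_sub h1 h2, integral_sub hfg (hfi.const_mul b),
    integral_sub (hgi.const_mul a) (integrable_const _),
    integral_const_mul, integral_const_mul, integral_const]
  simp [measure_univ]
  ring

lemma variance_eq_mul [IsProbabilityMeasure μ] {f : Ω → ℝ} (hf : MemLp f 2 μ) :
    variance f μ = ∫ ω, f ω * f ω ∂μ - (∫ ω, f ω ∂μ) ^ 2 := by
  have h : (f ^ 2) = fun ω => f ω * f ω := funext fun ω => by
    simp [pow_two]
  rw [variance_eq_sub hf, h]

lemma cov_of_corr [IsProbabilityMeasure μ] {f g : Ω → ℝ} {r : ℝ}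
    (hvf : 0 < variance f μ) (hveq : variance g μ = variance f μ)
    (h : corr μ f g = r) : cov μ f g = r * variance f μ := by
  unfold corr at h
  rw [hveq, Real.sqrt_mul_self hvf.le, div_eq_iff hvf.ne'] at h
  exact h

variable {X Y : Ω → ℝ}

lemma map_eq_of_ident [IsProbabilityMeasure μ] (hXm : Measurable X) (hYm : Measurable Y)
    (hident : ∀ x : ℝ, μ {ω | X ω ≤ x} = μ {ω | Y ω ≤ x}) : μ.map X = μ.map Y := by
  haveI := Measure.isProbabilityMeasure_map (μ := μ) hXm.aemeasurable
  refine Measure.ext_of_Iic (μ.map X) (μ.map Y) fun a => ?_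
  rw [Measure.map_apply hXm measurableSet_Iic, Measure.map_apply hYm measurableSet_Iic]
  exact hident a

lemma toReal_min_meas [IsFiniteMeasure μ] (a b : ℝ) :
    (μ ({ω | X ω ≤ a} ∩ {ω | X ω ≤ b})).toReal
      = min (μ {ω | X ω ≤ a}).toReal (μ {ω | X ω ≤ b}).toReal := by
  rcases le_total a b with hab | hab
  · have hsub : {ω | X ω ≤ a} ⊆ {ω | X ω ≤ b} := fun ω h => le_trans h hab
    have hset : {ω | X ω ≤ a} ∩ {ω | X ω ≤ b} = {ω | X ω ≤ a} :=
      Set.inter_eq_left.mpr hsub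
    have hle : (μ {ω | X ω ≤ a}).toReal ≤ (μ {ω | X ω ≤ b}).toReal :=
      ENNReal.toReal_mono (measure_ne_top μ _) (measure_mono hsub)
    rw [hset, min_eq_left hle]
  · have hsub : {ω | X ω ≤ b} ⊆ {ω | X ω ≤ a} := fun ω h => le_trans h hab
    have hset : {ω | X ω ≤ a} ∩ {ω | X ω ≤ b} = {ω | X ω ≤ b} :=
      Set.inter_eq_right.mpr hsub
    have hle : (μ {ω | X ω ≤ b}).toReal ≤ (μ {ω | X ω ≤ a}).toReal :=
      ENNReal.toReal_mono (measure_ne_top μ _) (measure_mono hsub)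
    rw [hset, min_eq_right hle]

lemma integral_ind_add_mul [IsProbabilityMeasure μ] {A1 A2 B1 B2 : Set Ω}
    (m1 : MeasurableSet A1) (m2 : MeasurableSet A2)
    (m3 : MeasurableSet B1) (m4 : MeasurableSet B2) :
    ∫ ω, (A1.indicator (fun _ => (1:ℝ)) ω + A2.indicator (fun _ => 1) ω)
        * (B1.indicator (fun _ => (1:ℝ)) ω + B2.indicator (fun _ => 1) ω) ∂μ
      = (μ (A1 ∩ B1)).toReal + (μ (A1 ∩ B2)).toReal
        + (μ (A2 ∩ B1)).toReal + (μ (A2 ∩ B2)).toReal := by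
  have h : ∀ ω, (A1.indicator (fun _ => (1:ℝ)) ω + A2.indicator (fun _ => 1) ω)
        * (B1.indicator (fun _ => (1:ℝ)) ω + B2.indicator (fun _ => 1) ω)
      = (A1 ∩ B1).indicator (fun _ => (1:ℝ)) ω + ((A1 ∩ B2).indicator (fun _ => (1:ℝ)) ω
          + ((A2 ∩ B1).indicator (fun _ => (1:ℝ)) ω
            + (A2 ∩ B2).indicator (fun _ => (1:ℝ)) ω)) := by
    intro ω
    rw [← ind_mul_ind, ← ind_mul_ind, ← ind_mul_ind, ← ind_mul_ind]; ring
  have i1 : Integrable ((A1 ∩ B1).indicator fun _ => (1:ℝ)) μ := integrable_ind (m1.inter m3)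
  have i2 : Integrable ((A1 ∩ B2).indicator fun _ => (1:ℝ)) μ := integrable_ind (m1.inter m4)
  have i3 : Integrable ((A2 ∩ B1).indicator fun _ => (1:ℝ)) μ := integrable_ind (m2.inter m3)
  have i4 : Integrable ((A2 ∩ B2).indicator fun _ => (1:ℝ)) μ := integrable_ind (m2.inter m4)
  have i34 : Integrable (fun ω => (A2 ∩ B1).indicator (fun _ => (1:ℝ)) ω
      + (A2 ∩ B2).indicator (fun _ => (1:ℝ)) ω) μ := i3.add i4
  have i234 : Integrable (fun ω => (A1 ∩ B2).indicator (fun _ => (1:ℝ)) ω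
      + ((A2 ∩ B1).indicator (fun _ => (1:ℝ)) ω
        + (A2 ∩ B2).indicator (fun _ => (1:ℝ)) ω)) μ := i2.add i34
  simp_rw [h]
  rw [integral_add i1 i234, integral_add i2 i34, integral_add i3 i4,
    integral_ind (m1.inter m3), integral_ind (m1.inter m4),
    integral_ind (m2.inter m3), integral_ind (m2.inter m4)]
  ring

lemma key_eq [IsProbabilityMeasure μ] {r : ℝ}
    (hXm : Measurable X) (hYm : Measurable Y)
    (hident : ∀ x : ℝ, μ {ω | X ω ≤ x} = μ {ω | Y ω ≤ x})
    (hIC : ∀ g : ℝ → ℝ, Admissible μ X Y g → corr μ (g ∘ X) (g ∘ Y) = r)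
    (a b : ℝ)
    (ha0 : 0 < (μ {ω | X ω ≤ a}).toReal) (ha1 : (μ {ω | X ω ≤ a}).toReal < 1)
    (hb0 : 0 < (μ {ω | X ω ≤ b}).toReal) (hb1 : (μ {ω | X ω ≤ b}).toReal < 1) :
    (μ {ω | X ω ≤ a ∧ Y ω ≤ a}).toReal + (μ {ω | X ω ≤ a ∧ Y ω ≤ b}).toReal
      + (μ {ω | X ω ≤ b ∧ Y ω ≤ a}).toReal + (μ {ω | X ω ≤ b ∧ Y ω ≤ b}).toReal
      - ((μ {ω | X ω ≤ a}).toReal + (μ {ω | X ω ≤ b}).toReal) ^ 2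
    = r * ((μ {ω | X ω ≤ a}).toReal + (μ {ω | X ω ≤ b}).toReal
        + 2 * (μ ({ω | X ω ≤ a} ∩ {ω | X ω ≤ b})).toReal
        - ((μ {ω | X ω ≤ a}).toReal + (μ {ω | X ω ≤ b}).toReal) ^ 2) := by
  simp only [Set.setOf_and]
  set A1 : Set Ω := {ω | X ω ≤ a} with hA1
  set A2 : Set Ω := {ω | X ω ≤ b} with hA2
  set B1 : Set Ω := {ω | Y ω ≤ a} with hB1
  set B2 : Set Ω := {ω | Y ω ≤ b} with hB2
  have mA1 : MeasurableSet A1 := measurableSet_le hXm measurable_const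
  have mA2 : MeasurableSet A2 := measurableSet_le hXm measurable_const
  have mB1 : MeasurableSet B1 := measurableSet_le hYm measurable_const
  have mB2 : MeasurableSet B2 := measurableSet_le hYm measurable_const
  set u : Ω → ℝ := fun ω => A1.indicator (fun _ => (1:ℝ)) ω + A2.indicator (fun _ => 1) ω
    with hu
  set v : Ω → ℝ := fun ω => B1.indicator (fun _ => (1:ℝ)) ω + B2.indicator (fun _ => 1) ω
    with hv
  set g : ℝ → ℝ := fun s =>
      (Set.Iic a).indicator (fun _ => (1:ℝ)) s + (Set.Iic b).indicator (fun _ => 1) s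
    with hgdef
  have hgm : Measurable g :=
    (measurable_const.indicator measurableSet_Iic).add
      (measurable_const.indicator measurableSet_Iic)
  have hgX : g ∘ X = u := by
    funext ω
    by_cases h1 : X ω ≤ a <;> by_cases h2 : X ω ≤ b <;>
      simp [hgdef, hu, hA1, hA2, Set.indicator_apply, Set.mem_Iic, Set.mem_setOf_eq, h1, h2,
        Function.comp]
  have hgY : g ∘ Y = v := by
    funext ω
    by_cases h1 : Y ω ≤ a <;> by_cases h2 : Y ω ≤ b <;>
      simp [hgdef, hv, hB1, hB2, Set.indicator_apply, Set.mem_Iic, Set.mem_setOf_eq, h1, h2,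
        Function.comp]
  have hu2 : MemLp u 2 μ := (memℒp_ind mA1).add (memℒp_ind mA2)
  have hv2 : MemLp v 2 μ := (memℒp_ind mB1).add (memℒp_ind mB2)
  have hiu : ∫ ω, u ω ∂μ = (μ A1).toReal + (μ A2).toReal := by
    rw [hu]
    rw [integral_add (integrable_ind mA1) (integrable_ind mA2),
      integral_ind mA1, integral_ind mA2]
  have hiv : ∫ ω, v ω ∂μ = (μ A1).toReal + (μ A2).toReal := by
    rw [hv]
    rw [integral_add (integrable_ind mB1) (integrable_ind mB2),
      integral_ind mB1, integral_ind mB2, hA1, hA2, hB1, hB2, hident a, hident b]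
  have hBA1 : μ B1 = μ A1 := by rw [hA1, hB1]; exact (hident a).symm
  have hBA2 : μ B2 = μ A2 := by rw [hA2, hB2]; exact (hident b).symm
  have hAB12 : μ (B1 ∩ B2) = μ (A1 ∩ A2) := by
    have e1 : A1 ∩ A2 = {ω | X ω ≤ min a b} := by
      rw [hA1, hA2]; ext ω; simp [le_min_iff, Set.mem_setOf_eq]
    have e2 : B1 ∩ B2 = {ω | Y ω ≤ min a b} := by
      rw [hB1, hB2]; ext ω; simp [le_min_iff, Set.mem_setOf_eq]
    rw [e1, e2, ← hident (min a b)]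
  have hprod_u : ∫ ω, u ω * u ω ∂μ = (μ A1).toReal + (μ (A1 ∩ A2)).toReal
      + (μ (A1 ∩ A2)).toReal + (μ A2).toReal := by
    simp only [hu]
    rw [integral_ind_add_mul mA1 mA2 mA1 mA2, Set.inter_self, Set.inter_self,
      Set.inter_comm A2 A1]
  have hprod_v : ∫ ω, v ω * v ω ∂μ = (μ A1).toReal + (μ (A1 ∩ A2)).toReal
      + (μ (A1 ∩ A2)).toReal + (μ A2).toReal := by
    simp only [hv]
    rw [integral_ind_add_mul mB1 mB2 mB1 mB2, Set.inter_self, Set.inter_self,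
      Set.inter_comm B2 B1, hAB12, hBA1, hBA2]
  have hvu : variance u μ = (μ A1).toReal + (μ A2).toReal + 2 * (μ (A1 ∩ A2)).toReal
      - ((μ A1).toReal + (μ A2).toReal) ^ 2 := by
    rw [variance_eq_mul hu2, hprod_u, hiu]; ring
  have hvv : variance v μ = (μ A1).toReal + (μ A2).toReal + 2 * (μ (A1 ∩ A2)).toReal
      - ((μ A1).toReal + (μ A2).toReal) ^ 2 := by
    rw [variance_eq_mul hv2, hprod_v, hiv]; ring
  have hmin : (μ (A1 ∩ A2)).toReal = min (μ A1).toReal (μ A2).toReal := by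
    rw [hA1, hA2]; exact toReal_min_meas a b
  have hvpos : 0 < (μ A1).toReal + (μ A2).toReal + 2 * (μ (A1 ∩ A2)).toReal
      - ((μ A1).toReal + (μ A2).toReal) ^ 2 := by
    rw [hmin]
    rcases le_total (μ A1).toReal (μ A2).toReal with h | h
    · rw [min_eq_left h]; nlinarith
    · rw [min_eq_right h]; nlinarith
  have hadm : Admissible μ X Y g :=
    ⟨hgm, by rw [hgX]; exact hu2, by rw [hgY]; exact hv2,
      by rw [hgX, hvu]; exact hvpos, by rw [hgY, hvv]; exact hvpos⟩
  have hcorr := hIC g hadm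
  rw [hgX, hgY] at hcorr
  have hveq : variance v μ = variance u μ := by rw [hvu, hvv]
  have hcov : cov μ u v = r * variance u μ :=
    cov_of_corr (by rw [hvu]; exact hvpos) hveq hcorr
  have hcove : cov μ u v = (μ (A1 ∩ B1)).toReal + (μ (A1 ∩ B2)).toReal
      + (μ (A2 ∩ B1)).toReal + (μ (A2 ∩ B2)).toReal
      - ((μ A1).toReal + (μ A2).toReal) * ((μ A1).toReal + (μ A2).toReal) := by
    rw [cov_eq hu2 hv2, hiu, hiv]
    simp only [hu, hv]
    rw [integral_ind_add_mul mA1 mA2 mB1 mB2]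
  have hfin : (μ (A1 ∩ B1)).toReal + (μ (A1 ∩ B2)).toReal
      + (μ (A2 ∩ B1)).toReal + (μ (A2 ∩ B2)).toReal
      - ((μ A1).toReal + (μ A2).toReal) * ((μ A1).toReal + (μ A2).toReal)
      = r * ((μ A1).toReal + (μ A2).toReal + 2 * (μ (A1 ∩ A2)).toReal
        - ((μ A1).toReal + (μ A2).toReal) ^ 2) := by
    rw [← hcove, hcov, hvu]
  linear_combination hfin

lemma ext_rect (A B : Measure (ℝ × ℝ)) [IsFiniteMeasure A] [IsFiniteMeasure B]
    (h : ∀ a b : ℝ, A (Set.Iic a ×ˢ Set.Iic b) = B (Set.Iic a ×ˢ Set.Iic b))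
    (huniv : A Set.univ = B Set.univ) : A = B := by
  have hspan : IsCountablySpanning (Set.range (Set.Iic : ℝ → Set ℝ)) := by
    refine ⟨fun n => Set.Iic (n : ℝ), fun n => Set.mem_range_self _, ?_⟩
    ext x
    simp only [Set.mem_iUnion, Set.mem_Iic, Set.mem_univ, iff_true]
    obtain ⟨n, hn⟩ := exists_nat_ge x
    exact ⟨n, hn⟩
  have hIic : MeasurableSpace.generateFrom (Set.range (Set.Iic : ℝ → Set ℝ))
      = (inferInstance : MeasurableSpace ℝ) :=
    (borel_eq_generateFrom_Iic ℝ).symm.trans (BorelSpace.measurable_eq (α := ℝ)).symm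
  have hgen : (inferInstance : MeasurableSpace (ℝ × ℝ))
      = MeasurableSpace.generateFrom
        (Set.image2 (· ×ˢ ·) (Set.range (Set.Iic : ℝ → Set ℝ))
          (Set.range (Set.Iic : ℝ → Set ℝ))) :=
    (generateFrom_eq_prod hIic hIic hspan hspan).symm
  refine ext_of_generate_finite _ hgen (isPiSystem_Iic.prod isPiSystem_Iic) ?_ huniv
  rintro _ ⟨s, ⟨a, rfl⟩, t, ⟨b, rfl⟩, rfl⟩
  exact h a b

end ICAux

/-- For identically distributed `X, Y` with common CDF `F`, `(X,Y) ∈ IC_r`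
iff `(X,Y)` is quasi-`r`-Fréchet, i.e.
`(H(x,y) + H(y,x))/2 = r·min(F(x),F(y)) + (1-r)·F(x)F(y)` for all `x, y`. -/
theorem ic_iff_quasi_frechet
    (μ : Measure Ω) [IsProbabilityMeasure μ] (X Y : Ω → ℝ)
    (hXm : Measurable X) (hYm : Measurable Y)
    (hX2 : MemLp X 2 μ) (hY2 : MemLp Y 2 μ)
    (hvX : 0 < variance X μ) (hvY : 0 < variance Y μ)
    (hident : ∀ x : ℝ, μ {ω | X ω ≤ x} = μ {ω | Y ω ≤ x})
    (r : ℝ) (hr : r ∈ Set.Icc (-1 : ℝ) 1) :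
    IC μ X Y r ↔
      ∀ x y : ℝ,
        ((μ {ω | X ω ≤ x ∧ Y ω ≤ y}).toReal + (μ {ω | X ω ≤ y ∧ Y ω ≤ x}).toReal) / 2 =
          r * min ((μ {ω | X ω ≤ x}).toReal) ((μ {ω | X ω ≤ y}).toReal) +
            (1 - r) * ((μ {ω | X ω ≤ x}).toReal * (μ {ω | X ω ≤ y}).toReal) := by
  have hmap : μ.map X = μ.map Y := ICAux.map_eq_of_ident hXm hYm hident
  have htop1 : ∀ s : Set Ω, (μ s).toReal ≤ 1 := fun s => by
    simpa using ENNReal.toReal_mono ENNReal.one_ne_top (prob_le_one (μ := μ) (s := s))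
  constructor
  · rintro ⟨-, hIC2⟩ x y
    by_cases hP0 : μ {ω | X ω ≤ x} = 0
    · have h1 : μ {ω | X ω ≤ x ∧ Y ω ≤ y} = 0 :=
        measure_mono_null (fun ω h => h.1) hP0
      have hYx : μ {ω | Y ω ≤ x} = 0 := by rw [← hident x]; exact hP0
      have h2 : μ {ω | X ω ≤ y ∧ Y ω ≤ x} = 0 :=
        measure_mono_null (fun ω h => h.2) hYx
      have hm : min (0:ℝ) ((μ {ω | X ω ≤ y}).toReal) = 0 :=
        min_eq_left ENNReal.toReal_nonneg
      rw [h1, h2, hP0]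
      simp [hm]
    by_cases hQ0 : μ {ω | X ω ≤ y} = 0
    · have hYy : μ {ω | Y ω ≤ y} = 0 := by rw [← hident y]; exact hQ0
      have h1 : μ {ω | X ω ≤ x ∧ Y ω ≤ y} = 0 :=
        measure_mono_null (fun ω h => h.2) hYy
      have h2 : μ {ω | X ω ≤ y ∧ Y ω ≤ x} = 0 :=
        measure_mono_null (fun ω h => h.1) hQ0
      have hm : min ((μ {ω | X ω ≤ x}).toReal) (0:ℝ) = 0 :=
        min_eq_right ENNReal.toReal_nonneg
      rw [h1, h2, hQ0]
      simp [hm]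
    by_cases hP1 : μ {ω | X ω ≤ x} = 1
    · have hsX : MeasurableSet {ω | X ω ≤ x} := measurableSet_le hXm measurable_const
      have hcX : μ {ω | X ω ≤ x}ᶜ = 0 := (prob_compl_eq_zero_iff hsX).mpr hP1
      have hY1 : μ {ω | Y ω ≤ x} = 1 := by rw [← hident x]; exact hP1
      have hsY : MeasurableSet {ω | Y ω ≤ x} := measurableSet_le hYm measurable_const
      have hcY : μ {ω | Y ω ≤ x}ᶜ = 0 := (prob_compl_eq_zero_iff hsY).mpr hY1
      have h1 : μ {ω | X ω ≤ x ∧ Y ω ≤ y} = μ {ω | X ω ≤ y} := by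
        refine le_antisymm ?_ ?_
        · calc μ {ω | X ω ≤ x ∧ Y ω ≤ y} ≤ μ {ω | Y ω ≤ y} :=
            measure_mono fun ω h => h.2
          _ = μ {ω | X ω ≤ y} := (hident y).symm
        · calc μ {ω | X ω ≤ y} = μ {ω | Y ω ≤ y} := hident y
          _ = μ ({ω | Y ω ≤ y} \ {ω | X ω ≤ x}ᶜ) := (measure_diff_null hcX).symm
          _ ≤ μ {ω | X ω ≤ x ∧ Y ω ≤ y} :=
            measure_mono fun ω h => ⟨not_not.mp h.2, h.1⟩
      have h2 : μ {ω | X ω ≤ y ∧ Y ω ≤ x} = μ {ω | X ω ≤ y} := by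
        refine le_antisymm (measure_mono fun ω h => h.1) ?_
        calc μ {ω | X ω ≤ y} = μ ({ω | X ω ≤ y} \ {ω | Y ω ≤ x}ᶜ) :=
          (measure_diff_null hcY).symm
        _ ≤ μ {ω | X ω ≤ y ∧ Y ω ≤ x} :=
          measure_mono fun ω h => ⟨h.1, not_not.mp h.2⟩
      have hm : min (1:ℝ) ((μ {ω | X ω ≤ y}).toReal) = (μ {ω | X ω ≤ y}).toReal :=
        min_eq_right (htop1 _)
      rw [h1, h2, hP1]
      simp only [ENNReal.toReal_one, hm]
      ring
    by_cases hQ1 : μ {ω | X ω ≤ y} = 1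
    · have hsX : MeasurableSet {ω | X ω ≤ y} := measurableSet_le hXm measurable_const
      have hcX : μ {ω | X ω ≤ y}ᶜ = 0 := (prob_compl_eq_zero_iff hsX).mpr hQ1
      have hY1 : μ {ω | Y ω ≤ y} = 1 := by rw [← hident y]; exact hQ1
      have hsY : MeasurableSet {ω | Y ω ≤ y} := measurableSet_le hYm measurable_const
      have hcY : μ {ω | Y ω ≤ y}ᶜ = 0 := (prob_compl_eq_zero_iff hsY).mpr hY1
      have h1 : μ {ω | X ω ≤ x ∧ Y ω ≤ y} = μ {ω | X ω ≤ x} := by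
        refine le_antisymm (measure_mono fun ω h => h.1) ?_
        calc μ {ω | X ω ≤ x} = μ ({ω | X ω ≤ x} \ {ω | Y ω ≤ y}ᶜ) :=
          (measure_diff_null hcY).symm
        _ ≤ μ {ω | X ω ≤ x ∧ Y ω ≤ y} :=
          measure_mono fun ω h => ⟨h.1, not_not.mp h.2⟩
      have h2 : μ {ω | X ω ≤ y ∧ Y ω ≤ x} = μ {ω | X ω ≤ x} := by
        refine le_antisymm ?_ ?_
        · calc μ {ω | X ω ≤ y ∧ Y ω ≤ x} ≤ μ {ω | Y ω ≤ x} :=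
            measure_mono fun ω h => h.2
          _ = μ {ω | X ω ≤ x} := (hident x).symm
        · calc μ {ω | X ω ≤ x} = μ {ω | Y ω ≤ x} := hident x
          _ = μ ({ω | Y ω ≤ x} \ {ω | X ω ≤ y}ᶜ) := (measure_diff_null hcX).symm
          _ ≤ μ {ω | X ω ≤ y ∧ Y ω ≤ x} :=
            measure_mono fun ω h => ⟨not_not.mp h.2, h.1⟩
      have hm : min ((μ {ω | X ω ≤ x}).toReal) (1:ℝ) = (μ {ω | X ω ≤ x}).toReal :=
        min_eq_left (htop1 _)
      rw [h1, h2, hQ1]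
      simp only [ENNReal.toReal_one, hm]
      ring
    · have hp0 : 0 < (μ {ω | X ω ≤ x}).toReal :=
        ENNReal.toReal_pos hP0 (measure_ne_top μ _)
      have hq0 : 0 < (μ {ω | X ω ≤ y}).toReal :=
        ENNReal.toReal_pos hQ0 (measure_ne_top μ _)
      have hp1 : (μ {ω | X ω ≤ x}).toReal < 1 := by
        have hlt : μ {ω | X ω ≤ x} < 1 := lt_of_le_of_ne prob_le_one hP1
        simpa using (ENNReal.toReal_lt_toReal (measure_ne_top μ _) ENNReal.one_ne_top).mpr hlt
      have hq1 : (μ {ω | X ω ≤ y}).toReal < 1 := by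
        have hlt : μ {ω | X ω ≤ y} < 1 := lt_of_le_of_ne prob_le_one hQ1
        simpa using (ENNReal.toReal_lt_toReal (measure_ne_top μ _) ENNReal.one_ne_top).mpr hlt
      have K1 := ICAux.key_eq hXm hYm hident hIC2 x y hp0 hp1 hq0 hq1
      have K2 := ICAux.key_eq hXm hYm hident hIC2 x x hp0 hp1 hp0 hp1
      have K3 := ICAux.key_eq hXm hYm hident hIC2 y y hq0 hq1 hq0 hq1
      have hminxy := ICAux.toReal_min_meas (μ := μ) (X := X) x y
      rw [hminxy] at K1
      have hxx : {ω | X ω ≤ x} ∩ {ω | X ω ≤ x} = {ω | X ω ≤ x} := Set.inter_self _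
      have hyy : {ω | X ω ≤ y} ∩ {ω | X ω ≤ y} = {ω | X ω ≤ y} := Set.inter_self _
      rw [hxx] at K2
      rw [hyy] at K3
      linear_combination (1/2) * K1 - (1/8) * K2 - (1/8) * K3
  · intro hq
    haveI hPX : IsProbabilityMeasure (μ.map X) := Measure.isProbabilityMeasure_map hXm.aemeasurable
    set ρ := μ.map X with hρ
    set ν1 := μ.map (fun ω => (X ω, Y ω)) with hν1
    set ν2 := μ.map (fun ω => (Y ω, X ω)) with hν2
    set κ := μ.map (fun ω => (X ω, X ω)) with hκ
    set π := ρ.prod ρ with hπ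
    haveI : IsProbabilityMeasure ν1 := by
      rw [hν1]; exact Measure.isProbabilityMeasure_map (hXm.prodMk hYm).aemeasurable
    haveI : IsProbabilityMeasure ν2 := by
      rw [hν2]; exact Measure.isProbabilityMeasure_map (hYm.prodMk hXm).aemeasurable
    haveI : IsProbabilityMeasure κ := by
      rw [hκ]; exact Measure.isProbabilityMeasure_map (hXm.prodMk hXm).aemeasurable
    haveI : IsProbabilityMeasure π := by rw [hπ]; infer_instance
    set c1 : ENNReal := ENNReal.ofReal (-(2*r)) with hc1
    set c2 : ENNReal := ENNReal.ofReal (2*r) with hc2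
    set c3 : ENNReal := ENNReal.ofReal (2-2*r) with hc3
    haveI : IsFiniteMeasure (c1 • κ) := κ.smul_finite ENNReal.ofReal_ne_top
    haveI : IsFiniteMeasure (c2 • κ) := κ.smul_finite ENNReal.ofReal_ne_top
    haveI : IsFiniteMeasure (c3 • π) := π.smul_finite ENNReal.ofReal_ne_top
    have e1 : ∀ a b : ℝ, ν1 (Set.Iic a ×ˢ Set.Iic b) = μ {ω | X ω ≤ a ∧ Y ω ≤ b} := by
      intro a b
      rw [hν1, Measure.map_apply (hXm.prodMk hYm)
        (measurableSet_Iic.prod measurableSet_Iic)]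
      rfl
    have e2 : ∀ a b : ℝ, ν2 (Set.Iic a ×ˢ Set.Iic b) = μ {ω | X ω ≤ b ∧ Y ω ≤ a} := by
      intro a b
      rw [hν2, Measure.map_apply (hYm.prodMk hXm)
        (measurableSet_Iic.prod measurableSet_Iic)]
      congr 1
      ext ω
      simp [Set.mem_prod, and_comm]
    have e3 : ∀ a b : ℝ, κ (Set.Iic a ×ˢ Set.Iic b)
        = μ ({ω | X ω ≤ a} ∩ {ω | X ω ≤ b}) := by
      intro a b
      rw [hκ, Measure.map_apply (hXm.prodMk hXm)
        (measurableSet_Iic.prod measurableSet_Iic)]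
      rfl
    have e4 : ∀ a b : ℝ, π (Set.Iic a ×ˢ Set.Iic b)
        = μ {ω | X ω ≤ a} * μ {ω | X ω ≤ b} := by
      intro a b
      rw [hπ, Measure.prod_prod, hρ, Measure.map_apply hXm measurableSet_Iic,
        Measure.map_apply hXm measurableSet_Iic]
      rfl
    have hrect : ∀ a b : ℝ,
        (ν1 + ν2 + c1 • κ) (Set.Iic a ×ˢ Set.Iic b)
          = (c2 • κ + c3 • π) (Set.Iic a ×ˢ Set.Iic b) := by
      intro a b
      rw [Measure.add_apply, Measure.add_apply, Measure.add_apply, Measure.smul_apply,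
        Measure.smul_apply, Measure.smul_apply, smul_eq_mul, smul_eq_mul, smul_eq_mul,
        e1 a b, e2 a b, e3 a b, e4 a b]
      refine (ENNReal.toReal_eq_toReal_iff' ?_ ?_).mp ?_
      · exact ENNReal.add_ne_top.mpr
          ⟨ENNReal.add_ne_top.mpr ⟨measure_ne_top μ _, measure_ne_top μ _⟩,
            ENNReal.mul_ne_top ENNReal.ofReal_ne_top (measure_ne_top μ _)⟩
      · exact ENNReal.add_ne_top.mpr
          ⟨ENNReal.mul_ne_top ENNReal.ofReal_ne_top (measure_ne_top μ _),
            ENNReal.mul_ne_top ENNReal.ofReal_ne_top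
              (ENNReal.mul_ne_top (measure_ne_top μ _) (measure_ne_top μ _))⟩
      rw [ENNReal.toReal_add
          (ENNReal.add_ne_top.mpr ⟨measure_ne_top μ _, measure_ne_top μ _⟩)
          (ENNReal.mul_ne_top ENNReal.ofReal_ne_top (measure_ne_top μ _)),
        ENNReal.toReal_add (measure_ne_top μ _) (measure_ne_top μ _),
        ENNReal.toReal_add
          (ENNReal.mul_ne_top ENNReal.ofReal_ne_top (measure_ne_top μ _))
          (ENNReal.mul_ne_top ENNReal.ofReal_ne_top
            (ENNReal.mul_ne_top (measure_ne_top μ _) (measure_ne_top μ _))),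
        ENNReal.toReal_mul, ENNReal.toReal_mul, ENNReal.toReal_mul, ENNReal.toReal_mul,
        ENNReal.toReal_ofReal', ENNReal.toReal_ofReal', ENNReal.toReal_ofReal']
      rw [ICAux.toReal_min_meas (μ := μ) (X := X) a b]
      have hqab := hq a b
      rcases le_total 0 r with h | h
      · rw [max_eq_right (by linarith : -(2*r) ≤ (0:ℝ)),
          max_eq_left (by linarith : (0:ℝ) ≤ 2*r),
          max_eq_left (by linarith [hr.2] : (0:ℝ) ≤ 2-2*r)]
        linear_combination 2 * hqab
      · rw [max_eq_left (by linarith : (0:ℝ) ≤ -(2*r)),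
          max_eq_right (by linarith : 2*r ≤ (0:ℝ)),
          max_eq_left (by linarith [hr.2] : (0:ℝ) ≤ 2-2*r)]
        linear_combination 2 * hqab
    have hofReal2 : ENNReal.ofReal (2:ℝ) = 2 := by
      rw [show (2:ℝ) = ((2:ℕ):ℝ) by norm_num, ENNReal.ofReal_natCast]
      norm_num
    have huniv : (ν1 + ν2 + c1 • κ) Set.univ = (c2 • κ + c3 • π) Set.univ := by
      rw [Measure.add_apply, Measure.add_apply, Measure.add_apply, Measure.smul_apply,
        Measure.smul_apply, Measure.smul_apply, measure_univ, measure_univ, measure_univ,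
        measure_univ, smul_eq_mul, smul_eq_mul, smul_eq_mul, mul_one, mul_one, mul_one,
        hc1, hc2, hc3]
      rcases le_total 0 r with h | h
      · rw [ENNReal.ofReal_eq_zero.mpr (by linarith : -(2*r) ≤ 0), add_zero,
          ← ENNReal.ofReal_add (by linarith) (by linarith [hr.2]),
          show 2*r + (2-2*r) = (2:ℝ) by ring, hofReal2]
        norm_num
      · rw [ENNReal.ofReal_eq_zero.mpr (by linarith : 2*r ≤ 0), zero_add,
          show 2-2*r = (2:ℝ) + -(2*r) by ring,
          ENNReal.ofReal_add (by norm_num) (by linarith), hofReal2]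
        norm_num
    have hAB : ν1 + ν2 + c1 • κ = c2 • κ + c3 • π := ICAux.ext_rect _ _ hrect huniv
    have hmain : ∀ g : ℝ → ℝ, Measurable g → MemLp (g ∘ X) 2 μ → MemLp (g ∘ Y) 2 μ →
        cov μ (g ∘ X) (g ∘ Y) = r * variance (g ∘ X) μ
          ∧ variance (g ∘ Y) μ = variance (g ∘ X) μ := by
      intro g hg hgX2 hgY2
      have hfm : Measurable (fun z : ℝ × ℝ => g z.1 * g z.2) :=
        (hg.comp measurable_fst).mul (hg.comp measurable_snd)
      have hiXY : Integrable (fun ω => g (X ω) * g (Y ω)) μ := ICAux.integrable_mul₂ hgX2 hgY2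
      have hiYX : Integrable (fun ω => g (Y ω) * g (X ω)) μ := ICAux.integrable_mul₂ hgY2 hgX2
      have hiXX : Integrable (fun ω => g (X ω) * g (X ω)) μ := ICAux.integrable_mul₂ hgX2 hgX2
      have hI1 : Integrable (fun z : ℝ × ℝ => g z.1 * g z.2) ν1 := by
        rw [hν1]
        exact (integrable_map_measure hfm.aestronglyMeasurable
          (hXm.prodMk hYm).aemeasurable).mpr hiXY
      have hI2 : Integrable (fun z : ℝ × ℝ => g z.1 * g z.2) ν2 := by
        rw [hν2]
        exact (integrable_map_measure hfm.aestronglyMeasurable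
          (hYm.prodMk hXm).aemeasurable).mpr hiYX
      have hIκ : Integrable (fun z : ℝ × ℝ => g z.1 * g z.2) κ := by
        rw [hκ]
        exact (integrable_map_measure hfm.aestronglyMeasurable
          (hXm.prodMk hXm).aemeasurable).mpr hiXX
      have hgρ2 : MemLp g 2 ρ := by
        rw [hρ]
        exact (memLp_map_measure_iff hg.aestronglyMeasurable hXm.aemeasurable).mpr hgX2
      have hgρ1 : Integrable g ρ := hgρ2.integrable one_le_two
      have hIπ : Integrable (fun z : ℝ × ℝ => g z.1 * g z.2) π := by
        rw [hπ]
        exact hgρ1.mul_prod hgρ1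
      have j1 : ∫ z : ℝ × ℝ, g z.1 * g z.2 ∂ν1 = ∫ ω, g (X ω) * g (Y ω) ∂μ := by
        rw [hν1]
        exact integral_map (hXm.prodMk hYm).aemeasurable hfm.aestronglyMeasurable
      have j2 : ∫ z : ℝ × ℝ, g z.1 * g z.2 ∂ν2 = ∫ ω, g (Y ω) * g (X ω) ∂μ := by
        rw [hν2]
        exact integral_map (hYm.prodMk hXm).aemeasurable hfm.aestronglyMeasurable
      have jκ : ∫ z : ℝ × ℝ, g z.1 * g z.2 ∂κ = ∫ ω, g (X ω) * g (X ω) ∂μ := by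
        rw [hκ]
        exact integral_map (hXm.prodMk hXm).aemeasurable hfm.aestronglyMeasurable
      have jρ : ∫ t, g t ∂ρ = ∫ ω, g (X ω) ∂μ := by
        rw [hρ]
        exact integral_map hXm.aemeasurable hg.aestronglyMeasurable
      have jπ : ∫ z : ℝ × ℝ, g z.1 * g z.2 ∂π
          = (∫ ω, g (X ω) ∂μ) * ∫ ω, g (X ω) ∂μ := by
        rw [hπ, integral_prod_mul, jρ]
      have hint : ∫ z : ℝ × ℝ, g z.1 * g z.2 ∂(ν1 + ν2 + c1 • κ)
          = ∫ z : ℝ × ℝ, g z.1 * g z.2 ∂(c2 • κ + c3 • π) := by rw [hAB]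
      rw [integral_add_measure (hI1.add_measure hI2)
          (hIκ.smul_measure ENNReal.ofReal_ne_top),
        integral_add_measure hI1 hI2,
        integral_add_measure (hIκ.smul_measure ENNReal.ofReal_ne_top)
          (hIπ.smul_measure ENNReal.ofReal_ne_top),
        integral_smul_measure, integral_smul_measure, integral_smul_measure,
        j1, j2, jκ, jπ, ENNReal.toReal_ofReal', ENNReal.toReal_ofReal',
        ENNReal.toReal_ofReal', smul_eq_mul, smul_eq_mul, smul_eq_mul] at hint
      have hicomm : ∫ ω, g (Y ω) * g (X ω) ∂μ = ∫ ω, g (X ω) * g (Y ω) ∂μ :=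
        integral_congr_ae (Filter.Eventually.of_forall fun ω => mul_comm _ _)
      rw [hicomm] at hint
      have hm2 : Measurable fun t : ℝ => g t * g t := hg.mul hg
      have hmY : ∫ ω, g (Y ω) ∂μ = ∫ ω, g (X ω) ∂μ := by
        have h1 : ∫ ω, g (Y ω) ∂μ = ∫ t, g t ∂(μ.map Y) :=
          (integral_map hYm.aemeasurable hg.aestronglyMeasurable).symm
        have h2 : ∫ t, g t ∂(μ.map X) = ∫ ω, g (X ω) ∂μ :=
          integral_map hXm.aemeasurable hg.aestronglyMeasurable
        rw [h1, ← hmap, h2]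
      have hmYY : ∫ ω, g (Y ω) * g (Y ω) ∂μ = ∫ ω, g (X ω) * g (X ω) ∂μ := by
        have h1 : ∫ ω, g (Y ω) * g (Y ω) ∂μ = ∫ t, g t * g t ∂(μ.map Y) :=
          (integral_map hYm.aemeasurable hm2.aestronglyMeasurable).symm
        have h2 : ∫ t, g t * g t ∂(μ.map X) = ∫ ω, g (X ω) * g (X ω) ∂μ :=
          integral_map hXm.aemeasurable hm2.aestronglyMeasurable
        rw [h1, ← hmap, h2]
      have hmom : ∫ ω, g (X ω) * g (Y ω) ∂μ
          = r * (∫ ω, g (X ω) * g (X ω) ∂μ) + (1 - r) * (∫ ω, g (X ω) ∂μ)^2 := by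
        rcases le_total 0 r with h | h
        · rw [max_eq_right (by linarith : -(2*r) ≤ (0:ℝ)),
            max_eq_left (by linarith : (0:ℝ) ≤ 2*r),
            max_eq_left (by linarith [hr.2] : (0:ℝ) ≤ 2-2*r)] at hint
          linear_combination hint / 2
        · rw [max_eq_left (by linarith : (0:ℝ) ≤ -(2*r)),
            max_eq_right (by linarith : 2*r ≤ (0:ℝ)),
            max_eq_left (by linarith [hr.2] : (0:ℝ) ≤ 2-2*r)] at hint
          linear_combination hint / 2
      constructor
      · have hc' : cov μ (g ∘ X) (g ∘ Y) = (∫ ω, g (X ω) * g (Y ω) ∂μ)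
            - (∫ ω, g (X ω) ∂μ) * ∫ ω, g (Y ω) ∂μ := ICAux.cov_eq hgX2 hgY2
        have hv' : variance (g ∘ X) μ
            = (∫ ω, g (X ω) * g (X ω) ∂μ) - (∫ ω, g (X ω) ∂μ)^2 :=
          ICAux.variance_eq_mul hgX2
        rw [hc', hv', hmom, hmY]
        ring
      · have hvY' : variance (g ∘ Y) μ
            = (∫ ω, g (Y ω) * g (Y ω) ∂μ) - (∫ ω, g (Y ω) ∂μ)^2 :=
          ICAux.variance_eq_mul hgY2
        have hvX' : variance (g ∘ X) μ
            = (∫ ω, g (X ω) * g (X ω) ∂μ) - (∫ ω, g (X ω) ∂μ)^2 :=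
          ICAux.variance_eq_mul hgX2
        rw [hvY', hvX', hmYY, hmY]
    refine ⟨?_, fun g hadm => ?_⟩
    · obtain ⟨hcov, hveq⟩ := hmain id measurable_id hX2 hY2
      have hc : cov μ X Y = r * variance X μ := hcov
      have hv : variance Y μ = variance X μ := hveq
      show cov μ X Y / Real.sqrt (variance X μ * variance Y μ) = r
      rw [hv, Real.sqrt_mul_self hvX.le, hc]
      exact mul_div_cancel_right₀ r hvX.ne'
    · obtain ⟨hg, hgX2, hgY2, hvgX, hvgY⟩ := hadm
      obtain ⟨hcov, hveq⟩ := hmain g hg hgX2 hgY2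
      show cov μ (g ∘ X) (g ∘ Y)
          / Real.sqrt (variance (g ∘ X) μ * variance (g ∘ Y) μ) = r
      rw [hveq, Real.sqrt_mul_self (le_of_lt hvgX), hcov]
      exact mul_div_cancel_right₀ r hvgX.ne'
end
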